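/- arXiv:1312.7151 — 10 statements merged into one kernel-verified Lean document; each statement's English description precedes it below -/
import Mathlib

section
/- For any increasing sequence q = (q_n) of positive integers and any sequence u = (u_n) of positive reals tending to infinity, every element of S_{q,u} is a Liouville number. -/
open Filter

/-- Distance from a real number to the nearest integer. -/
noncomputable def distNearestInt (x : ℝ) : ℝ := |x - round x|

/-- The Liouville set `S_{q,u}` attached to a sequence `q` of positive integers and a
sequence `u` of positive reals. -/
def LSet (q : ℕ → ℕ) (u : ℕ → ℝ) : Set ℝ :=
  {ξ : ℝ | Irrational ξ ∧ ∃ κ₁ κ₂ : ℝ, 0 < κ₁ ∧ 0 < κ₂ ∧ ∃ b : ℕ → ℕ,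
    ∀ᶠ n in Filter.atTop, 1 ≤ b n ∧ (b n : ℝ) ≤ (q n : ℝ) ^ κ₁ ∧
      distNearestInt ((b n : ℝ) * ξ) ≤ (q n : ℝ) ^ (-(κ₂ * u n))}

/-- Every element of S_{q,u} is a Liouville number. -/
theorem LSet_subset_liouville (q : ℕ → ℕ) (u : ℕ → ℝ)
    (hq : StrictMono q) (hqpos : ∀ n, 0 < q n)
    (hupos : ∀ n, 0 < u n) (hu : Filter.Tendsto u Filter.atTop Filter.atTop) :
    ∀ ξ ∈ LSet q u, Liouville ξ := by
  rintro ξ ⟨hirr, κ₁, κ₂, hκ₁, hκ₂, b, hb⟩ n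
  -- choose a large index m
  have hu' : ∀ᶠ m in atTop, (κ₁ + 1) * n + 1 ≤ κ₂ * u m := by
    filter_upwards [hu.eventually_ge_atTop (((κ₁ + 1) * n + 1) / κ₂)] with m hm
    rw [div_le_iff₀ hκ₂] at hm
    linarith [hm]
  obtain ⟨m, ⟨⟨hbm1, hbm2, hd⟩, hum⟩, hm1⟩ :=
    ((hb.and hu').and (eventually_ge_atTop 1)).exists
  set Q : ℝ := (q m : ℝ) with hQdef
  have hQ2 : (2 : ℝ) ≤ Q := by
    have h2 : 2 ≤ q m := by
      have := hq (show 0 < m from hm1)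
      have := hqpos 0
      omega
    rw [hQdef]
    exact_mod_cast h2
  have hQ1 : (1 : ℝ) < Q := by linarith
  have hQ0 : (0 : ℝ) < Q := by linarith
  have hB1 : (1 : ℝ) ≤ (b m : ℝ) := by exact_mod_cast hbm1
  have hB0 : (0 : ℝ) < (b m : ℝ) := by linarith
  set a : ℤ := round ((b m : ℝ) * ξ) with ha
  refine ⟨2 * a, 2 * (b m : ℤ), ?_, ?_, ?_⟩
  · have : (1 : ℤ) ≤ (b m : ℤ) := by exact_mod_cast hbm1
    linarith
  · intro h
    apply hirr
    refine ⟨(2 * a : ℚ) / (2 * (b m : ℚ)), ?_⟩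
    rw [h]
    push_cast
    ring
  · rw [show ((2 * a : ℤ) : ℝ) = 2 * (a : ℝ) by push_cast; ring,
      show ((2 * (b m : ℤ) : ℤ) : ℝ) = 2 * (b m : ℝ) by push_cast; ring,
      mul_div_mul_left _ _ (two_ne_zero)]
    have hrw : ξ - (a : ℝ) / (b m : ℝ) = ((b m : ℝ) * ξ - a) / (b m : ℝ) := by
      field_simp
    have habs : |ξ - (a : ℝ) / (b m : ℝ)| ≤ Q ^ (-(κ₂ * u m)) / (b m : ℝ) := by
      rw [hrw, abs_div, abs_of_pos hB0]
      gcongr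
      exact hd
    have h1 : Q ^ (-(κ₂ * u m)) / (b m : ℝ) ≤ Q ^ (-(κ₂ * u m)) :=
      div_le_self (Real.rpow_nonneg hQ0.le _) hB1
    -- main estimate : (2 * b m)^n < Q ^ (κ₂ * u m)
    have h2B : (2 : ℝ) * (b m : ℝ) ≤ Q ^ (κ₁ + 1) := by
      have : (2 : ℝ) * (b m : ℝ) ≤ Q * Q ^ κ₁ :=
        mul_le_mul hQ2 hbm2 hB0.le hQ0.le
      calc (2 : ℝ) * (b m : ℝ) ≤ Q * Q ^ κ₁ := this
        _ = Q ^ (1 : ℝ) * Q ^ κ₁ := by rw [Real.rpow_one]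
        _ = Q ^ (κ₁ + 1) := by rw [← Real.rpow_add hQ0]; ring_nf
    have hpow : ((2 : ℝ) * (b m : ℝ)) ^ n ≤ Q ^ ((κ₁ + 1) * n) := by
      calc ((2 : ℝ) * (b m : ℝ)) ^ n ≤ (Q ^ (κ₁ + 1)) ^ n :=
            pow_le_pow_left₀ (by positivity) h2B n
        _ = Q ^ ((κ₁ + 1) * n) := by
            rw [← Real.rpow_natCast (Q ^ (κ₁ + 1)) n, ← Real.rpow_mul hQ0.le]
    have hexp : (κ₁ + 1) * n < κ₂ * u m := by linarith
    have hlt : ((2 : ℝ) * (b m : ℝ)) ^ n < Q ^ (κ₂ * u m) :=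
      hpow.trans_lt (Real.rpow_lt_rpow_left_iff hQ1 |>.mpr hexp)
    have hfinal : Q ^ (-(κ₂ * u m)) < 1 / ((2 : ℝ) * (b m : ℝ)) ^ n := by
      rw [Real.rpow_neg hQ0.le, one_div]
      exact inv_strictAnti₀ (by positivity) hlt
    calc |ξ - (a : ℝ) / (b m : ℝ)| ≤ Q ^ (-(κ₂ * u m)) := habs.trans h1
      _ < 1 / ((2 : ℝ) * (b m : ℝ)) ^ n := hfinal
end

section
/- If ξ belongs to S_{q,u}, then 1/ξ belongs to S_{q,u}. -/
open Filter

lemma distNearestInt_le (x : ℝ) (m : ℤ) : distNearestInt x ≤ |x - m| := round_le x m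

lemma distNearestInt_neg (x : ℝ) : distNearestInt (-x) = distNearestInt x := by
  apply le_antisymm
  · calc distNearestInt (-x) ≤ |(-x) - ((-round x : ℤ) : ℝ)| := distNearestInt_le _ _
      _ = distNearestInt x := by push_cast; rw [distNearestInt, ← abs_neg]; ring_nf
  · calc distNearestInt x ≤ |x - ((-round (-x) : ℤ) : ℝ)| := distNearestInt_le _ _
      _ = distNearestInt (-x) := by push_cast; rw [distNearestInt, ← abs_neg]; ring_nf

/-- If ξ ∈ S_{q,u} then 1/ξ ∈ S_{q,u}. -/
theorem LSet_inv_mem (q : ℕ → ℕ) (u : ℕ → ℝ)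
    (hq : StrictMono q) (hqpos : ∀ n, 0 < q n)
    (hupos : ∀ n, 0 < u n) (humono : StrictMono u)
    (hu : Filter.Tendsto u Filter.atTop Filter.atTop)
    (ξ : ℝ) (hξ : ξ ∈ LSet q u) : 1 / ξ ∈ LSet q u := by
  obtain ⟨hirr, κ₁, κ₂, hκ₁, hκ₂, b, hb⟩ := hξ
  have hξ0 : ξ ≠ 0 := hirr.ne_zero
  have hξa : 0 < |ξ| := abs_pos.mpr hξ0
  refine ⟨by rw [one_div]; exact hirr.inv, κ₁ + 1, κ₂ / 2, by linarith, by linarith,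
    fun n => (round ((b n : ℝ) * ξ)).natAbs, ?_⟩
  -- eventual bounds
  have hqn : ∀ n, (1 : ℝ) ≤ (q n : ℝ) := fun n => by exact_mod_cast hqpos n
  have hq2 : ∀ᶠ n in atTop, (2 : ℝ) ≤ (q n : ℝ) := by
    filter_upwards [eventually_ge_atTop 2] with n hn
    exact_mod_cast (hq.le_apply.trans' hn)
  have hM : ∀ᶠ n in atTop, max (Real.logb 2 (2 / |ξ|)) 0 ≤ κ₂ / 2 * u n := by
    have : Tendsto (fun n => κ₂ / 2 * u n) atTop atTop :=
      hu.const_mul_atTop (by linarith)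
    exact this.eventually_ge_atTop _
  have h1 : ∀ᶠ n in atTop, 2 / |ξ| ≤ (q n : ℝ) ^ (κ₂ / 2 * u n) := by
    filter_upwards [hq2, hM] with n h2 hM
    have he0 : (0 : ℝ) ≤ κ₂ / 2 * u n := le_trans (le_max_right _ _) hM
    have : 2 / |ξ| ≤ (2 : ℝ) ^ (κ₂ / 2 * u n) := by
      calc 2 / |ξ| = (2 : ℝ) ^ Real.logb 2 (2 / |ξ|) :=
            (Real.rpow_logb (by norm_num) (by norm_num) (by positivity)).symm
        _ ≤ (2 : ℝ) ^ (κ₂ / 2 * u n) :=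
            Real.rpow_le_rpow_left_iff (by norm_num) |>.mpr
              (le_trans (le_max_left _ _) hM)
    exact this.trans (Real.rpow_le_rpow (by norm_num) h2 he0)
  have h2 : ∀ᶠ n in atTop, |ξ| + 1 ≤ (q n : ℝ) := by
    have : Tendsto (fun n => (q n : ℝ)) atTop atTop :=
      tendsto_natCast_atTop_atTop.comp (hq.tendsto_atTop)
    exact this.eventually_ge_atTop _
  filter_upwards [hb, h1, h2] with n ⟨hb1, hb2, hb3⟩ h1 h2
  have hqn1 := hqn n
  have hqnpos : (0 : ℝ) < (q n : ℝ) := by linarith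
  set a : ℤ := round ((b n : ℝ) * ξ) with ha
  have hkey : |(b n : ℝ) * ξ - a| ≤ (q n : ℝ) ^ (-(κ₂ * u n)) := hb3
  have heneg : (q n : ℝ) ^ (-(κ₂ * u n)) ≤ (q n : ℝ) ^ (-(κ₂ / 2 * u n)) :=
    Real.rpow_le_rpow_of_exponent_le hqn1 (by nlinarith [(hupos n).le])
  have hsmall : (q n : ℝ) ^ (-(κ₂ / 2 * u n)) ≤ |ξ| / 2 := by
    rw [Real.rpow_neg hqnpos.le]
    rw [inv_le_comm₀ (by positivity) (by positivity)]
    calc (|ξ| / 2)⁻¹ = 2 / |ξ| := by field_simp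
      _ ≤ _ := h1
  -- a ≠ 0
  have ha0 : a ≠ 0 := by
    intro h
    rw [h] at hkey
    simp only [Int.cast_zero, sub_zero] at hkey
    have hb1' : (1 : ℝ) ≤ |(b n : ℝ)| := by
      rw [Nat.abs_cast]; exact_mod_cast hb1
    have hbξ : |ξ| ≤ |(b n : ℝ) * ξ| := by
      rw [abs_mul]; nlinarith
    nlinarith [hkey.trans (heneg.trans hsmall)]
  have hB1 : 1 ≤ a.natAbs := Int.natAbs_pos.mpr ha0
  have hBcast : ((a.natAbs : ℕ) : ℝ) = |(a : ℝ)| := by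
    rw [Nat.cast_natAbs, Int.cast_abs]
  refine ⟨hB1, ?_, ?_⟩
  · -- size bound
    rw [hBcast]
    have hone : (q n : ℝ) ^ (-(κ₂ * u n)) ≤ 1 := by
      rw [show (1:ℝ) = (q n : ℝ) ^ (0:ℝ) from (Real.rpow_zero _).symm]
      exact Real.rpow_le_rpow_of_exponent_le hqn1 (by nlinarith [(hupos n).le])
    have hqk1 : (1 : ℝ) ≤ (q n : ℝ) ^ κ₁ := Real.one_le_rpow hqn1 hκ₁.le
    have : |(a : ℝ)| ≤ (q n : ℝ) ^ κ₁ * |ξ| + 1 := by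
      have := abs_sub_abs_le_abs_sub (a : ℝ) ((b n : ℝ) * ξ)
      rw [abs_sub_comm] at this
      have h3 : |(b n : ℝ) * ξ| ≤ (q n : ℝ) ^ κ₁ * |ξ| := by
        rw [abs_mul, Nat.abs_cast]
        exact mul_le_mul_of_nonneg_right hb2 (abs_nonneg ξ)
      nlinarith
    calc |(a : ℝ)| ≤ (q n : ℝ) ^ κ₁ * (|ξ| + 1) := by nlinarith
      _ ≤ (q n : ℝ) ^ κ₁ * (q n : ℝ) := by gcongr
      _ = (q n : ℝ) ^ (κ₁ + 1) := by
          rw [Real.rpow_add hqnpos, Real.rpow_one]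
  · -- approximation bound
    have habs : ((a.natAbs : ℕ) : ℝ) * (1 / ξ) = |(a : ℝ)| / ξ := by
      rw [hBcast]; ring
    have hd : distNearestInt ((a.natAbs : ℝ) * (1 / ξ)) = distNearestInt ((a : ℝ) / ξ) := by
      rw [habs]
      rcases abs_choice (a : ℝ) with h | h
      · rw [h]
      · rw [h, neg_div, distNearestInt_neg]
    rw [hd]
    have hle : distNearestInt ((a : ℝ) / ξ) ≤ |(a : ℝ) / ξ - (b n : ℤ)| :=
      distNearestInt_le _ _
    have heq : |(a : ℝ) / ξ - ((b n : ℤ) : ℝ)| = |(b n : ℝ) * ξ - a| / |ξ| := by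
      rw [show (a : ℝ) / ξ - ((b n : ℤ) : ℝ) = -(((b n : ℝ) * ξ - a) / ξ) by
        push_cast; field_simp; ring, abs_neg, abs_div]
    have : distNearestInt ((a : ℝ) / ξ) ≤ (q n : ℝ) ^ (-(κ₂ * u n)) / |ξ| := by
      rw [heq] at hle
      exact hle.trans (by gcongr)
    refine this.trans ?_
    have h1' : 1 / |ξ| ≤ (q n : ℝ) ^ (κ₂ / 2 * u n) := by
      refine le_trans ?_ h1
      rw [div_le_div_iff_of_pos_right hξa]
      norm_num
    calc (q n : ℝ) ^ (-(κ₂ * u n)) / |ξ|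
        = (q n : ℝ) ^ (-(κ₂ * u n)) * (1 / |ξ|) := by ring
      _ ≤ (q n : ℝ) ^ (-(κ₂ * u n)) * (q n : ℝ) ^ (κ₂ / 2 * u n) := by
          gcongr
      _ = (q n : ℝ) ^ (-(κ₂ / 2 * u n)) := by
          rw [← Real.rpow_add hqnpos]; ring_nf
end

section
/- If ξ ∈ S_{q,u} and r is a nonzero rational number, then rξ ∈ S_{q,u}. -/
open Filter

lemma distNearestInt_int_mul (m : ℤ) (x : ℝ) :
    distNearestInt ((m : ℝ) * x) ≤ |(m : ℝ)| * distNearestInt x := by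
  unfold distNearestInt
  calc |(m : ℝ) * x - round ((m : ℝ) * x)| ≤ |(m : ℝ) * x - ((m * round x : ℤ) : ℝ)| :=
        round_le _ _
    _ = |(m : ℝ)| * |x - round x| := by
        push_cast
        rw [← abs_mul]
        ring_nf

/-- If ξ ∈ S_{q,u} and r is a nonzero rational, then rξ ∈ S_{q,u}. -/
theorem LSet_rat_mul_mem (q : ℕ → ℕ) (u : ℕ → ℝ)
    (hq : StrictMono q) (hqpos : ∀ n, 0 < q n)
    (hupos : ∀ n, 0 < u n) (hu : Filter.Tendsto u Filter.atTop Filter.atTop)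
    (ξ : ℝ) (hξ : ξ ∈ LSet q u) (r : ℚ) (hr : r ≠ 0) : (r : ℝ) * ξ ∈ LSet q u := by
  obtain ⟨hirr, κ₁, κ₂, hκ₁, hκ₂, b, hb⟩ := hξ
  refine ⟨(Irrational.ratCast_mul hirr hr), κ₁ + 1, κ₂ / 2, by linarith, by linarith,
    fun n => r.den * b n, ?_⟩
  have h1 : ∀ᶠ n in atTop, r.den ≤ q n :=
    eventually_atTop.2 ⟨r.den, fun n hn => hn.trans hq.le_apply⟩
  have h2 : ∀ᶠ n in atTop, (|r.num| : ℝ) ≤ q n :=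
    eventually_atTop.2 ⟨r.num.natAbs, fun n hn => by
      have : (r.num.natAbs : ℝ) ≤ (q n : ℝ) := by
        exact_mod_cast hn.trans hq.le_apply
      simpa [Nat.cast_natAbs] using this⟩
  have h3 : ∀ᶠ n in atTop, 1 ≤ κ₂ / 2 * u n := by
    have := hu.eventually_ge_atTop (2 / κ₂)
    filter_upwards [this] with n hn
    rw [div_le_iff₀ hκ₂] at hn
    nlinarith
  filter_upwards [hb, h1, h2, h3] with n ⟨hb1, hb2, hb3⟩ h1 h2 h3
  have hqn : (1:ℝ) ≤ (q n : ℝ) := by exact_mod_cast hqpos n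
  have hqn0 : (0:ℝ) < (q n : ℝ) := by exact_mod_cast hqpos n
  refine ⟨Nat.one_le_iff_ne_zero.2 (by positivity), ?_, ?_⟩
  · have : ((r.den * b n : ℕ) : ℝ) = (r.den : ℝ) * (b n : ℝ) := by push_cast; ring
    rw [this, Real.rpow_add hqn0, Real.rpow_one, mul_comm ((q n : ℝ) ^ κ₁)]
    have hd : (r.den : ℝ) ≤ (q n : ℝ) := by exact_mod_cast h1
    exact mul_le_mul hd hb2 (by positivity) hqn0.le
  · have key : distNearestInt (((r.den * b n : ℕ) : ℝ) * ((r : ℝ) * ξ))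
        = distNearestInt ((r.num : ℝ) * ((b n : ℝ) * ξ)) := by
      congr 1
      have hden : (r.den : ℝ) ≠ 0 := by
        exact_mod_cast r.den_ne_zero
      rw [Rat.cast_def]
      push_cast
      field_simp
    rw [key]
    calc distNearestInt ((r.num : ℝ) * ((b n : ℝ) * ξ))
        ≤ |(r.num : ℝ)| * distNearestInt ((b n : ℝ) * ξ) := distNearestInt_int_mul _ _
      _ ≤ (q n : ℝ) ^ (κ₂ / 2 * u n) * (q n : ℝ) ^ (-(κ₂ * u n)) := by
          apply mul_le_mul _ hb3 (abs_nonneg _) (by positivity)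
          calc |(r.num : ℝ)| ≤ (q n : ℝ) := by exact_mod_cast h2
            _ = (q n : ℝ) ^ (1 : ℝ) := (Real.rpow_one _).symm
            _ ≤ (q n : ℝ) ^ (κ₂ / 2 * u n) := Real.rpow_le_rpow_of_exponent_le hqn h3
      _ = (q n : ℝ) ^ (-(κ₂ / 2 * u n)) := by
          rw [← Real.rpow_add hqn0]; ring_nf
end

section
/- If ξ, ξ' ∈ S_{q,u} and ξξ' is irrational, then ξξ' ∈ S_{q,u}. -/
open Filter

set_option maxHeartbeats 2000000 in
/-- If ξ, ξ' ∈ S_{q,u} and ξξ' is irrational, then ξξ' ∈ S_{q,u}. -/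
theorem LSet_mul_mem (q : ℕ → ℕ) (u : ℕ → ℝ)
    (hq : StrictMono q) (hqpos : ∀ n, 0 < q n)
    (hupos : ∀ n, 0 < u n) (hu : Filter.Tendsto u Filter.atTop Filter.atTop)
    (ξ ξ' : ℝ) (hξ : ξ ∈ LSet q u) (hξ' : ξ' ∈ LSet q u)
    (hirr : Irrational (ξ * ξ')) : ξ * ξ' ∈ LSet q u := by
  obtain ⟨-, κ₁, κ₂, hκ₁, hκ₂, b, hb⟩ := hξ
  obtain ⟨-, κ₁', κ₂', hκ₁', hκ₂', b', hb'⟩ := hξ'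
  set κ : ℝ := min κ₂ κ₂' with hκdef
  have hκpos : 0 < κ := lt_min hκ₂ hκ₂'
  refine ⟨hirr, κ₁ + κ₁', κ / 2, by positivity, by positivity, fun n => b n * b' n, ?_⟩
  set C : ℝ := |ξ| + |ξ'| + 3 with hCdef
  have hCpos : 0 < C := by positivity
  set M : ℝ := (max 0 (Real.logb 2 C) + (κ₁ + κ₁')) * (2 / κ) with hMdef
  have hM : κ / 2 * M = max 0 (Real.logb 2 C) + (κ₁ + κ₁') := by
    field_simp [hMdef]
    rw [hMdef]; field_simp
  filter_upwards [hb, hb', hu.eventually_ge_atTop M, eventually_ge_atTop 1] with n h h' hun hn1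
  obtain ⟨hb1, hb2, hb3⟩ := h
  obtain ⟨hb1', hb2', hb3'⟩ := h'
  have hqR : (0:ℝ) < (q n : ℝ) := by exact_mod_cast hqpos n
  have hq1 : (1:ℝ) ≤ (q n : ℝ) := by exact_mod_cast hqpos n
  have hq2 : (2:ℝ) ≤ (q n : ℝ) := by
    have h01 : q 0 < q 1 := hq (by norm_num)
    have : 2 ≤ q 1 := by have := hqpos 0; omega
    have : 2 ≤ q n := le_trans this (hq.monotone hn1)
    exact_mod_cast this
  have hun' : 0 < u n := hupos n
  -- abbreviations
  set x : ℝ := (b n : ℝ) * ξ with hx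
  set x' : ℝ := (b' n : ℝ) * ξ' with hx'
  set a : ℤ := round x with ha
  set a' : ℤ := round x' with ha'
  set δ : ℝ := x - a with hδ
  set δ' : ℝ := x' - a' with hδ'
  have hδb : |δ| ≤ (q n : ℝ) ^ (-(κ₂ * u n)) := hb3
  have hδb' : |δ'| ≤ (q n : ℝ) ^ (-(κ₂' * u n)) := hb3'
  set E : ℝ := (q n : ℝ) ^ (-(κ * u n)) with hE
  have hEpos : 0 < E := Real.rpow_pos_of_pos hqR _
  have hεE : (q n : ℝ) ^ (-(κ₂ * u n)) ≤ E :=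
    Real.rpow_le_rpow_of_exponent_le hq1 (by nlinarith [min_le_left κ₂ κ₂'])
  have hεE' : (q n : ℝ) ^ (-(κ₂' * u n)) ≤ E :=
    Real.rpow_le_rpow_of_exponent_le hq1 (by nlinarith [min_le_right κ₂ κ₂'])
  have hE1 : E ≤ 1 :=
    Real.rpow_le_one_of_one_le_of_nonpos hq1 (by nlinarith)
  have hδE : |δ| ≤ E := hδb.trans hεE
  have hδE' : |δ'| ≤ E := hδb'.trans hεE'
  have hδ1 : |δ| ≤ 1 := hδE.trans hE1
  have hδ1' : |δ'| ≤ 1 := hδE'.trans hE1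
  have hP1 : (1:ℝ) ≤ (q n : ℝ) ^ κ₁ := Real.one_le_rpow hq1 hκ₁.le
  have hP1' : (1:ℝ) ≤ (q n : ℝ) ^ κ₁' := Real.one_le_rpow hq1 hκ₁'.le
  have haB : |(a:ℝ)| ≤ (q n : ℝ) ^ κ₁ * (|ξ| + 1) := by
    have h1 : |(a:ℝ)| ≤ |x| + |δ| := by
      have := abs_sub_abs_le_abs_sub (a:ℝ) x
      have : |(a:ℝ)| - |x| ≤ |δ| := by
        calc |(a:ℝ)| - |x| ≤ |(a:ℝ) - x| := abs_sub_abs_le_abs_sub _ _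
          _ = |δ| := by rw [hδ, abs_sub_comm]
      linarith
    have h2 : |x| ≤ (q n : ℝ) ^ κ₁ * |ξ| := by
      rw [hx, abs_mul, Nat.abs_cast]
      exact mul_le_mul_of_nonneg_right hb2 (abs_nonneg _)
    nlinarith
  have haB' : |(a':ℝ)| ≤ (q n : ℝ) ^ κ₁' * (|ξ'| + 1) := by
    have h1 : |(a':ℝ)| ≤ |x'| + |δ'| := by
      have : |(a':ℝ)| - |x'| ≤ |δ'| := by
        calc |(a':ℝ)| - |x'| ≤ |(a':ℝ) - x'| := abs_sub_abs_le_abs_sub _ _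
          _ = |δ'| := by rw [hδ', abs_sub_comm]
      linarith
    have h2 : |x'| ≤ (q n : ℝ) ^ κ₁' * |ξ'| := by
      rw [hx', abs_mul, Nat.abs_cast]
      exact mul_le_mul_of_nonneg_right hb2' (abs_nonneg _)
    nlinarith
  set P : ℝ := (q n : ℝ) ^ (κ₁ + κ₁') with hPdef
  have hPsplit : P = (q n : ℝ) ^ κ₁ * (q n : ℝ) ^ κ₁' := Real.rpow_add hqR _ _
  have hPup : (q n : ℝ) ^ κ₁ ≤ P ∧ (q n : ℝ) ^ κ₁' ≤ P ∧ 1 ≤ P := by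
    refine ⟨?_, ?_, ?_⟩
    · rw [hPsplit]; nlinarith
    · rw [hPsplit]; nlinarith
    · rw [hPsplit]; nlinarith
  obtain ⟨hPa, hPb, hP1t⟩ := hPup
  refine ⟨Nat.one_le_iff_ne_zero.mpr (by positivity), ?_, ?_⟩
  · push_cast
    rw [hPsplit]
    exact mul_le_mul hb2 hb2' (by positivity) (by positivity)
  · -- main estimate
    have key : distNearestInt (((b n * b' n : ℕ) : ℝ) * (ξ * ξ')) ≤ P * C * E := by
      have hxx : ((b n * b' n : ℕ) : ℝ) * (ξ * ξ') = x * x' := by push_cast [hx, hx']; ring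
      calc distNearestInt (((b n * b' n : ℕ) : ℝ) * (ξ * ξ'))
          ≤ |((b n * b' n : ℕ) : ℝ) * (ξ * ξ') - ((a * a' : ℤ) : ℝ)| := distNearestInt_le _ _
        _ = |(a:ℝ) * δ' + (a':ℝ) * δ + δ * δ'| := by
            rw [hxx]
            congr 1
            have hxa : x = (a:ℝ) + δ := by rw [hδ]; ring
            have hxa' : x' = (a':ℝ) + δ' := by rw [hδ']; ring
            rw [hxa, hxa']; push_cast; ring
        _ ≤ |(a:ℝ)| * |δ'| + |(a':ℝ)| * |δ| + |δ| * |δ'| := by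
            calc |(a:ℝ) * δ' + (a':ℝ) * δ + δ * δ'|
                ≤ |(a:ℝ) * δ' + (a':ℝ) * δ| + |δ * δ'| := abs_add_le _ _
              _ ≤ |(a:ℝ) * δ'| + |(a':ℝ) * δ| + |δ * δ'| := by
                  have := abs_add_le ((a:ℝ) * δ') ((a':ℝ) * δ); linarith
              _ = |(a:ℝ)| * |δ'| + |(a':ℝ)| * |δ| + |δ| * |δ'| := by
                  rw [abs_mul, abs_mul, abs_mul]
        _ ≤ P * (|ξ| + 1) * E + P * (|ξ'| + 1) * E + E := by
            have hx1 : (0:ℝ) ≤ |ξ| + 1 := by positivity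
            have hx1' : (0:ℝ) ≤ |ξ'| + 1 := by positivity
            have t1 : |(a:ℝ)| * |δ'| ≤ P * (|ξ| + 1) * E := by
              have h := haB.trans (mul_le_mul_of_nonneg_right hPa hx1)
              exact mul_le_mul h hδE' (abs_nonneg _) (by positivity)
            have t2 : |(a':ℝ)| * |δ| ≤ P * (|ξ'| + 1) * E := by
              have h := haB'.trans (mul_le_mul_of_nonneg_right hPb hx1')
              exact mul_le_mul h hδE (abs_nonneg _) (by positivity)
            have t3 : |δ| * |δ'| ≤ E := by
              have h := mul_le_mul hδE hδ1' (abs_nonneg _) hEpos.le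
              rwa [mul_one] at h
            linarith
        _ ≤ P * C * E := by
            have hPE : E ≤ P * E := le_mul_of_one_le_left hEpos.le hP1t
            have expand : P * C * E = P * (|ξ| + 1) * E + P * (|ξ'| + 1) * E + P * E := by
              rw [hCdef]; ring
            linarith
    -- now compare P * C * E with the target
    set t : ℝ := κ / 2 * u n - (κ₁ + κ₁') with htdef
    have ht0 : max 0 (Real.logb 2 C) ≤ t := by
      have hh : (0:ℝ) ≤ κ / 2 := by linarith
      have : κ / 2 * M ≤ κ / 2 * u n := mul_le_mul_of_nonneg_left hun hh
      rw [hM] at this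
      rw [htdef]; linarith
    have htnn : 0 ≤ t := le_trans (le_max_left _ _) ht0
    have hC2t : C ≤ (2:ℝ) ^ t := by
      have h1 : (2:ℝ) ^ Real.logb 2 C ≤ (2:ℝ) ^ t :=
        Real.rpow_le_rpow_of_exponent_le one_le_two (le_trans (le_max_right _ _) ht0)
      rwa [Real.rpow_logb (by norm_num) (by norm_num) hCpos] at h1
    have hCq : C ≤ (q n : ℝ) ^ t :=
      hC2t.trans (Real.rpow_le_rpow (by norm_num) hq2 htnn)
    calc distNearestInt (((b n * b' n : ℕ) : ℝ) * (ξ * ξ')) ≤ P * C * E := key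
      _ ≤ P * (q n : ℝ) ^ t * E := by
          have : P * C ≤ P * (q n : ℝ) ^ t := mul_le_mul_of_nonneg_left hCq (by positivity)
          exact mul_le_mul_of_nonneg_right this hEpos.le
      _ = (q n : ℝ) ^ (-(κ / 2 * u n)) := by
          rw [hPdef, hE, ← Real.rpow_add hqR, ← Real.rpow_add hqR]
          congr 1
          rw [htdef]; ring
end

section
/- The set ℚ ∪ S_{q,u} is a subfield of ℝ (i.e., it is closed under addition, negation, multiplication, and inverses of nonzero elements, and contains 0 and 1). -/
open Filter

namespace LiouvilleField

open Real

lemma dni_nonneg (x : ℝ) : 0 ≤ distNearestInt x := abs_nonneg _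

lemma dni_le (x : ℝ) (m : ℤ) : distNearestInt x ≤ |x - m| := by
  rcases le_or_gt (1/2) |x - m| with h | h
  · exact (abs_sub_round x).trans h
  · have hm : round x = m := by
      rw [round_eq, Int.floor_eq_iff]
      obtain ⟨h1, h2⟩ := abs_lt.1 h
      constructor <;> push_cast <;> linarith
    rw [distNearestInt, hm]

lemma dni_neg (x : ℝ) : distNearestInt (-x) = distNearestInt x := by
  have h1 : distNearestInt (-x) ≤ distNearestInt x := by
    have := dni_le (-x) (-round x)
    rwa [show (-x - ((-round x : ℤ) : ℝ)) = -(x - round x) by push_cast; ring, abs_neg] at this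
  have h2 : distNearestInt x ≤ distNearestInt (-x) := by
    have := dni_le x (-round (-x))
    rwa [show (x - ((-round (-x) : ℤ) : ℝ)) = -(-x - round (-x)) by push_cast; ring, abs_neg] at this
  exact le_antisymm h1 h2

lemma dni_add_le (x y : ℝ) : distNearestInt (x + y) ≤ distNearestInt x + distNearestInt y := by
  calc distNearestInt (x + y) ≤ |x + y - (round x + round y : ℤ)| := dni_le _ _
    _ = |(x - round x) + (y - round y)| := by push_cast; ring_nf
    _ ≤ _ := abs_add_le _ _

lemma dni_int_mul_le (m : ℤ) (x : ℝ) : distNearestInt (m * x) ≤ |(m : ℝ)| * distNearestInt x := by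
  calc distNearestInt (m * x) ≤ |m * x - (m * round x : ℤ)| := dni_le _ _
    _ = |(m : ℝ)| * |x - round x| := by push_cast; rw [← abs_mul]; ring_nf
    _ = _ := rfl

lemma dni_add_int (x : ℝ) (m : ℤ) : distNearestInt (x + m) = distNearestInt x := by
  rw [distNearestInt, distNearestInt, round_add_intCast]; push_cast; ring_nf

lemma dni_mul_le (x y : ℝ) : distNearestInt (x * y) ≤
    |(round x : ℝ)| * distNearestInt y + |(round y : ℝ)| * distNearestInt x
      + distNearestInt x * distNearestInt y := by
  calc distNearestInt (x * y) ≤ |x * y - (round x * round y : ℤ)| := dni_le _ _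
    _ = |(round x : ℝ) * (y - round y) + (round y : ℝ) * (x - round x)
          + (x - round x) * (y - round y)| := by push_cast; ring_nf
    _ ≤ |(round x : ℝ) * (y - round y) + (round y : ℝ) * (x - round x)|
          + |(x - round x) * (y - round y)| := abs_add_le _ _
    _ ≤ |(round x : ℝ) * (y - round y)| + |(round y : ℝ) * (x - round x)|
          + |(x - round x) * (y - round y)| := by gcongr; exact abs_add_le _ _
    _ = _ := by rw [abs_mul, abs_mul, abs_mul]; rfl

lemma abs_round_le (x : ℝ) : |(round x : ℝ)| ≤ |x| + 1 := by
  have h := abs_sub_round x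
  calc |(round x : ℝ)| = |x - (x - round x)| := by ring_nf
    _ ≤ |x| + |x - round x| := abs_sub _ _
    _ ≤ |x| + 1 := by linarith

variable {q : ℕ → ℕ} {u : ℕ → ℝ}

lemma ev_le_rpow (hq : StrictMono q) (hu : Tendsto u atTop atTop) (C κ : ℝ) (hκ : 0 < κ) :
    ∀ᶠ n in atTop, C ≤ (q n : ℝ) ^ (κ * u n) := by
  obtain ⟨N, hN⟩ : ∃ N : ℕ, C ≤ 2 ^ N := by
    obtain ⟨N, hN⟩ := exists_nat_ge C
    exact ⟨N, hN.trans (by exact_mod_cast (Nat.lt_two_pow_self (n := N)).le)⟩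
  have hqt : Tendsto (fun n => (q n : ℝ)) atTop atTop :=
    tendsto_natCast_atTop_atTop.comp (tendsto_atTop_mono (fun n => hq.le_apply) tendsto_id)
  have hut : Tendsto (fun n => κ * u n) atTop atTop := hu.const_mul_atTop hκ
  filter_upwards [hqt.eventually_ge_atTop 2, hut.eventually_ge_atTop (N : ℝ)] with n h2 hN'
  calc C ≤ (2:ℝ) ^ N := hN
    _ = (2:ℝ) ^ (N : ℝ) := (rpow_natCast 2 N).symm
    _ ≤ (2:ℝ) ^ (κ * u n) := rpow_le_rpow_of_exponent_le one_le_two hN'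
    _ ≤ (q n : ℝ) ^ (κ * u n) := rpow_le_rpow (by norm_num) h2 (le_trans (by positivity) hN')

lemma ev_rpow_le (hq : StrictMono q) (hqpos : ∀ n, 0 < q n) (hu : Tendsto u atTop atTop) (ε κ : ℝ) (hε : 0 < ε) (hκ : 0 < κ) :
    ∀ᶠ n in atTop, (q n : ℝ) ^ (-(κ * u n)) ≤ ε := by
  filter_upwards [ev_le_rpow hq hu ε⁻¹ κ hκ] with n h
  have hq0 : (0:ℝ) < (q n : ℝ) := by exact_mod_cast hqpos n
  rw [rpow_neg hq0.le]
  exact inv_le_of_inv_le₀ hε h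

lemma mem_LSet_of_approx (hq : StrictMono q) (hqpos : ∀ n, 0 < q n) (hu : Tendsto u atTop atTop) (η : ℝ) (hη : Irrational η) (κ₁ κ₂ κ₃ C : ℝ) (hκ₁ : 0 < κ₁)
    (hκ₂ : 0 < κ₂) (hC : 0 < C) (b : ℕ → ℕ)
    (hb : ∀ᶠ n in atTop, 1 ≤ b n ∧ (b n : ℝ) ≤ C * (q n:ℝ) ^ κ₁ ∧
      distNearestInt ((b n : ℝ) * η) ≤ C * (q n:ℝ) ^ (κ₃ - κ₂ * u n)) : η ∈ LSet q u := by
  have hqt : Tendsto (fun n => (q n : ℝ)) atTop atTop :=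
    tendsto_natCast_atTop_atTop.comp (tendsto_atTop_mono (fun n => hq.le_apply) tendsto_id)
  refine ⟨hη, κ₁ + 1, κ₂/4, by linarith, by linarith, b, ?_⟩
  filter_upwards [hb, hqt.eventually_ge_atTop C,
    ev_le_rpow hq hu C (κ₂/4) (by linarith),
    (hu.const_mul_atTop (show (0:ℝ) < κ₂/2 by linarith)).eventually_ge_atTop κ₃]
    with n h hqC hCpow hκ₃u
  obtain ⟨h1, h2, h3⟩ := h
  have hq1 : (1:ℝ) ≤ (q n : ℝ) := by exact_mod_cast hqpos n
  have hq0 : (0:ℝ) < (q n : ℝ) := by linarith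
  refine ⟨h1, ?_, ?_⟩
  · calc (b n : ℝ) ≤ C * (q n:ℝ) ^ κ₁ := h2
      _ ≤ (q n:ℝ) * (q n:ℝ) ^ κ₁ := by gcongr
      _ = (q n:ℝ) ^ (κ₁ + 1) := by rw [rpow_add hq0, rpow_one]; ring
  · calc distNearestInt ((b n : ℝ) * η) ≤ C * (q n:ℝ) ^ (κ₃ - κ₂ * u n) := h3
      _ ≤ (q n:ℝ) ^ (κ₂/4 * u n) * (q n:ℝ) ^ (κ₃ - κ₂ * u n) := by gcongr
      _ = (q n:ℝ) ^ (κ₂/4 * u n + (κ₃ - κ₂ * u n)) := (rpow_add hq0 _ _).symm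
      _ ≤ (q n:ℝ) ^ (-(κ₂/4 * u n)) := rpow_le_rpow_of_exponent_le hq1 (by linarith)

lemma LSet_neg {ξ : ℝ} (hξ : ξ ∈ LSet q u) : -ξ ∈ LSet q u := by
  obtain ⟨hirr, κ₁, κ₂, hκ₁, hκ₂, b, hb⟩ := hξ
  refine ⟨hirr.neg, κ₁, κ₂, hκ₁, hκ₂, b, ?_⟩
  filter_upwards [hb] with n ⟨h1, h2, h3⟩
  exact ⟨h1, h2, by rwa [mul_neg, dni_neg]⟩

lemma rat_den_mul_cast (r : ℚ) : (r.den : ℝ) * (r : ℝ) = (r.num : ℝ) := by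
  rw [Rat.cast_def]
  have : (r.den : ℝ) ≠ 0 := Nat.cast_ne_zero.2 r.den_nz
  field_simp

lemma LSet_rat_add (hq : StrictMono q) (hqpos : ∀ n, 0 < q n)
    (hu : Tendsto u atTop atTop) (r : ℚ) {ξ : ℝ} (hξ : ξ ∈ LSet q u) :
    (r : ℝ) + ξ ∈ LSet q u := by
  obtain ⟨hirr, κ₁, κ₂, hκ₁, hκ₂, b, hb⟩ := hξ
  refine mem_LSet_of_approx hq hqpos hu _ (hirr.ratCast_add (q := r)) κ₁ κ₂ 0 r.den hκ₁ hκ₂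
    (by exact_mod_cast r.pos) (fun n => r.den * b n) ?_
  filter_upwards [hb] with n ⟨h1, h2, h3⟩
  refine ⟨Nat.one_le_iff_ne_zero.2 (by positivity), ?_, ?_⟩
  · push_cast; gcongr
  · have e : ((r.den * b n : ℕ) : ℝ) * ((r:ℝ) + ξ) =
        ((r.den : ℤ) : ℝ) * ((b n : ℝ) * ξ) + (((b n : ℤ) * r.num : ℤ) : ℝ) := by
      push_cast
      linear_combination (b n : ℝ) * rat_den_mul_cast r
    rw [e, dni_add_int]
    calc distNearestInt (((r.den : ℤ) : ℝ) * ((b n : ℝ) * ξ))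
        ≤ |((r.den : ℤ) : ℝ)| * distNearestInt ((b n : ℝ) * ξ) := dni_int_mul_le _ _
      _ ≤ (r.den : ℝ) * (q n : ℝ) ^ (-(κ₂ * u n)) := by
          rw [show |((r.den : ℤ) : ℝ)| = (r.den : ℝ) by
            rw [abs_of_nonneg (by positivity)]; push_cast; ring]
          gcongr
      _ = (r.den : ℝ) * (q n : ℝ) ^ (0 - κ₂ * u n) := by ring_nf

lemma LSet_rat_mul (hq : StrictMono q) (hqpos : ∀ n, 0 < q n)
    (hu : Tendsto u atTop atTop) {r : ℚ} (hr : r ≠ 0) {ξ : ℝ} (hξ : ξ ∈ LSet q u) :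
    (r : ℝ) * ξ ∈ LSet q u := by
  obtain ⟨hirr, κ₁, κ₂, hκ₁, hκ₂, b, hb⟩ := hξ
  refine mem_LSet_of_approx hq hqpos hu _ (hirr.ratCast_mul hr) κ₁ κ₂ 0
    ((|r.num| : ℝ) + r.den) hκ₁ hκ₂ (by positivity) (fun n => r.den * b n) ?_
  filter_upwards [hb] with n ⟨h1, h2, h3⟩
  refine ⟨Nat.one_le_iff_ne_zero.2 (by positivity), ?_, ?_⟩
  · push_cast
    have : (r.den : ℝ) * (b n : ℝ) ≤ (r.den : ℝ) * (q n : ℝ) ^ κ₁ := by gcongr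
    nlinarith [abs_nonneg (r.num : ℝ), Real.rpow_nonneg (Nat.cast_nonneg (q n)) κ₁]
  · have e : ((r.den * b n : ℕ) : ℝ) * ((r:ℝ) * ξ) = ((r.num : ℤ) : ℝ) * ((b n : ℝ) * ξ) := by
      push_cast
      linear_combination (b n : ℝ) * ξ * rat_den_mul_cast r
    rw [e]
    calc distNearestInt (((r.num : ℤ) : ℝ) * ((b n : ℝ) * ξ))
        ≤ |((r.num : ℤ) : ℝ)| * distNearestInt ((b n : ℝ) * ξ) := dni_int_mul_le _ _
      _ ≤ ((|r.num| : ℝ) + r.den) * (q n : ℝ) ^ (-(κ₂ * u n)) := by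
          rw [show |((r.num : ℤ) : ℝ)| = ((|r.num| : ℤ) : ℝ) by push_cast; ring]
          gcongr
          · exact dni_nonneg _
          · have : (0:ℝ) < r.den := by exact_mod_cast r.pos
            push_cast
            linarith
      _ = ((|r.num| : ℝ) + r.den) * (q n : ℝ) ^ (0 - κ₂ * u n) := by ring_nf

lemma LSet_add (hq : StrictMono q) (hqpos : ∀ n, 0 < q n) (hupos : ∀ n, 0 < u n)
    (hu : Tendsto u atTop atTop) {ξ η : ℝ} (hξ : ξ ∈ LSet q u) (hη : η ∈ LSet q u)
    (hirr : Irrational (ξ + η)) : ξ + η ∈ LSet q u := by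
  obtain ⟨_, κ₁, κ₂, hκ₁, hκ₂, b, hb⟩ := hξ
  obtain ⟨_, κ₁', κ₂', hκ₁', hκ₂', b', hb'⟩ := hη
  refine mem_LSet_of_approx hq hqpos hu _ hirr (κ₁ + κ₁') (min κ₂ κ₂') (max κ₁ κ₁') 2
    (by linarith) (lt_min hκ₂ hκ₂') (by norm_num) (fun n => b n * b' n) ?_
  filter_upwards [hb, hb'] with n ⟨h1, h2, h3⟩ ⟨h1', h2', h3'⟩
  have hq1 : (1:ℝ) ≤ (q n : ℝ) := by exact_mod_cast hqpos n
  have hq0 : (0:ℝ) < (q n : ℝ) := by linarith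
  have hun : 0 ≤ u n := (hupos n).le
  refine ⟨Nat.one_le_iff_ne_zero.2 (by positivity), ?_, ?_⟩
  · push_cast
    calc (b n : ℝ) * (b' n : ℝ) ≤ (q n:ℝ) ^ κ₁ * (q n:ℝ) ^ κ₁' := by
          gcongr <;> positivity
      _ = (q n:ℝ) ^ (κ₁ + κ₁') := (Real.rpow_add hq0 _ _).symm
      _ ≤ 2 * (q n:ℝ) ^ (κ₁ + κ₁') := by nlinarith [Real.rpow_pos_of_pos hq0 (κ₁ + κ₁')]
  · have e : ((b n * b' n : ℕ) : ℝ) * (ξ + η) =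
        ((b' n : ℤ) : ℝ) * ((b n : ℝ) * ξ) + ((b n : ℤ) : ℝ) * ((b' n : ℝ) * η) := by
      push_cast; ring
    have key : ∀ a c : ℝ, a ≤ max κ₁ κ₁' → min κ₂ κ₂' ≤ c →
        (q n:ℝ) ^ a * (q n:ℝ) ^ (-(c * u n)) ≤ (q n:ℝ) ^ (max κ₁ κ₁' - min κ₂ κ₂' * u n) := by
      intro a c ha hc
      rw [← Real.rpow_add hq0]
      apply Real.rpow_le_rpow_of_exponent_le hq1
      have : min κ₂ κ₂' * u n ≤ c * u n := by gcongr
      linarith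
    rw [e]
    calc distNearestInt (((b' n : ℤ) : ℝ) * ((b n : ℝ) * ξ) + ((b n : ℤ) : ℝ) * ((b' n : ℝ) * η))
        ≤ distNearestInt (((b' n : ℤ) : ℝ) * ((b n : ℝ) * ξ))
          + distNearestInt (((b n : ℤ) : ℝ) * ((b' n : ℝ) * η)) := dni_add_le _ _
      _ ≤ |((b' n : ℤ) : ℝ)| * distNearestInt ((b n : ℝ) * ξ)
          + |((b n : ℤ) : ℝ)| * distNearestInt ((b' n : ℝ) * η) := by
          gcongr <;> exact dni_int_mul_le _ _
      _ ≤ (q n:ℝ) ^ κ₁' * (q n:ℝ) ^ (-(κ₂ * u n)) + (q n:ℝ) ^ κ₁ * (q n:ℝ) ^ (-(κ₂' * u n)) := by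
          gcongr
          · exact dni_nonneg _
          · rw [abs_of_nonneg (by positivity)]; push_cast at h2' ⊢; exact h2'
          · exact dni_nonneg _
          · rw [abs_of_nonneg (by positivity)]; push_cast at h2 ⊢; exact h2
      _ ≤ (q n:ℝ) ^ (max κ₁ κ₁' - min κ₂ κ₂' * u n)
          + (q n:ℝ) ^ (max κ₁ κ₁' - min κ₂ κ₂' * u n) := by
          gcongr
          · exact key _ _ (le_max_right _ _) (min_le_left _ _)
          · exact key _ _ (le_max_left _ _) (min_le_right _ _)
      _ = 2 * (q n:ℝ) ^ (max κ₁ κ₁' - min κ₂ κ₂' * u n) := by ring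

lemma LSet_mul (hq : StrictMono q) (hqpos : ∀ n, 0 < q n) (hupos : ∀ n, 0 < u n)
    (hu : Tendsto u atTop atTop) {ξ η : ℝ} (hξ : ξ ∈ LSet q u) (hη : η ∈ LSet q u)
    (hirr : Irrational (ξ * η)) : ξ * η ∈ LSet q u := by
  obtain ⟨_, κ₁, κ₂, hκ₁, hκ₂, b, hb⟩ := hξ
  obtain ⟨_, κ₁', κ₂', hκ₁', hκ₂', b', hb'⟩ := hη
  refine mem_LSet_of_approx hq hqpos hu _ hirr (κ₁ + κ₁') (min κ₂ κ₂') (max κ₁ κ₁')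
    (|ξ| + |η| + 3) (by linarith) (lt_min hκ₂ hκ₂') (by positivity) (fun n => b n * b' n) ?_
  filter_upwards [hb, hb'] with n ⟨h1, h2, h3⟩ ⟨h1', h2', h3'⟩
  have hq1 : (1:ℝ) ≤ (q n : ℝ) := by exact_mod_cast hqpos n
  have hq0 : (0:ℝ) < (q n : ℝ) := by linarith
  have hun : 0 ≤ u n := (hupos n).le
  set Q := (q n : ℝ)
  set A := max κ₁ κ₁' with hA
  set m := min κ₂ κ₂' with hm
  have hA1 : (1:ℝ) ≤ Q ^ A := Real.one_le_rpow hq1 (le_trans hκ₁.le (le_max_left _ _))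
  have hak : Q ^ κ₁ ≤ Q ^ A := Real.rpow_le_rpow_of_exponent_le hq1 (le_max_left _ _)
  have hak' : Q ^ κ₁' ≤ Q ^ A := Real.rpow_le_rpow_of_exponent_le hq1 (le_max_right _ _)
  have hmu : m * u n ≤ κ₂ * u n := by gcongr; exact min_le_left _ _
  have hmu' : m * u n ≤ κ₂' * u n := by gcongr; exact min_le_right _ _
  have hA0 : (0:ℝ) ≤ A := le_trans hκ₁.le (le_max_left _ _)
  refine ⟨Nat.one_le_iff_ne_zero.2 (by positivity), ?_, ?_⟩
  · push_cast
    have e1 : (b n : ℝ) * (b' n : ℝ) ≤ Q ^ κ₁ * Q ^ κ₁' := by gcongr <;> positivity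
    calc (b n : ℝ) * (b' n : ℝ) ≤ Q ^ κ₁ * Q ^ κ₁' := e1
      _ = Q ^ (κ₁ + κ₁') := (Real.rpow_add hq0 _ _).symm
      _ ≤ (|ξ| + |η| + 3) * Q ^ (κ₁ + κ₁') := by
          nlinarith [Real.rpow_pos_of_pos hq0 (κ₁ + κ₁'), abs_nonneg ξ, abs_nonneg η]
  · set X := (b n : ℝ) * ξ
    set Y := (b' n : ℝ) * η
    have e : ((b n * b' n : ℕ) : ℝ) * (ξ * η) = X * Y := by push_cast; ring
    have hXa : |X| ≤ Q ^ κ₁ * |ξ| := by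
      rw [abs_mul, abs_of_nonneg (Nat.cast_nonneg _)]
      gcongr
    have hYa : |Y| ≤ Q ^ κ₁' * |η| := by
      rw [abs_mul, abs_of_nonneg (Nat.cast_nonneg _)]
      gcongr
    have hrX : |(round X : ℝ)| ≤ (|ξ| + 1) * Q ^ A := by
      have := abs_round_le X
      nlinarith [abs_nonneg ξ]
    have hrY : |(round Y : ℝ)| ≤ (|η| + 1) * Q ^ A := by
      have := abs_round_le Y
      nlinarith [abs_nonneg η]
    have key : ∀ c : ℝ, m ≤ c → Q ^ A * Q ^ (-(c * u n)) ≤ Q ^ (A - m * u n) := by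
      intro c hc
      rw [← Real.rpow_add hq0]
      apply Real.rpow_le_rpow_of_exponent_le hq1
      have : m * u n ≤ c * u n := by gcongr
      linarith
    rw [e]
    calc distNearestInt (X * Y)
        ≤ |(round X : ℝ)| * distNearestInt Y + |(round Y : ℝ)| * distNearestInt X
          + distNearestInt X * distNearestInt Y := dni_mul_le X Y
      _ ≤ ((|ξ| + 1) * Q ^ A) * Q ^ (-(κ₂' * u n)) + ((|η| + 1) * Q ^ A) * Q ^ (-(κ₂ * u n))
          + Q ^ (-(κ₂ * u n)) * Q ^ (-(κ₂' * u n)) := by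
          gcongr <;> first | exact dni_nonneg _ | assumption | positivity
      _ ≤ (|ξ| + 1) * Q ^ (A - m * u n) + (|η| + 1) * Q ^ (A - m * u n)
          + Q ^ (A - m * u n) := by
          have t1 : ((|ξ| + 1) * Q ^ A) * Q ^ (-(κ₂' * u n)) ≤ (|ξ| + 1) * Q ^ (A - m * u n) := by
            rw [mul_assoc]
            exact mul_le_mul_of_nonneg_left (key _ (min_le_right _ _)) (by positivity)
          have t2 : ((|η| + 1) * Q ^ A) * Q ^ (-(κ₂ * u n)) ≤ (|η| + 1) * Q ^ (A - m * u n) := by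
            rw [mul_assoc]
            exact mul_le_mul_of_nonneg_left (key _ (min_le_left _ _)) (by positivity)
          have t3 : Q ^ (-(κ₂ * u n)) * Q ^ (-(κ₂' * u n)) ≤ Q ^ (A - m * u n) := by
            rw [← Real.rpow_add hq0]
            have h0 : 0 ≤ κ₂' * u n := mul_nonneg hκ₂'.le hun
            exact Real.rpow_le_rpow_of_exponent_le hq1 (by linarith)
          linarith
      _ = (|ξ| + |η| + 3) * Q ^ (A - m * u n) := by ring

lemma LSet_inv (hq : StrictMono q) (hqpos : ∀ n, 0 < q n)
    (hu : Tendsto u atTop atTop) {ξ : ℝ} (hξ : ξ ∈ LSet q u) : ξ⁻¹ ∈ LSet q u := by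
  obtain ⟨hirr, κ₁, κ₂, hκ₁, hκ₂, b, hb⟩ := hξ
  have hξ0 : ξ ≠ 0 := hirr.ne_zero
  have haξ : 0 < |ξ| := abs_pos.2 hξ0
  refine mem_LSet_of_approx hq hqpos hu _ hirr.inv κ₁ κ₂ 0 (2 * (|ξ| + 1) + |ξ|⁻¹)
    hκ₁ hκ₂ (by positivity) (fun n => (round ((b n : ℝ) * ξ)).natAbs) ?_
  filter_upwards [hb, ev_rpow_le hq hqpos hu (|ξ|/2) κ₂ (by positivity) hκ₂]
    with n ⟨h1, h2, h3⟩ hsmall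
  set X := (b n : ℝ) * ξ with hX
  set p := round X with hp
  have hd : |X - p| ≤ |ξ| / 2 := le_trans h3 hsmall
  have hbnn : (0:ℝ) ≤ (b n : ℝ) := Nat.cast_nonneg _
  have hb1 : (1:ℝ) ≤ (b n : ℝ) := by exact_mod_cast h1
  have hbξ : |ξ| ≤ |X| := by
    rw [hX, abs_mul, abs_of_nonneg hbnn]
    nlinarith
  have hplb : |ξ| / 2 ≤ |(p : ℝ)| := by
    have : |X| - |(p : ℝ)| ≤ |X - p| := abs_sub_abs_le_abs_sub _ _
    linarith
  have hp0 : p ≠ 0 := by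
    intro h
    rw [h] at hplb
    simp at hplb
    linarith
  have hpabs : ((p.natAbs : ℕ) : ℝ) = |(p : ℝ)| := by
    push_cast [Nat.cast_natAbs]
    norm_num
  refine ⟨Nat.one_le_iff_ne_zero.2 (by simpa using hp0), ?_, ?_⟩
  · rw [hpabs]
    have hub : |(p : ℝ)| ≤ |X| + |X - p| := by
      have := abs_sub_abs_le_abs_sub (p : ℝ) X
      rw [abs_sub_comm] at this
      linarith
    have hXub : |X| ≤ (q n : ℝ) ^ κ₁ * |ξ| := by
      rw [hX, abs_mul, abs_of_nonneg hbnn]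
      gcongr
    have h12 : (1:ℝ) ≤ (q n : ℝ) ^ κ₁ :=
      Real.one_le_rpow (by exact_mod_cast hqpos n) hκ₁.le
    nlinarith [inv_nonneg.2 (abs_nonneg ξ)]
  · have hdni : distNearestInt ((p.natAbs : ℝ) * ξ⁻¹) = distNearestInt ((p : ℝ) * ξ⁻¹) := by
      rcases abs_choice (p : ℝ) with h | h
      · rw [hpabs, h]
      · rw [hpabs, h, neg_mul, dni_neg]
    rw [hdni]
    calc distNearestInt ((p : ℝ) * ξ⁻¹) ≤ |(p : ℝ) * ξ⁻¹ - ((b n : ℤ) : ℝ)| := dni_le _ _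
      _ = |(p : ℝ) - X| / |ξ| := by
          rw [← abs_div]
          congr 1
          rw [hX]
          field_simp
          push_cast
          ring
      _ ≤ (q n : ℝ) ^ (-(κ₂ * u n)) / |ξ| := by
          gcongr
          rw [abs_sub_comm]
          exact h3
      _ ≤ (2 * (|ξ| + 1) + |ξ|⁻¹) * (q n : ℝ) ^ (0 - κ₂ * u n) := by
          rw [div_eq_mul_inv, mul_comm, zero_sub]
          have hpow : (0:ℝ) < (q n : ℝ) ^ (-(κ₂ * u n)) :=
            Real.rpow_pos_of_pos (by exact_mod_cast hqpos n) _
          nlinarith [abs_nonneg ξ, inv_nonneg.2 (abs_nonneg ξ)]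

end LiouvilleField

/-- ℚ ∪ S_{q,u} is a subfield of ℝ. -/
theorem rat_union_LSet_isField (q : ℕ → ℕ) (u : ℕ → ℝ)
    (hq : StrictMono q) (hqpos : ∀ n, 0 < q n)
    (hupos : ∀ n, 0 < u n) (hu : Filter.Tendsto u Filter.atTop Filter.atTop) :
    ∃ K : Subfield ℝ, (K : Set ℝ) = Set.range ((↑) : ℚ → ℝ) ∪ LSet q u := by
  classical
  refine ⟨{ carrier := Set.range ((↑) : ℚ → ℝ) ∪ LSet q u
            one_mem' := Or.inl ⟨1, by norm_num⟩
            zero_mem' := Or.inl ⟨0, by norm_num⟩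
            add_mem' := ?_
            mul_mem' := ?_
            neg_mem' := ?_
            inv_mem' := ?_ }, rfl⟩
  · rintro a c (⟨r₁, rfl⟩ | ha) (⟨r₂, rfl⟩ | hc)
    · exact Or.inl ⟨r₁ * r₂, by push_cast; ring⟩
    · by_cases hr : r₁ = 0
      · subst hr
        exact Or.inl ⟨0, by norm_num⟩
      · exact Or.inr (LiouvilleField.LSet_rat_mul hq hqpos hu hr hc)
    · by_cases hr : r₂ = 0
      · subst hr
        exact Or.inl ⟨0, by norm_num⟩
      · rw [mul_comm]
        exact Or.inr (LiouvilleField.LSet_rat_mul hq hqpos hu hr ha)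
    · by_cases hi : Irrational (a * c)
      · exact Or.inr (LiouvilleField.LSet_mul hq hqpos hupos hu ha hc hi)
      · exact Or.inl (not_not.mp hi)
  · rintro a c (⟨r₁, rfl⟩ | ha) (⟨r₂, rfl⟩ | hc)
    · exact Or.inl ⟨r₁ + r₂, by push_cast; ring⟩
    · exact Or.inr (LiouvilleField.LSet_rat_add hq hqpos hu r₁ hc)
    · rw [add_comm]
      exact Or.inr (LiouvilleField.LSet_rat_add hq hqpos hu r₂ ha)
    · by_cases hi : Irrational (a + c)
      · exact Or.inr (LiouvilleField.LSet_add hq hqpos hupos hu ha hc hi)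
      · exact Or.inl (not_not.mp hi)
  · rintro a (⟨r, rfl⟩ | ha)
    · exact Or.inl ⟨-r, by push_cast; ring⟩
    · exact Or.inr (LiouvilleField.LSet_neg ha)
  · rintro a (⟨r, rfl⟩ | ha)
    · exact Or.inl ⟨r⁻¹, by push_cast; ring⟩
    · exact Or.inr (LiouvilleField.LSet_inv hq hqpos hu ha)
end

section
/- Let R ∈ ℚ(X) be a rational function with rational coefficients and let ξ be a Liouville number at which R is defined. Then R(ξ) is either a rational number or a Liouville number. -/
open Polynomial

/-- Key lemma: if `P, Q` are integer polynomials, `ξ` is Liouville, `Q(ξ) ≠ 0` and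
`P(ξ)/Q(ξ)` is irrational, then `P(ξ)/Q(ξ)` is Liouville. -/
lemma aux_liouville (P Q : Polynomial ℤ) (ξ : ℝ) (hξ : Liouville ξ)
    (hQ : Polynomial.aeval ξ Q ≠ 0)
    (hirr : Irrational (Polynomial.aeval ξ P / Polynomial.aeval ξ Q)) :
    Liouville (Polynomial.aeval ξ P / Polynomial.aeval ξ Q) := by
  classical
  set fP : Polynomial ℝ := P.map (algebraMap ℤ ℝ) with hfPdef
  set fQ : Polynomial ℝ := Q.map (algebraMap ℤ ℝ) with hfQdef
  have ePQ : ∀ t : ℝ, (Polynomial.aeval t P : ℝ) = fP.eval t := fun t => by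
    rw [hfPdef, eval_map, aeval_def]
  have eQQ : ∀ t : ℝ, (Polynomial.aeval t Q : ℝ) = fQ.eval t := fun t => by
    rw [hfQdef, eval_map, aeval_def]
  set x : ℝ := Polynomial.aeval ξ P / Polynomial.aeval ξ Q with hxdef
  have hxeval : x = fP.eval ξ / fQ.eval ξ := by rw [hxdef, ePQ, eQQ]
  have hQξ : fQ.eval ξ ≠ 0 := by rw [← eQQ]; exact hQ
  have hqabs : 0 < |fQ.eval ξ| := abs_pos.mpr hQξ
  -- the auxiliary polynomial vanishing at ξ
  set g : Polynomial ℝ := fP * C (fQ.eval ξ) - fQ * C (fP.eval ξ) with hgdef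
  have hgξ : g.eval ξ = 0 := by simp [hgdef]; ring
  -- bound on derivative of g on closed ball of radius 1
  obtain ⟨M₀, hM₀⟩ : ∃ M₀, ∀ t ∈ Metric.closedBall ξ 1, |g.derivative.eval t| ≤ M₀ := by
    obtain ⟨M₀, hM₀⟩ := (isCompact_closedBall ξ 1).exists_bound_of_continuousOn
      (g.derivative.continuous_aeval.continuousOn)
    exact ⟨M₀, fun t ht => by simpa [Real.norm_eq_abs] using hM₀ t ht⟩
  set M : ℝ := max M₀ 1 with hMdef
  have hM1 : (1:ℝ) ≤ M := le_max_right _ _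
  have hM0 : 0 < M := lt_of_lt_of_le one_pos hM1
  have lip : ∀ t ∈ Metric.closedBall ξ 1, |g.eval t| ≤ M * |t - ξ| := by
    intro t ht
    have h := Convex.norm_image_sub_le_of_norm_deriv_le
      (f := fun y => g.eval y)
      (fun y _ => g.differentiableAt)
      (fun y hy => by
        rw [Real.norm_eq_abs, g.deriv]; exact le_trans (hM₀ y hy) (le_max_left M₀ 1))
      (convex_closedBall ξ 1) (Metric.mem_closedBall_self zero_le_one) ht
    simpa only [Real.norm_eq_abs, hgξ, sub_zero] using h
  -- continuity of fQ near ξ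
  obtain ⟨δ₀, hδ₀pos, hδ₀⟩ := Metric.continuousAt_iff.mp fQ.continuousAt
    (|fQ.eval ξ| / 2) (by positivity)
  set δ : ℝ := min (δ₀ / 2) 1 with hδdef
  have hδpos : 0 < δ := lt_min (by positivity) one_pos
  have hδ1 : δ ≤ 1 := min_le_right _ _
  have hnear : ∀ t : ℝ, |t - ξ| ≤ δ →
      |fQ.eval ξ| / 2 ≤ |fQ.eval t| ∧ |fQ.eval t| ≤ 2 * |fQ.eval ξ| := by
    intro t ht
    have hdist : dist t ξ < δ₀ :=
      lt_of_le_of_lt (by simpa [Real.dist_eq] using ht.trans (min_le_left _ _)) (by linarith)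
    have h2 := hδ₀ hdist
    rw [Real.dist_eq] at h2
    constructor
    · have h3 := abs_sub_abs_le_abs_sub (fQ.eval ξ) (fQ.eval t)
      rw [abs_sub_comm (fQ.eval ξ) (fQ.eval t)] at h3
      linarith
    · have h3 := abs_sub_abs_le_abs_sub (fQ.eval t) (fQ.eval ξ)
      linarith
  -- the Lipschitz constant
  set Cl : ℝ := 2 * M / |fQ.eval ξ| ^ 2 with hCldef
  have hCl0 : 0 < Cl := by positivity
  have key : ∀ t : ℝ, |t - ξ| ≤ δ → fQ.eval t ≠ 0 ∧
      |x - fP.eval t / fQ.eval t| ≤ Cl * |t - ξ| := by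
    intro t ht
    obtain ⟨hlow, _⟩ := hnear t ht
    have hQt : fQ.eval t ≠ 0 := by
      refine abs_pos.mp (lt_of_lt_of_le (half_pos hqabs) hlow)
    refine ⟨hQt, ?_⟩
    have hxeq : x - fP.eval t / fQ.eval t = -(g.eval t) / (fQ.eval ξ * fQ.eval t) := by
      rw [hxeval, hgdef]
      field_simp
      simp only [eval_sub, eval_mul, eval_C]
      ring
    have habs : |x - fP.eval t / fQ.eval t| = |g.eval t| / (|fQ.eval ξ| * |fQ.eval t|) := by
      rw [hxeq, abs_div, abs_neg, abs_mul]
    rw [habs]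
    have hmem : t ∈ Metric.closedBall ξ 1 := by
      rw [Metric.mem_closedBall, Real.dist_eq]; exact ht.trans hδ1
    have hg := lip t hmem
    have hd : |fQ.eval ξ| * (|fQ.eval ξ| / 2) ≤ |fQ.eval ξ| * |fQ.eval t| :=
      mul_le_mul_of_nonneg_left hlow (abs_nonneg _)
    have h5 : |g.eval t| / (|fQ.eval ξ| * |fQ.eval t|) ≤
        (M * |t - ξ|) / (|fQ.eval ξ| * (|fQ.eval ξ| / 2)) :=
      div_le_div₀ (by positivity) hg (by positivity) hd
    refine h5.trans (le_of_eq ?_)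
    rw [hCldef]
    field_simp
  -- now the main argument
  intro n
  set d : ℕ := max P.natDegree Q.natDegree with hddef
  set E : ℝ := 4 * |fQ.eval ξ| with hEdef
  have hE0 : 0 < E := by positivity
  obtain ⟨j, hj⟩ := pow_unbounded_of_one_lt (Cl * E ^ n) one_lt_two
  obtain ⟨j₂, hj₂⟩ := pow_unbounded_of_one_lt (1 / δ) one_lt_two
  set k : ℕ := d * n + j + j₂ with hkdef
  obtain ⟨a, b, hb1, hxne, hab⟩ := hξ k
  have hb0 : (0:ℝ) < b := by exact_mod_cast lt_trans one_pos hb1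
  have hb2 : (2:ℝ) ≤ b := by exact_mod_cast hb1
  have hbk2 : (2:ℝ) ^ k ≤ (b:ℝ) ^ k := pow_le_pow_left₀ (by norm_num) hb2 k
  have hj₂k : (2:ℝ) ^ j₂ ≤ (b:ℝ) ^ k :=
    le_trans (pow_le_pow_right₀ one_le_two (by omega)) hbk2
  have hδb : 1 / (b:ℝ) ^ k ≤ δ := by
    rw [div_le_iff₀ (by positivity)]
    rw [div_lt_iff₀ hδpos] at hj₂
    nlinarith [pow_pos hb0 k, hδpos]
  set r : ℝ := (a:ℝ) / b with hrdef
  have habδ : |ξ - r| ≤ δ := le_of_lt (lt_of_lt_of_le hab hδb)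
  have habδ' : |r - ξ| ≤ δ := by rwa [abs_sub_comm ξ r] at habδ
  obtain ⟨hQr, hest⟩ := key r habδ'
  -- clear denominators
  have hbne : ((b:ℝ)) ≠ 0 := ne_of_gt hb0
  have bu : ((b:ℝ))⁻¹ * algebraMap ℤ ℝ b = 1 := by
    rw [eq_intCast]; exact inv_mul_cancel₀ hbne
  obtain ⟨Dp, bip, hbip, hDp⟩ :=
    denomsClearable_of_natDegree_le (i := algebraMap ℤ ℝ) d a bu P (le_max_left _ _)
  obtain ⟨Dq, biq, hbiq, hDq⟩ :=
    denomsClearable_of_natDegree_le (i := algebraMap ℤ ℝ) d a bu Q (le_max_right _ _)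
  have hbip' : bip = ((b:ℝ))⁻¹ := by
    rw [eq_intCast] at hbip
    exact eq_inv_of_mul_eq_one_left hbip
  have hbiq' : biq = ((b:ℝ))⁻¹ := by
    rw [eq_intCast] at hbiq
    exact eq_inv_of_mul_eq_one_left hbiq
  rw [hbip', eq_intCast, eq_intCast, eq_intCast, ← div_eq_mul_inv] at hDp
  rw [hbiq', eq_intCast, eq_intCast, eq_intCast, ← div_eq_mul_inv] at hDq
  -- hDp : (Dp : ℝ) = b ^ d * fP.eval r,  hDq : (Dq : ℝ) = b ^ d * fQ.eval r
  have hDqR : (Dq : ℝ) = (b:ℝ) ^ d * fQ.eval r := hDq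
  have hDpR : (Dp : ℝ) = (b:ℝ) ^ d * fP.eval r := hDp
  have hDqne : (Dq : ℝ) ≠ 0 := by
    rw [hDqR]; exact mul_ne_zero (ne_of_gt (pow_pos hb0 d)) hQr
  have hDqne' : Dq ≠ 0 := by exact_mod_cast hDqne
  set A : ℤ := 2 * Dp * Dq.sign with hAdef
  set B : ℤ := 2 * |Dq| with hBdef
  have hB2 : 2 ≤ B := by
    have : 1 ≤ |Dq| := Int.one_le_abs hDqne'
    omega
  have hB1 : 1 < B := by omega
  have hB0R : (0:ℝ) < B := by exact_mod_cast lt_trans one_pos hB1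
  have hsign : (Dq : ℝ) * (Dq.sign : ℝ) = |(Dq : ℝ)| := by
    rw [← Int.cast_abs, ← Int.cast_mul, Int.mul_sign_self]
    rw [Int.abs_eq_natAbs]
  have hAB : (A:ℝ) / (B:ℝ) = (Dp:ℝ) / (Dq:ℝ) := by
    rw [div_eq_div_iff (by exact_mod_cast ne_of_gt hB0R) hDqne]
    push_cast [hAdef, hBdef, Int.cast_abs]
    linear_combination (2 * (Dp:ℝ)) * hsign
  have hABr : (A:ℝ) / (B:ℝ) = fP.eval r / fQ.eval r := by
    rw [hAB, hDpR, hDqR, mul_div_mul_left _ _ (ne_of_gt (pow_pos hb0 d))]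
  refine ⟨A, B, hB1, ?_, ?_⟩
  · intro h
    exact hirr ⟨(A:ℚ)/(B:ℚ), by push_cast; exact h.symm⟩
  · -- the estimate
    have e1 : |x - (A:ℝ)/B| ≤ Cl * |ξ - r| := by
      rw [← hABr, abs_sub_comm r ξ] at hest; exact hest
    have e2 : Cl * |ξ - r| < Cl * (1 / (b:ℝ)^k) := by
      exact mul_lt_mul_of_pos_left hab hCl0
    -- bound B ≤ E * b ^ d
    have hBle : (B:ℝ) ≤ E * (b:ℝ) ^ d := by
      obtain ⟨_, hup⟩ := hnear r habδ'
      have : |(Dq:ℝ)| = (b:ℝ)^d * |fQ.eval r| := by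
        rw [hDqR, abs_mul, abs_of_pos (pow_pos hb0 d)]
      have h10 : (b:ℝ)^d * |fQ.eval r| ≤ (b:ℝ)^d * (2*|fQ.eval ξ|) :=
        mul_le_mul_of_nonneg_left hup (pow_pos hb0 d).le
      push_cast [hBdef, Int.cast_abs]
      rw [hEdef]
      linarith [this, h10]
    have hBnle : (B:ℝ)^n ≤ E^n * ((b:ℝ)^d)^n := by
      rw [← mul_pow]
      exact pow_le_pow_left₀ hB0R.le hBle n
    -- final: Cl / b^k < 1 / B^n
    have hfin : Cl * (1 / (b:ℝ)^k) ≤ 1 / (B:ℝ)^n := by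
      rw [mul_one_div, div_le_div_iff₀ (pow_pos hb0 k) (pow_pos hB0R n)]
      have h6 : Cl * (B:ℝ)^n ≤ Cl * (E^n * ((b:ℝ)^d)^n) :=
        mul_le_mul_of_nonneg_left hBnle (le_of_lt hCl0)
      have h7 : Cl * (E^n * ((b:ℝ)^d)^n) < 2^j * ((b:ℝ)^d)^n := by
        have hy : (0:ℝ) < ((b:ℝ)^d)^n := pow_pos (pow_pos hb0 d) n
        calc Cl * (E^n * ((b:ℝ)^d)^n) = (Cl * E^n) * ((b:ℝ)^d)^n := by ring
          _ < 2^j * ((b:ℝ)^d)^n := mul_lt_mul_of_pos_right hj hy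
      have h8 : (2:ℝ)^j * ((b:ℝ)^d)^n ≤ (b:ℝ)^k := by
        rw [hkdef, ← pow_mul]
        have hbj : (2:ℝ)^j ≤ (b:ℝ)^j := pow_le_pow_left₀ (by norm_num) hb2 j
        have hbj₂ : (1:ℝ) ≤ (b:ℝ)^j₂ := one_le_pow₀ (by linarith)
        calc (2:ℝ)^j * ((b:ℝ))^(d*n) ≤ (b:ℝ)^j * (b:ℝ)^(d*n) := by
              exact mul_le_mul_of_nonneg_right hbj (pow_pos hb0 _).le
          _ = (b:ℝ)^(d*n+j) := by rw [← pow_add, add_comm]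
          _ ≤ (b:ℝ)^(d*n+j) * (b:ℝ)^j₂ := le_mul_of_one_le_right (pow_pos hb0 _).le hbj₂
          _ = (b:ℝ)^(d*n+j+j₂) := by rw [← pow_add]
      linarith
    calc |x - (A:ℝ)/B| ≤ Cl * |ξ - r| := e1
      _ < Cl * (1 / (b:ℝ)^k) := e2
      _ ≤ 1 / (B:ℝ)^n := hfin

/-- If R ∈ ℚ(X) and ξ is Liouville with R defined at ξ, then R(ξ) is rational or Liouville. -/
theorem ratFunc_eval_liouville (R : RatFunc ℚ) (ξ : ℝ) (hξ : Liouville ξ)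
    (hdef : Polynomial.aeval ξ R.denom ≠ 0) :
    (∃ r : ℚ, RatFunc.eval (algebraMap ℚ ℝ) ξ R = (r : ℝ)) ∨
      Liouville (RatFunc.eval (algebraMap ℚ ℝ) ξ R) := by
  by_cases h : ∃ r : ℚ, RatFunc.eval (algebraMap ℚ ℝ) ξ R = (r : ℝ)
  · exact Or.inl h
  right
  obtain ⟨cp, hcp⟩ := IsLocalization.integerNormalization_map_to_map (nonZeroDivisors ℤ) R.num
  obtain ⟨cq, hcq⟩ := IsLocalization.integerNormalization_map_to_map (nonZeroDivisors ℤ) R.denom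
  set P0 : Polynomial ℤ := IsLocalization.integerNormalization (nonZeroDivisors ℤ) R.num
  set Q0 : Polynomial ℤ := IsLocalization.integerNormalization (nonZeroDivisors ℤ) R.denom
  set P : Polynomial ℤ := (cq:ℤ) • P0 with hPdef
  set Q : Polynomial ℤ := (cp:ℤ) • Q0 with hQdef
  have hcp0 : ((cp:ℤ):ℝ) ≠ 0 := by
    exact_mod_cast nonZeroDivisors.coe_ne_zero cp
  have hcq0 : ((cq:ℤ):ℝ) ≠ 0 := by
    exact_mod_cast nonZeroDivisors.coe_ne_zero cq
  have hP0 : (Polynomial.aeval ξ P0 : ℝ) = ((cp:ℤ):ℝ) * Polynomial.aeval ξ R.num := by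
    rw [← Polynomial.aeval_map_algebraMap ℚ, hcp, map_zsmul, zsmul_eq_mul]
  have hQ0 : (Polynomial.aeval ξ Q0 : ℝ) = ((cq:ℤ):ℝ) * Polynomial.aeval ξ R.denom := by
    rw [← Polynomial.aeval_map_algebraMap ℚ, hcq, map_zsmul, zsmul_eq_mul]
  have hPv : (Polynomial.aeval ξ P : ℝ) =
      ((cq:ℤ):ℝ) * (((cp:ℤ):ℝ) * Polynomial.aeval ξ R.num) := by
    rw [hPdef, map_zsmul, zsmul_eq_mul, hP0]
  have hQv : (Polynomial.aeval ξ Q : ℝ) =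
      ((cp:ℤ):ℝ) * (((cq:ℤ):ℝ) * Polynomial.aeval ξ R.denom) := by
    rw [hQdef, map_zsmul, zsmul_eq_mul, hQ0]
  have hQne : Polynomial.aeval ξ Q ≠ 0 := by
    rw [hQv]; exact mul_ne_zero hcp0 (mul_ne_zero hcq0 hdef)
  have hx : RatFunc.eval (algebraMap ℚ ℝ) ξ R =
      Polynomial.aeval ξ P / Polynomial.aeval ξ Q := by
    rw [RatFunc.eval, ← aeval_def, ← aeval_def, hPv, hQv]
    rw [eq_div_iff (mul_ne_zero hcp0 (mul_ne_zero hcq0 hdef))]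
    field_simp
  rw [hx]
  exact aux_liouville P Q ξ hξ hQne (fun ⟨r, hr⟩ => h ⟨r, by rw [hx]; exact hr.symm⟩)
end

section
/- Let ξ be real, n a positive integer, and q, q' positive integers. Suppose there exist integers p, p' with p/q ≠ p'/q', |qξ − p| ≤ q^{-(u+1)} and |q'ξ − p'| ≤ (q')^{-(u+2)}, where u ≥ 1 is a real number and q' ≥ 2 if u > 1. Then either q' ≥ q^u or q ≥ (q')^u. -/
/-- Gap lemma between two good rational approximations of different quality exponents. -/
theorem gap_lemma (ξ : ℝ) (u : ℝ) (hu : 1 ≤ u) (q q' : ℕ) (hq : 0 < q) (hq' : 0 < q')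
    (hq'2 : 1 < u → 2 ≤ q') (p p' : ℤ)
    (hne : (p : ℝ) / q ≠ (p' : ℝ) / q')
    (h1 : |(q : ℝ) * ξ - p| ≤ (q : ℝ) ^ (-(u + 1)))
    (h2 : |(q' : ℝ) * ξ - p'| ≤ (q' : ℝ) ^ (-(u + 2))) :
    (q : ℝ) ^ u ≤ (q' : ℝ) ∨ (q' : ℝ) ^ u ≤ (q : ℝ) := by
  by_contra hcon
  push_neg at hcon
  obtain ⟨hlt1, hlt2⟩ := hcon
  have hA0 : (0:ℝ) < q := by exact_mod_cast hq
  have hB0 : (0:ℝ) < q' := by exact_mod_cast hq'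
  have hA1 : (1:ℝ) ≤ q := by exact_mod_cast hq
  have hB1 : (1:ℝ) ≤ q' := by exact_mod_cast hq'
  have hu0 : (0:ℝ) ≤ u := by linarith
  -- q ≥ 2
  have hA2 : (2:ℝ) ≤ q := by
    by_contra h
    push_neg at h
    have hqle : (q:ℝ) ≤ 1 := by
      have : q < 2 := by exact_mod_cast h
      have : q = 1 := by omega
      simp [this]
    have : (q:ℝ) ^ u ≤ 1 := Real.rpow_le_one (le_of_lt hA0) hqle hu0
    linarith
  have hB2 : (2:ℝ) ≤ q' := by
    by_contra h
    push_neg at h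
    have hqle : (q':ℝ) ≤ 1 := by
      have : q' < 2 := by exact_mod_cast h
      have : q' = 1 := by omega
      simp [this]
    have : (q':ℝ) ^ u ≤ 1 := Real.rpow_le_one (le_of_lt hB0) hqle hu0
    linarith
  -- integer nonvanishing
  have hne' : p' * (q:ℤ) - p * (q':ℤ) ≠ 0 := by
    intro h
    apply hne
    have h' : (p':ℝ) * q = p * q' := by
      have := congrArg (fun z : ℤ => (z : ℝ)) (sub_eq_zero.mp h)
      push_cast at this
      linarith
    field_simp
    linarith
  have hint : (1:ℝ) ≤ |(p':ℝ) * q - p * q'| := by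
    have h1' : 1 ≤ |p' * (q:ℤ) - p * (q':ℤ)| := Int.one_le_abs hne'
    have : ((1:ℤ):ℝ) ≤ (|p' * (q:ℤ) - p * (q':ℤ)| : ℝ) := by exact_mod_cast h1'
    simpa [Int.cast_abs] using this
  -- triangle inequality bound
  have key : |(p':ℝ) * q - p * q'| ≤ (q':ℝ) * |(q:ℝ) * ξ - p| + (q:ℝ) * |(q':ℝ) * ξ - p'| := by
    have hrw : (p':ℝ) * q - p * q' =
        (q':ℝ) * ((q:ℝ) * ξ - p) - (q:ℝ) * ((q':ℝ) * ξ - p') := by ring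
    rw [hrw]
    calc |(q':ℝ) * ((q:ℝ) * ξ - p) - (q:ℝ) * ((q':ℝ) * ξ - p')|
        ≤ |(q':ℝ) * ((q:ℝ) * ξ - p)| + |(q:ℝ) * ((q':ℝ) * ξ - p')| := abs_sub _ _
      _ = (q':ℝ) * |(q:ℝ) * ξ - p| + (q:ℝ) * |(q':ℝ) * ξ - p'| := by
          rw [abs_mul, abs_mul, abs_of_pos hB0, abs_of_pos hA0]
  have step : (1:ℝ) ≤ (q':ℝ) * (q:ℝ) ^ (-(u+1)) + (q:ℝ) * (q':ℝ) ^ (-(u+2)) := by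
    refine le_trans hint (le_trans key ?_)
    gcongr
  -- strict bounds
  have pos1 : (0:ℝ) < (q:ℝ) ^ (-(u+1)) := Real.rpow_pos_of_pos hA0 _
  have pos2 : (0:ℝ) < (q':ℝ) ^ (-(u+2)) := Real.rpow_pos_of_pos hB0 _
  have b1 : (q':ℝ) * (q:ℝ) ^ (-(u+1)) < (q:ℝ) ^ u * (q:ℝ) ^ (-(u+1)) := by
    exact mul_lt_mul_of_pos_right hlt1 pos1
  have b2 : (q:ℝ) * (q':ℝ) ^ (-(u+2)) < (q':ℝ) ^ u * (q':ℝ) ^ (-(u+2)) := by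
    exact mul_lt_mul_of_pos_right hlt2 pos2
  have e1 : (q:ℝ) ^ u * (q:ℝ) ^ (-(u+1)) = (q:ℝ)⁻¹ := by
    rw [← Real.rpow_add hA0]
    norm_num [Real.rpow_neg_one]
  have e2 : (q':ℝ) ^ u * (q':ℝ) ^ (-(u+2)) = ((q':ℝ) ^ (2:ℕ))⁻¹ := by
    rw [← Real.rpow_add hB0]
    have : u + -(u + 2) = (-2 : ℝ) := by ring
    rw [this]
    rw [show (-2:ℝ) = -(2:ℕ) by norm_num, Real.rpow_neg (le_of_lt hB0), Real.rpow_natCast]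
  have c1 : (q:ℝ)⁻¹ ≤ 1/2 := by
    rw [show (1:ℝ)/2 = (2:ℝ)⁻¹ by norm_num]
    exact inv_anti₀ (by norm_num) hA2
  have c2 : ((q':ℝ) ^ (2:ℕ))⁻¹ ≤ 1/4 := by
    have h4 : (4:ℝ) ≤ (q':ℝ) ^ (2:ℕ) := by nlinarith
    have hp : (0:ℝ) < (q':ℝ) ^ (2:ℕ) := by positivity
    rw [show (1:ℝ)/4 = (4:ℝ)⁻¹ by norm_num]
    exact inv_anti₀ (by norm_num) h4
  rw [e1] at b1
  rw [e2] at b2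
  linarith
end

section
/- Let q = (q_n) be an increasing sequence of positive integers and u = (u_n) an increasing sequence of positive reals with u_{n+1} ≥ u_n + 1. If limsup_{n→∞} (log q_{n+1})/(u_n log q_n) > 0, then S_{q,u} has the cardinality of the continuum. -/
open Filter

def digB (t : ℕ → Bool) (j : ℕ) : ℝ := if t j then 2 else 1

lemma digB_pos (t j) : 0 < digB t j := by unfold digB; split <;> norm_num
lemma digB_le (t j) : digB t j ≤ 2 := by unfold digB; split <;> norm_num
lemma digB_ge (t j) : 1 ≤ digB t j := by unfold digB; split <;> norm_num

lemma dterm_nonneg (t : ℕ → Bool) (e : ℕ → ℕ) (j : ℕ) : 0 ≤ digB t j / 2 ^ (e j) :=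
  div_nonneg (digB_pos t j).le (by positivity)

lemma e_strictMono {e : ℕ → ℕ} (he : ∀ k, e k + (k + 4) ≤ e (k + 1)) : StrictMono e := by
  apply strictMono_nat_of_lt_succ
  intro k
  have := he k
  omega

lemma e_add_le {e : ℕ → ℕ} (he : ∀ k, e k + (k + 4) ≤ e (k + 1)) :
    ∀ a b, e a + b ≤ e (a + b) := by
  intro a b
  induction b with
  | zero => simp
  | succ b ih =>
    have h2 := he (a + b)
    have h3 : a + (b + 1) = (a + b) + 1 := by omega
    rw [h3]
    omega

noncomputable def xiF (e : ℕ → ℕ) (t : ℕ → Bool) : ℝ := ∑' j, digB t j / 2 ^ (e j)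

noncomputable def tailF (e : ℕ → ℕ) (t : ℕ → Bool) (k : ℕ) : ℝ :=
  ∑' j, digB t (j + k) / 2 ^ (e (j + k))

lemma term_le {e : ℕ → ℕ} (he : ∀ k, e k + (k + 4) ≤ e (k + 1)) (t : ℕ → Bool) (k j : ℕ) :
    digB t (j + k) / 2 ^ (e (j + k)) ≤ (2 / 2 ^ (e k)) * (1/2) ^ j := by
  have h1 : (e k + j : ℕ) ≤ e (j + k) := by
    have := e_add_le he k j
    rwa [Nat.add_comm k j] at this
  have h2 : (2:ℝ) ^ (e k + j) ≤ 2 ^ (e (j + k)) := pow_le_pow_right₀ (by norm_num) h1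
  have h3 : digB t (j + k) / 2 ^ (e (j + k)) ≤ 2 / 2 ^ (e k + j) :=
    div_le_div₀ (by norm_num) (digB_le t _) (by positivity) h2
  refine h3.trans (le_of_eq ?_)
  rw [pow_add]
  field_simp
  rw [← mul_pow]; norm_num

lemma summable_shift {e : ℕ → ℕ} (he : ∀ k, e k + (k + 4) ≤ e (k + 1)) (t : ℕ → Bool) (k : ℕ) :
    Summable (fun j => digB t (j + k) / 2 ^ (e (j + k))) :=
  Summable.of_nonneg_of_le (fun j => dterm_nonneg t e _) (term_le he t k)
    ((summable_geometric_two).mul_left _)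

lemma xiF_summable {e : ℕ → ℕ} (he : ∀ k, e k + (k + 4) ≤ e (k + 1)) (t : ℕ → Bool) :
    Summable (fun j => digB t j / 2 ^ (e j)) := by
  simpa using summable_shift he t 0

lemma tailF_lb {e : ℕ → ℕ} (he : ∀ k, e k + (k + 4) ≤ e (k + 1)) (t : ℕ → Bool) (k : ℕ) :
    1 / 2 ^ (e k) ≤ tailF e t k := by
  have h := Summable.le_tsum (summable_shift he t k) 0 (fun j _ => dterm_nonneg t e _)
  simp only [Nat.zero_add] at h
  refine le_trans ?_ h
  exact div_le_div_of_nonneg_right (digB_ge t k) (by positivity) |>.trans_eq rfl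

lemma tailF_ub {e : ℕ → ℕ} (he : ∀ k, e k + (k + 4) ≤ e (k + 1)) (t : ℕ → Bool) (k : ℕ) :
    tailF e t k ≤ 4 / 2 ^ (e k) := by
  have hsum2 : Summable (fun j : ℕ => (2 / 2 ^ (e k) : ℝ) * (1/2) ^ j) :=
    (summable_geometric_two).mul_left _
  have h := Summable.tsum_le_tsum (term_le he t k) (summable_shift he t k) hsum2
  refine h.trans ?_
  rw [tsum_mul_left, tsum_geometric_two, div_mul_eq_mul_div]
  norm_num

lemma tailF_pos {e : ℕ → ℕ} (he : ∀ k, e k + (k + 4) ≤ e (k + 1)) (t : ℕ → Bool) (k : ℕ) :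
    0 < tailF e t k :=
  lt_of_lt_of_le (by positivity) (tailF_lb he t k)

def AF (e : ℕ → ℕ) (t : ℕ → Bool) (k : ℕ) : ℕ :=
  ∑ j ∈ Finset.range (k+1), (if t j then 2 else 1) * 2 ^ (e k - e j)

lemma mul_split {e : ℕ → ℕ} (he : ∀ k, e k + (k + 4) ≤ e (k + 1)) (t : ℕ → Bool) (k : ℕ) :
    (2:ℝ) ^ (e k) * xiF e t = (AF e t k : ℝ) + 2 ^ (e k) * tailF e t (k+1) := by
  have hs := Summable.sum_add_tsum_nat_add (f := fun j => digB t j / 2 ^ (e j)) (k+1) (xiF_summable he t)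
  have hxi : xiF e t = (∑ j ∈ Finset.range (k+1), digB t j / 2 ^ (e j)) + tailF e t (k+1) := by
    rw [xiF, ← hs]; rfl
  rw [hxi, mul_add]
  congr 1
  rw [Finset.mul_sum]
  rw [AF]
  push_cast
  apply Finset.sum_congr rfl
  intro j hj
  have hjk : j ≤ k := by
    simp only [Finset.mem_range] at hj; omega
  have hej : e j ≤ e k := (e_strictMono he).monotone hjk
  have hpow : (2:ℝ) ^ (e k) = 2 ^ (e k - e j) * 2 ^ (e j) := by
    rw [← pow_add, Nat.sub_add_cancel hej]
  rw [hpow]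
  have h2 : (2:ℝ) ^ (e j) ≠ 0 := by positivity
  rw [digB]
  field_simp

lemma r_ub1 {e : ℕ → ℕ} (he : ∀ k, e k + (k + 4) ≤ e (k + 1)) (t : ℕ → Bool) (k : ℕ) :
    (2:ℝ) ^ (e k) * tailF e t (k+1) ≤ 4 * 2 ^ (e k) / 2 ^ (e (k+1)) := by
  have h := tailF_ub he t (k+1)
  have h2 : (0:ℝ) < 2 ^ (e k) := by positivity
  calc (2:ℝ) ^ (e k) * tailF e t (k+1) ≤ 2 ^ (e k) * (4 / 2 ^ (e (k+1))) := by
        exact mul_le_mul_of_nonneg_left h h2.le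
    _ = 4 * 2 ^ (e k) / 2 ^ (e (k+1)) := by ring

lemma r_ub2 {e : ℕ → ℕ} (he : ∀ k, e k + (k + 4) ≤ e (k + 1)) (t : ℕ → Bool) (k : ℕ) :
    (2:ℝ) ^ (e k) * tailF e t (k+1) ≤ (1/2) ^ (k+2) := by
  refine (r_ub1 he t k).trans ?_
  have hgap : e k + (k + 4) ≤ e (k+1) := he k
  have h1 : (2:ℝ) ^ (e k + (k+4)) ≤ 2 ^ (e (k+1)) := pow_le_pow_right₀ (by norm_num) hgap
  have h2 : (0:ℝ) < 2 ^ (e (k+1)) := by positivity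
  have h3 : (0:ℝ) < 2 ^ (e k + (k+4)) := by positivity
  have h4 : 4 * (2:ℝ) ^ (e k) / 2 ^ (e (k+1)) ≤ 4 * 2 ^ (e k) / 2 ^ (e k + (k+4)) := by
    apply div_le_div_of_nonneg_left (by positivity) h3 h1
  refine h4.trans (le_of_eq ?_)
  rw [pow_add, div_pow, one_pow]
  field_simp
  ring

lemma r_pos {e : ℕ → ℕ} (he : ∀ k, e k + (k + 4) ≤ e (k + 1)) (t : ℕ → Bool) (k : ℕ) :
    0 < (2:ℝ) ^ (e k) * tailF e t (k+1) :=
  mul_pos (by positivity) (tailF_pos he t (k+1))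

lemma dist_eq {e : ℕ → ℕ} (he : ∀ k, e k + (k + 4) ≤ e (k + 1)) (t : ℕ → Bool) (k : ℕ) :
    distNearestInt ((2:ℝ) ^ (e k) * xiF e t) = 2 ^ (e k) * tailF e t (k+1) := by
  set r := (2:ℝ) ^ (e k) * tailF e t (k+1) with hr
  have hsplit := mul_split he t k
  have hrpos := r_pos he t k
  have hrub : r ≤ (1/2)^(k+2) := r_ub2 he t k
  have hrhalf : r < 1/2 := by
    refine lt_of_le_of_lt hrub ?_
    have : ((1:ℝ)/2)^(k+2) ≤ (1/2)^2 := pow_le_pow_of_le_one (by norm_num) (by norm_num) (by omega)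
    nlinarith
  have hround : round ((2:ℝ) ^ (e k) * xiF e t) = (AF e t k : ℤ) := by
    rw [hsplit]
    have : ((AF e t k : ℕ) : ℝ) = ((AF e t k : ℤ) : ℝ) := by push_cast; ring
    rw [this, round_intCast_add]
    have : round r = 0 := by
      rw [round_eq_zero_iff]
      constructor
      · linarith
      · exact hrhalf
    rw [this, add_zero]
  rw [distNearestInt, hround, hsplit]
  push_cast
  rw [add_sub_cancel_left]
  exact abs_of_pos hrpos

lemma xiF_irrational {e : ℕ → ℕ} (he : ∀ k, e k + (k + 4) ≤ e (k + 1)) (t : ℕ → Bool) :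
    Irrational (xiF e t) := by
  rintro ⟨v, hv⟩
  set k := v.den with hk
  have hden : 0 < v.den := v.pos
  set A := AF e t k with hA
  set r := (2:ℝ) ^ (e k) * tailF e t (k+1) with hr
  have hsplit := mul_split he t k
  have hrpos := r_pos he t k
  have hrub : r ≤ (1/2)^(k+2) := r_ub2 he t k
  -- N = 2^{e k} v.num - A v.den is a positive integer, so r ≥ 1/v.den
  set N : ℤ := 2 ^ (e k) * v.num - A * v.den with hN
  have hvr : ((v.num : ℝ)) = (v : ℝ) * v.den := by
    rw [Rat.cast_def]
    field_simp
  have hNr : (N : ℝ) = v.den * r := by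
    rw [hN]
    push_cast
    rw [hvr, hv]
    have : (2:ℝ) ^ (e k) * (xiF e t * v.den) = (2 ^ (e k) * xiF e t) * v.den := by ring
    rw [this, hsplit]
    ring
  have hNpos : 0 < N := by
    have : (0:ℝ) < (N : ℝ) := by
      rw [hNr]
      positivity
    exact_mod_cast this
  have hr_ge : 1 / (v.den : ℝ) ≤ r := by
    have h1 : (1:ℝ) ≤ (N:ℝ) := by exact_mod_cast hNpos
    rw [hNr] at h1
    rw [div_le_iff₀ (by positivity)]
    linarith [h1]
  -- but r < 1 / v.den since v.den < 2^(k+2)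
  have hlt : (v.den : ℝ) < 2 ^ (k+2) := by
    have : v.den < 2 ^ (k+2) := by
      calc v.den < 2 ^ v.den := Nat.lt_two_pow_self
        _ ≤ 2 ^ (k + 2) := Nat.pow_le_pow_right (by norm_num) (by omega)
    exact_mod_cast this
  have hcon : r < 1 / (v.den : ℝ) := by
    refine lt_of_le_of_lt hrub ?_
    rw [div_pow, one_pow, div_lt_div_iff₀ (by positivity) (by positivity)]
    linarith
  linarith

lemma xiF_lt {e : ℕ → ℕ} (he : ∀ k, e k + (k + 4) ≤ e (k + 1)) (t t' : ℕ → Bool) (k : ℕ)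
    (hagree : ∀ j < k, t j = t' j) (ht : t k = true) (ht' : t' k = false) :
    xiF e t' < xiF e t := by
  have hsplit : ∀ s : ℕ → Bool, xiF e s =
      (∑ j ∈ Finset.range k, digB s j / 2 ^ (e j)) + tailF e s k := by
    intro s
    rw [xiF, ← Summable.sum_add_tsum_nat_add k (xiF_summable he s)]
    rfl
  have hsums : (∑ j ∈ Finset.range k, digB t j / 2 ^ (e j)) =
      (∑ j ∈ Finset.range k, digB t' j / 2 ^ (e j)) := by
    apply Finset.sum_congr rfl
    intro j hj
    rw [Finset.mem_range] at hj
    rw [digB, digB, hagree j hj]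
  -- tailF s k = digB s k / 2^(e k) + tailF s (k+1)
  have htail : ∀ s : ℕ → Bool, tailF e s k = digB s k / 2 ^ (e k) + tailF e s (k+1) := by
    intro s
    rw [tailF, Summable.tsum_eq_zero_add (summable_shift he s k)]
    congr 1
    · simp
    · rw [tailF]
      apply tsum_congr
      intro j
      rw [show j + 1 + k = j + (k + 1) from by omega]
  have h1 : digB t k = 2 := by rw [digB, ht]; simp
  have h2 : digB t' k = 1 := by rw [digB, ht']; simp
  have htub : tailF e t' (k+1) ≤ 4 / 2 ^ (e (k+1)) := tailF_ub he t' (k+1)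
  have htlb : 0 < tailF e t (k+1) := tailF_pos he t (k+1)
  have hgap : (2:ℝ) ^ (e k + (k+4)) ≤ 2 ^ (e (k+1)) := pow_le_pow_right₀ (by norm_num) (he k)
  have hk4 : (2:ℝ) ^ (e k) * 2^4 ≤ 2 ^ (e (k+1)) := by
    have h5 : (2:ℝ) ^ (e k) * 2 ^ 4 ≤ 2 ^ (e k) * 2 ^ (k + 4) :=
      mul_le_mul_of_nonneg_left (pow_le_pow_right₀ (by norm_num) (by omega)) (by positivity)
    calc (2:ℝ)^(e k) * 2^4 ≤ 2^(e k) * 2^(k+4) := h5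
      _ = 2 ^ (e k + (k+4)) := (pow_add 2 (e k) (k+4)).symm
      _ ≤ 2 ^ (e (k+1)) := hgap
  have hfrac : 4 / (2:ℝ) ^ (e (k+1)) ≤ (1 / 2 ^ (e k)) * (1/4) := by
    rw [div_le_iff₀ (by positivity)]
    have h0 : (0:ℝ) < 2 ^ (e k) := by positivity
    rw [div_mul_eq_mul_div, one_mul, div_mul_eq_mul_div, le_div_iff₀ h0]
    nlinarith
  rw [hsplit t, hsplit t', hsums, htail t, htail t', h1, h2]
  have h0 : (0:ℝ) < 2 ^ (e k) := by positivity
  have : tailF e t' (k+1) ≤ (1 / 2 ^ (e k)) * (1/4) := le_trans htub hfrac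
  have hd : (1:ℝ) / 2 ^ (e k) ≤ 2 / 2 ^ (e k) - 1 / 2 ^ (e k) := by
    rw [div_sub_div_same]
    norm_num
  linarith [this, htlb, div_pos (by norm_num : (0:ℝ) < 1) h0]

lemma xiF_injective {e : ℕ → ℕ} (he : ∀ k, e k + (k + 4) ≤ e (k + 1)) :
    Function.Injective (xiF e) := by
  intro t t' hxi
  by_contra hne
  have hex : ∃ j, t j ≠ t' j := Function.ne_iff.mp hne
  set k := Nat.find hex with hk
  have hspec : t k ≠ t' k := Nat.find_spec hex
  have hagree : ∀ j < k, t j = t' j := by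
    intro j hj
    have := Nat.find_min hex hj
    simpa using this
  have hagree' : ∀ j < k, t' j = t j := fun j hj => (hagree j hj).symm
  cases htk : t k <;> cases htk' : t' k
  · rw [htk, htk'] at hspec; exact hspec rfl
  · have := xiF_lt he t' t k hagree' htk' htk
    rw [hxi] at this; exact lt_irrefl _ this
  · have := xiF_lt he t t' k hagree htk htk'
    rw [hxi] at this; exact lt_irrefl _ this
  · rw [htk, htk'] at hspec; exact hspec rfl

lemma exists_freq (f : ℕ → ℝ) (h : 0 < limsup f atTop) :
    ∃ c > 0, ∃ᶠ n in atTop, c ≤ f n := by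
  by_contra hcon
  push_neg at hcon
  set L := limsup f atTop with hL
  have hev : ∀ᶠ n in atTop, f n ≤ L / 2 := by
    have := hcon (L/2) (by linarith)
    filter_upwards [this] with n hn
    linarith
  have hLS : L = sInf {a | ∀ᶠ n in atTop, f n ≤ a} := limsup_eq
  have hmem : L / 2 ∈ {a | ∀ᶠ n in atTop, f n ≤ a} := hev
  by_cases hbdd : BddBelow {a | ∀ᶠ n in atTop, f n ≤ a}
  · have := csInf_le hbdd hmem
    rw [← hLS] at this
    linarith
  · have := Real.sInf_of_not_bddBelow hbdd
    rw [← hLS] at this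
    linarith

open Filter in
theorem LSet_continuum_of_limsup_pos' (q : ℕ → ℕ) (u : ℕ → ℝ)
    (hq : StrictMono q) (hqpos : ∀ n, 0 < q n)
    (hupos : ∀ n, 0 < u n) (hustep : ∀ n, u n + 1 ≤ u (n + 1))
    (hlim : 0 < Filter.limsup (fun n => Real.log (q (n + 1)) / (u n * Real.log (q n)))
      Filter.atTop) :
    ∃ e : ℕ → ℕ, (∀ k, e k + (k + 4) ≤ e (k + 1)) ∧
      ∀ t : ℕ → Bool, Irrational (xiF e t) ∧ ∃ κ₁ κ₂ : ℝ, 0 < κ₁ ∧ 0 < κ₂ ∧ ∃ b : ℕ → ℕ,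
        ∀ᶠ n in Filter.atTop, 1 ≤ b n ∧ (b n : ℝ) ≤ (q n : ℝ) ^ κ₁ ∧
          distNearestInt ((b n : ℝ) * xiF e t) ≤ (q n : ℝ) ^ (-(κ₂ * u n)) := by
  have hqmono : Monotone q := hq.monotone
  have hq2 : ∀ m, 1 ≤ m → 2 ≤ q m := by
    intro m hm
    have h1 := hq (show 0 < m from hm)
    have h2 := hqpos 0
    omega
  have humono : Monotone u := monotone_nat_of_le_succ (fun n => by linarith [hustep n])
  have huge : ∀ m : ℕ, (m:ℝ) ≤ u m := by
    intro m
    induction m with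
    | zero => simpa using (hupos 0).le
    | succ m ih => push_cast; linarith [hustep m]
  obtain ⟨c, hc, hfreq⟩ := exists_freq _ hlim
  have hPfreq : ∀ N, ∃ m, N + 1 ≤ m ∧ ((q m : ℝ) ^ (c * u m) ≤ (q (m+1) : ℝ)) := by
    intro N
    obtain ⟨m, hm, hcm⟩ := (frequently_atTop.mp hfreq) (N+1)
    refine ⟨m, hm, ?_⟩
    have h2 : (2:ℝ) ≤ (q m : ℝ) := by exact_mod_cast hq2 m (by omega)
    have hlg : 0 < Real.log (q m) := Real.log_pos (by linarith)
    have hden : 0 < u m * Real.log (q m) := mul_pos (hupos m) hlg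
    have hcm' : c * (u m * Real.log (q m)) ≤ Real.log (q (m+1)) := by
      have := (le_div_iff₀ hden).mp hcm
      linarith
    have hx : (0:ℝ) < (q m : ℝ) ^ (c * u m) :=
      Real.rpow_pos_of_pos (by exact_mod_cast hqpos m) _
    have hy : (0:ℝ) < (q (m+1) : ℝ) := by exact_mod_cast hqpos (m+1)
    rw [← Real.log_le_log_iff hx hy, Real.log_rpow (by exact_mod_cast hqpos m)]
    calc (c * u m) * Real.log (q m) = c * (u m * Real.log (q m)) := by ring
      _ ≤ Real.log (q (m+1)) := hcm'
  choose g hgN hgP using hPfreq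
  classical
  let M : ℕ → ℕ → ℕ := fun k m =>
    max m (Nat.ceil ((2/c) * Real.logb 2 ((2:ℝ)^(k+5) * 8 * (q (m+1) : ℝ))))
  let nseq : ℕ → ℕ := fun k => Nat.rec (g 1) (fun k' nk => g (M k' nk)) k
  have hnS : ∀ k, nseq (k+1) = g (M k (nseq k)) := fun k => rfl
  have hn1 : ∀ k, 1 ≤ nseq k := by
    intro k
    cases k with
    | zero => show 1 ≤ g 1; have := hgN 1; omega
    | succ k => rw [hnS]; have := hgN (M k (nseq k)); omega
  have hnstep : ∀ k, nseq k + 1 ≤ nseq (k+1) := by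
    intro k
    rw [hnS]
    have h1 := hgN (M k (nseq k))
    have h2 : nseq k ≤ M k (nseq k) := le_max_left _ _
    omega
  have hkle : ∀ k, k ≤ nseq k := by
    intro k
    induction k with
    | zero => omega
    | succ k ih => have := hnstep k; omega
  have hnP : ∀ k, (q (nseq k) : ℝ) ^ (c * u (nseq k)) ≤ (q (nseq k + 1) : ℝ) := by
    intro k
    cases k with
    | zero => exact hgP 1
    | succ k => exact hgP (M k (nseq k))
  have hbig : ∀ k, (2:ℝ)^(k+5) * 8 * (q (nseq k + 1):ℝ) ≤ (2:ℝ) ^ ((c/2) * u (nseq (k+1))) := by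
    intro k
    set R := (2:ℝ)^(k+5) * 8 * (q (nseq k + 1):ℝ) with hR
    have hqp : (0:ℝ) < (q (nseq k + 1):ℝ) := by exact_mod_cast hqpos _
    have hRpos : 0 < R := by positivity
    have hceil : ((2/c) * Real.logb 2 R : ℝ) ≤ (M k (nseq k) : ℝ) := by
      have h1 := Nat.le_ceil ((2/c) * Real.logb 2 R)
      have h2 : ((Nat.ceil ((2/c) * Real.logb 2 R) : ℕ) : ℝ) ≤ (M k (nseq k) : ℝ) := by
        exact_mod_cast le_max_right _ _
      linarith
    have hnk1 : (M k (nseq k) : ℝ) ≤ (nseq (k+1) : ℝ) := by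
      rw [hnS]
      exact_mod_cast le_trans (Nat.le_succ _) (hgN (M k (nseq k)))
    have hu' : (2/c) * Real.logb 2 R ≤ u (nseq (k+1)) :=
      le_trans hceil (le_trans hnk1 (huge _))
    have hlogb : Real.logb 2 R ≤ (c/2) * u (nseq (k+1)) := by
      have h3 := mul_le_mul_of_nonneg_left hu' (le_of_lt (half_pos hc))
      have h4 : (c/2) * ((2/c) * Real.logb 2 R) = Real.logb 2 R := by
        field_simp
      linarith
    calc R = (2:ℝ) ^ (Real.logb 2 R) := (Real.rpow_logb (by norm_num) (by norm_num) hRpos).symm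
      _ ≤ (2:ℝ) ^ ((c/2) * u (nseq (k+1))) :=
        Real.rpow_le_rpow_of_exponent_le (by norm_num) hlogb
  let eE : ℕ → ℕ := fun k => Nat.clog 2 (q (nseq k + 1))
  have he1 : ∀ k, (q (nseq k + 1):ℝ) ≤ 2 ^ (eE k) := by
    intro k
    exact_mod_cast Nat.le_pow_clog one_lt_two _
  have he2 : ∀ k, (2:ℝ) ^ (eE k) ≤ 2 * (q (nseq k + 1):ℝ) := by
    intro k
    have : (2:ℕ) ^ (eE k) ≤ 2 * q (nseq k + 1) := by
      by_cases h0 : eE k = 0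
      · rw [h0]; have := hqpos (nseq k + 1); omega
      · have hq2' : 1 < q (nseq k + 1) := hq2 _ (by omega)
        have hpred := Nat.pow_pred_clog_lt_self (b:=2) one_lt_two hq2'
        have heq : (2:ℕ) ^ (eE k) = 2 * 2 ^ (eE k - 1) := by
          rw [← pow_succ']
          congr 1
          have : (eE k) = Nat.clog 2 (q (nseq k + 1)) := rfl
          omega
        have hpred' : (2:ℕ) ^ (eE k - 1) < q (nseq k + 1) := by
          have : Nat.pred (Nat.clog 2 (q (nseq k + 1))) = eE k - 1 := rfl
          rwa [this] at hpred
        omega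
    exact_mod_cast this
  have hQ2 : ∀ k, (2:ℝ) ≤ (q (nseq k + 1):ℝ) := by
    intro k
    exact_mod_cast hq2 _ (by omega)
  have hQ2' : ∀ k, (2:ℝ) ≤ (q (nseq k):ℝ) := by
    intro k
    exact_mod_cast hq2 _ (hn1 k)
  have hsq : ∀ k, (q (nseq (k+1)) : ℝ) ^ (c * u (nseq (k+1))) =
      ((q (nseq (k+1)) : ℝ) ^ ((c/2) * u (nseq (k+1)))) *
      ((q (nseq (k+1)) : ℝ) ^ ((c/2) * u (nseq (k+1)))) := by
    intro k
    rw [← Real.rpow_add (by exact_mod_cast hqpos _)]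
    congr 1
    ring
  have hrpow2 : ∀ k, (2:ℝ) ^ ((c/2) * u (nseq (k+1))) ≤
      (q (nseq (k+1)) : ℝ) ^ ((c/2) * u (nseq (k+1))) := by
    intro k
    apply Real.rpow_le_rpow (by norm_num) (hQ2' (k+1))
    exact mul_nonneg (by linarith) (hupos _).le
  have heg : ∀ k, eE k + (k + 4) ≤ eE (k + 1) := by
    intro k
    have h1 : (q (nseq (k+1) + 1):ℝ) ≤ 2 ^ (eE (k+1)) := he1 (k+1)
    have h2 := hnP (k+1)
    have h5 := hbig k
    set R := (2:ℝ)^(k+5) * 8 * (q (nseq k + 1):ℝ) with hR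
    have hQ := hQ2 k
    have he2k := he2 k
    have hx1 : (1:ℝ) ≤ 2^(k+4) := one_le_pow₀ (by norm_num)
    have hx2 : (2:ℝ)^(k+5) = 2 * 2^(k+4) := by rw [pow_succ]; ring
    have hreal : (2:ℝ) ^ (eE k + (k+4)) ≤ 2 ^ (eE (k+1)) := by
      have hRR : (2:ℝ) ^ (eE k + (k+4)) ≤ R * R := by
        set Q := (q (nseq k + 1):ℝ) with hQdef
        set x := (2:ℝ)^(k+4) with hxdef
        have hxpos : (0:ℝ) < x := by positivity
        have hQpos : (0:ℝ) < Q := by linarith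
        have hRR2 : R * R = 256 * x^2 * Q^2 := by
          rw [hR, hx2]; ring
        rw [pow_add, hRR2]
        have h128 : (1:ℝ) ≤ 128 * x * Q := by nlinarith
        have t1 : 2*Q*x ≤ 256*x^2*Q^2 := by nlinarith [mul_pos (mul_pos hQpos hxpos) hxpos]
        have t2 : (2:ℝ)^(eE k) * x ≤ 2*Q*x := by nlinarith
        linarith
      have hchain : R * R ≤ 2 ^ (eE (k+1)) := by
        have s1 : R * R ≤ ((2:ℝ) ^ ((c/2) * u (nseq (k+1)))) * ((2:ℝ) ^ ((c/2) * u (nseq (k+1)))) := by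
          have hRpos : (0:ℝ) ≤ R := by positivity
          exact mul_le_mul h5 h5 hRpos (by positivity)
        have s2 : ((2:ℝ) ^ ((c/2) * u (nseq (k+1)))) * ((2:ℝ) ^ ((c/2) * u (nseq (k+1)))) ≤
            ((q (nseq (k+1)) : ℝ) ^ ((c/2) * u (nseq (k+1)))) *
            ((q (nseq (k+1)) : ℝ) ^ ((c/2) * u (nseq (k+1)))) := by
          have := hrpow2 k
          have hp : (0:ℝ) ≤ (2:ℝ) ^ ((c/2) * u (nseq (k+1))) := by positivity
          exact mul_le_mul this this hp (le_trans hp this)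
        rw [← hsq k] at s2
        linarith
      linarith
    have := (pow_le_pow_iff_right₀ (show (1:ℝ) < 2 by norm_num)).mp hreal
    omega
  have hmain : ∀ k, ∀ n', nseq k + 1 ≤ n' → n' ≤ nseq (k+1) →
      4 * (2:ℝ)^(eE k) * ((q n':ℝ) ^ ((c/2) * u n')) ≤ 2 ^ (eE (k+1)) := by
    intro k n' hn'1 hn'2
    have hqn'pos : (0:ℝ) < (q n':ℝ) := by exact_mod_cast hqpos n'
    have a1 : ((q n':ℝ) ^ ((c/2) * u n')) ≤
        (q (nseq (k+1)) : ℝ) ^ ((c/2) * u (nseq (k+1))) := by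
      have s1 : ((q n':ℝ) ^ ((c/2) * u n')) ≤ (q (nseq (k+1)) : ℝ) ^ ((c/2) * u n') := by
        apply Real.rpow_le_rpow hqn'pos.le
        · exact_mod_cast hqmono hn'2
        · have := (hupos n').le
          positivity
      refine s1.trans ?_
      apply Real.rpow_le_rpow_of_exponent_le
      · linarith [hQ2' (k+1)]
      · have := humono hn'2
        nlinarith [hc]
    have a2 : 4 * (2:ℝ)^(eE k) ≤ (q (nseq (k+1)) : ℝ) ^ ((c/2) * u (nseq (k+1))) := by
      have b1 : 4 * (2:ℝ)^(eE k) ≤ 8 * (q (nseq k + 1):ℝ) := by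
        have := he2 k
        linarith
      have b2 : 8 * (q (nseq k + 1):ℝ) ≤ (2:ℝ)^(k+5) * 8 * (q (nseq k + 1):ℝ) := by
        have h1 : (1:ℝ) ≤ 2^(k+5) := one_le_pow₀ (by norm_num)
        have hqp : (0:ℝ) < (q (nseq k + 1):ℝ) := by exact_mod_cast hqpos _
        nlinarith
      have b3 := hbig k
      have b4 := hrpow2 k
      linarith
    have hfin : (4 * (2:ℝ)^(eE k)) * ((q n':ℝ) ^ ((c/2) * u n')) ≤
        ((q (nseq (k+1)) : ℝ) ^ ((c/2) * u (nseq (k+1)))) *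
        ((q (nseq (k+1)) : ℝ) ^ ((c/2) * u (nseq (k+1)))) := by
      apply mul_le_mul a2 a1 (by positivity)
      positivity
    rw [← hsq k] at hfin
    have hlast : (q (nseq (k+1)) : ℝ) ^ (c * u (nseq (k+1))) ≤ 2 ^ (eE (k+1)) :=
      le_trans (hnP (k+1)) (he1 (k+1))
    linarith
  -- conclusion
  refine ⟨eE, heg, ?_⟩
  intro t
  refine ⟨xiF_irrational heg t, 2, c/2, by norm_num, half_pos hc, ?_⟩
  refine ⟨fun n' => 2 ^ (eE (Nat.findGreatest (fun k => nseq k + 1 ≤ n') n')), ?_⟩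
  filter_upwards [eventually_ge_atTop (nseq 0 + 1)] with n' hn'
  set K := Nat.findGreatest (fun k => nseq k + 1 ≤ n') n' with hK
  have hK1 : nseq K + 1 ≤ n' := by
    rw [hK]
    exact Nat.findGreatest_spec (P := fun k => nseq k + 1 ≤ n') (Nat.zero_le n') hn'
  have hK2 : n' ≤ nseq (K + 1) := by
    by_contra hcon
    push_neg at hcon
    have hP1 : nseq (K+1) + 1 ≤ n' := hcon
    have hKn : K + 1 ≤ n' := by
      have := hkle K
      omega
    exact Nat.findGreatest_is_greatest (P := fun k => nseq k + 1 ≤ n')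
      (hK ▸ Nat.lt_succ_self K) hKn hP1
  have hQK : (2:ℝ) ≤ (q (nseq K + 1):ℝ) := hQ2 K
  have hQle : (q (nseq K + 1):ℝ) ≤ (q n':ℝ) := by exact_mod_cast hqmono hK1
  refine ⟨Nat.one_le_two_pow, ?_, ?_⟩
  · have h1 : (2:ℝ)^(eE K) ≤ 2 * (q (nseq K + 1):ℝ) := he2 K
    have hr2 : (q n':ℝ) ^ (2:ℝ) = (q n':ℝ) ^ (2:ℕ) := by
      rw [← Real.rpow_natCast ((q n':ℕ):ℝ) 2]
      norm_num
    rw [hr2]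
    push_cast
    nlinarith [h1, hQK, hQle]
  · have hcast : ((2 ^ (eE K) : ℕ) : ℝ) = (2:ℝ) ^ (eE K) := by push_cast; ring
    rw [hcast, dist_eq heg t K]
    have hrub := r_ub1 heg t K
    have hX : (0:ℝ) < (q n':ℝ) ^ ((c/2) * u n') :=
      Real.rpow_pos_of_pos (by exact_mod_cast hqpos n') _
    have hmain' := hmain K n' hK1 hK2
    have hfinal : 4 * (2:ℝ)^(eE K) / 2 ^ (eE (K+1)) ≤ ((q n':ℝ) ^ ((c/2) * u n'))⁻¹ := by
      rw [← one_div, div_le_div_iff₀ (by positivity) hX]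
      linarith
    rw [show -(c/2 * u n') = -((c/2) * u n') by ring, Real.rpow_neg (by positivity)]
    linarith


/-- If limsup (log q_{n+1})/(u_n log q_n) > 0 then S_{q,u} has the power of continuum. -/
theorem LSet_continuum_of_limsup_pos (q : ℕ → ℕ) (u : ℕ → ℝ)
    (hq : StrictMono q) (hqpos : ∀ n, 0 < q n)
    (hupos : ∀ n, 0 < u n) (hustep : ∀ n, u n + 1 ≤ u (n + 1))
    (hlim : 0 < Filter.limsup (fun n => Real.log (q (n + 1)) / (u n * Real.log (q n)))
      Filter.atTop) :
    Cardinal.mk (LSet q u) = Cardinal.continuum := by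
  obtain ⟨e, heg, hall⟩ := LSet_continuum_of_limsup_pos' q u hq hqpos hupos hustep hlim
  have hmem : ∀ t : ℕ → Bool, xiF e t ∈ LSet q u := by
    intro t
    obtain ⟨hirr, κ₁, κ₂, h1, h2, b, hb⟩ := hall t
    exact ⟨hirr, κ₁, κ₂, h1, h2, b, hb⟩
  apply le_antisymm
  · calc Cardinal.mk (LSet q u) ≤ Cardinal.mk ℝ := Cardinal.mk_set_le _
      _ = Cardinal.continuum := Cardinal.mk_real
  · have hinj : Function.Injective (fun t : ℕ → Bool => (⟨xiF e t, hmem t⟩ : LSet q u)) := by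
      intro t t' h
      exact xiF_injective heg (congrArg Subtype.val h)
    have hbc : Cardinal.mk (ℕ → Bool) = Cardinal.continuum := by
      rw [Cardinal.mk_arrow, Cardinal.mk_bool, Cardinal.mk_nat]
      simp [Cardinal.two_power_aleph0]
    calc Cardinal.continuum = Cardinal.mk (ℕ → Bool) := hbc.symm
      _ ≤ Cardinal.mk (LSet q u) := Cardinal.mk_le_of_injective hinj
end

section
/- For any two Liouville numbers ξ and η, there exists a Liouville number ρ such that both {ξ, ρ} and {η, ρ} are Liouville sets; moreover the set of such ρ has the cardinality of the continuum. -/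
open Filter

lemma distNearestInt_nonneg (x : ℝ) : 0 ≤ distNearestInt x := abs_nonneg _

lemma distNearestInt_pos {x : ℝ} (hx : Irrational x) : 0 < distNearestInt x := by
  unfold distNearestInt
  rw [abs_pos, sub_ne_zero]
  exact hx.ne_int (round x)

lemma exists_good_denom {x : ℝ} (hx : Liouville x) (N n : ℕ) :
    ∃ b : ℕ, N < b ∧ 2 ≤ b ∧ distNearestInt ((b:ℝ) * x) < 1 / (b:ℝ) ^ n := by
  have hirr := hx.irrational
  obtain ⟨δ, hδ0, hδ⟩ : ∃ δ : ℝ, 0 < δ ∧ ∀ c : ℕ, 1 ≤ c → c ≤ N →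
      δ ≤ distNearestInt ((c:ℝ) * x) := by
    rcases Finset.eq_empty_or_nonempty (Finset.Icc 1 N) with he | hne
    · exact ⟨1, one_pos, fun c h1 h2 => absurd (Finset.mem_Icc.mpr ⟨h1, h2⟩) (by simp [he])⟩
    · obtain ⟨c0, hc0, hmin⟩ :=
        Finset.exists_min_image (Finset.Icc 1 N) (fun c => distNearestInt ((c:ℝ) * x)) hne
      refine ⟨_, ?_, fun c h1 h2 => hmin c (Finset.mem_Icc.mpr ⟨h1, h2⟩)⟩
      have hc1 : c0 ≠ 0 := by
        have := (Finset.mem_Icc.mp hc0).1; omega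
      exact distNearestInt_pos (hirr.natCast_mul hc1)
  obtain ⟨M, hM⟩ : ∃ M : ℕ, n ≤ M ∧ (1:ℝ) / 2 ^ M < δ := by
    obtain ⟨M, hM⟩ := pow_unbounded_of_one_lt (1/δ) (by norm_num : (1:ℝ) < 2)
    refine ⟨max n M, le_max_left _ _, ?_⟩
    have h2M : (1:ℝ)/δ < 2 ^ max n M :=
      hM.trans_le (pow_le_pow_right₀ (by norm_num) (le_max_right _ _))
    rw [div_lt_iff₀ (by positivity : (0:ℝ) < 2 ^ max n M)]
    rw [div_lt_iff₀ hδ0] at h2M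
    linarith
  obtain ⟨hnM, hMδ⟩ := hM
  obtain ⟨a, b, hb1, -, hab⟩ := hx (M + 1)
  have hb2 : (2:ℝ) ≤ (b:ℝ) := by exact_mod_cast hb1
  have hb0 : (0:ℝ) < (b:ℝ) := by linarith
  -- multiply through by b
  have key : |(b:ℝ) * x - a| < 1 / (b:ℝ) ^ M := by
    have hb0' : (b:ℝ) ≠ 0 := ne_of_gt hb0
    have h1 : (b:ℝ) * x - a = (b:ℝ) * (x - a/b) := by field_simp
    rw [h1, abs_mul, abs_of_pos hb0]
    calc (b:ℝ) * |x - a/b| < (b:ℝ) * (1 / (b:ℝ) ^ (M+1)) := by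
          exact mul_lt_mul_of_pos_left hab hb0
      _ = 1 / (b:ℝ) ^ M := by
          rw [pow_succ]; field_simp
  set c : ℕ := b.toNat with hc
  have hcb : (c:ℝ) = (b:ℝ) := by
    rw [hc]; exact_mod_cast Int.toNat_of_nonneg (by linarith : (0:ℤ) ≤ b)
  have hc2 : 2 ≤ c := by omega
  have hdc : distNearestInt ((c:ℝ) * x) < 1 / (b:ℝ) ^ M := by
    rw [hcb]
    exact (distNearestInt_le _ a).trans_lt key
  have hNc : N < c := by
    by_contra hcon
    push_neg at hcon
    have := hδ c (by omega) hcon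
    have hlt : (1:ℝ) / (b:ℝ) ^ M ≤ 1 / 2 ^ M := by
      apply div_le_div_of_nonneg_left (by norm_num) (by positivity)
      exact pow_le_pow_left₀ (by norm_num) hb2 M
    linarith [hdc.trans_le hlt]
  refine ⟨c, hNc, hc2, hdc.trans_le ?_⟩
  rw [hcb]
  apply div_le_div_of_nonneg_left (by norm_num) (by positivity)
  exact pow_le_pow_right₀ (by linarith) hnM

noncomputable def gooddenom {x : ℝ} (hx : Liouville x) (N n : ℕ) : ℕ :=
  (exists_good_denom hx N n).choose

lemma gooddenom_spec {x : ℝ} (hx : Liouville x) (N n : ℕ) :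
    N < gooddenom hx N n ∧ 2 ≤ gooddenom hx N n ∧
      distNearestInt ((gooddenom hx N n : ℝ) * x) < 1 / (gooddenom hx N n : ℝ) ^ n :=
  (exists_good_denom hx N n).choose_spec

/-- State: (qₙ for x, qₙ for y, mₙ). -/
noncomputable def lSt {x y : ℝ} (hx : Liouville x) (hy : Liouville y) : ℕ → ℕ × ℕ × ℕ
  | 0 => (gooddenom hx 2 0, gooddenom hy 2 0, 2)
  | n + 1 =>
    let p := lSt hx hy n
    let m := p.2.2 * (p.2.2 * p.1 * p.2.1) ^ (n + 4)
    (gooddenom hx (max p.1 m) (n + 1), gooddenom hy (max p.2.1 m) (n + 1), m)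

section St
variable {x y : ℝ} (hx : Liouville x) (hy : Liouville y)

noncomputable def lQ (n : ℕ) : ℕ := (lSt hx hy n).1
noncomputable def lR (n : ℕ) : ℕ := (lSt hx hy n).2.1
noncomputable def lM (n : ℕ) : ℕ := (lSt hx hy n).2.2

lemma lM_zero : lM hx hy 0 = 2 := rfl

lemma lM_succ (n : ℕ) :
    lM hx hy (n+1) = lM hx hy n * (lM hx hy n * lQ hx hy n * lR hx hy n) ^ (n + 4) := rfl

lemma lQ_succ (n : ℕ) :
    lQ hx hy (n+1) = gooddenom hx (max (lQ hx hy n) (lM hx hy (n+1))) (n+1) := rfl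

lemma lR_succ (n : ℕ) :
    lR hx hy (n+1) = gooddenom hy (max (lR hx hy n) (lM hx hy (n+1))) (n+1) := rfl

lemma lQ_two (n : ℕ) : 2 ≤ lQ hx hy n := by
  cases n with
  | zero => exact (gooddenom_spec hx 2 0).2.1
  | succ n => exact (gooddenom_spec hx _ (n+1)).2.1

lemma lR_two (n : ℕ) : 2 ≤ lR hx hy n := by
  cases n with
  | zero => exact (gooddenom_spec hy 2 0).2.1
  | succ n => exact (gooddenom_spec hy _ (n+1)).2.1

lemma lM_two (n : ℕ) : 2 ≤ lM hx hy n := by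
  induction n with
  | zero => exact le_rfl
  | succ n ih =>
    rw [lM_succ]
    calc 2 ≤ lM hx hy n := ih
      _ ≤ _ := by
        have h1 := ih; have h2 := lQ_two hx hy n; have h3 := lR_two hx hy n
        exact Nat.le_mul_of_pos_right _ (pow_pos
          (Nat.mul_pos (Nat.mul_pos (by omega) (by omega)) (by omega)) _)

lemma lM_le_lQ (n : ℕ) : lM hx hy n ≤ lQ hx hy n := by
  cases n with
  | zero => exact le_of_lt (gooddenom_spec hx 2 0).1
  | succ n =>
    have h := (gooddenom_spec hx (max (lQ hx hy n) (lM hx hy (n+1))) (n+1)).1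
    rw [lQ_succ]
    exact le_of_lt (lt_of_le_of_lt (le_max_right _ _) h)

lemma lM_le_lR (n : ℕ) : lM hx hy n ≤ lR hx hy n := by
  cases n with
  | zero => exact le_of_lt (gooddenom_spec hy 2 0).1
  | succ n =>
    have h := (gooddenom_spec hy (max (lR hx hy n) (lM hx hy (n+1))) (n+1)).1
    rw [lR_succ]
    exact le_of_lt (lt_of_le_of_lt (le_max_right _ _) h)

lemma lQ_mono : StrictMono (lQ hx hy) := by
  apply strictMono_nat_of_lt_succ
  intro n
  have h := (gooddenom_spec hx (max (lQ hx hy n) (lM hx hy (n+1))) (n+1)).1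
  rw [lQ_succ]
  exact lt_of_le_of_lt (le_max_left _ _) h

lemma lR_mono : StrictMono (lR hx hy) := by
  apply strictMono_nat_of_lt_succ
  intro n
  have h := (gooddenom_spec hy (max (lR hx hy n) (lM hx hy (n+1))) (n+1)).1
  rw [lR_succ]
  exact lt_of_le_of_lt (le_max_left _ _) h

lemma lQ_approx (n : ℕ) :
    distNearestInt ((lQ hx hy n : ℝ) * x) < 1 / (lQ hx hy n : ℝ) ^ n := by
  cases n with
  | zero => exact (gooddenom_spec hx 2 0).2.2
  | succ n => exact (gooddenom_spec hx _ (n+1)).2.2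

lemma lR_approx (n : ℕ) :
    distNearestInt ((lR hx hy n : ℝ) * y) < 1 / (lR hx hy n : ℝ) ^ n := by
  cases n with
  | zero => exact (gooddenom_spec hy 2 0).2.2
  | succ n => exact (gooddenom_spec hy _ (n+1)).2.2

lemma lM_big (n : ℕ) : lM hx hy n ^ (n + 4) ≤ lM hx hy (n + 1) := by
  rw [lM_succ]
  calc lM hx hy n ^ (n+4) ≤ (lM hx hy n * lQ hx hy n * lR hx hy n) ^ (n+4) := by
        apply Nat.pow_le_pow_left
        calc lM hx hy n = lM hx hy n * 1 * 1 := by ring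
          _ ≤ _ := by
            apply Nat.mul_le_mul (Nat.mul_le_mul_left _ ?_) ?_
            · exact le_trans (by norm_num) (lQ_two hx hy n)
            · exact le_trans (by norm_num) (lR_two hx hy n)
    _ ≤ _ := Nat.le_mul_of_pos_left _ (by have := lM_two hx hy n; omega)

lemma lM_double (n : ℕ) : 2 * lM hx hy n ≤ lM hx hy (n + 1) := by
  have h := lM_big hx hy n
  have h2 := lM_two hx hy n
  calc 2 * lM hx hy n ≤ lM hx hy n * lM hx hy n := Nat.mul_le_mul_right _ h2
    _ = lM hx hy n ^ 2 := (sq _).symm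
    _ ≤ lM hx hy n ^ (n + 4) := Nat.pow_le_pow_right (by omega) (by omega)
    _ ≤ _ := h

lemma lM_dvd (n : ℕ) : lM hx hy n ∣ lM hx hy (n + 1) := ⟨_, lM_succ hx hy n⟩

lemma lM_dvd_of_le {k n : ℕ} (h : k ≤ n) : lM hx hy k ∣ lM hx hy n := by
  induction n with
  | zero => simp_all
  | succ n ih =>
    rcases Nat.lt_or_ge k (n+1) with h' | h'
    · exact (ih (by omega)).trans (lM_dvd hx hy n)
    · have : k = n + 1 := by omega
      rw [this]

lemma lM_growth (n k : ℕ) : lM hx hy n * 2 ^ k ≤ lM hx hy (n + k) := by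
  induction k with
  | zero => simp
  | succ k ih =>
    have h := lM_double hx hy (n + k)
    calc lM hx hy n * 2 ^ (k+1) = 2 * (lM hx hy n * 2 ^ k) := by ring
      _ ≤ 2 * lM hx hy (n + k) := Nat.mul_le_mul_left _ ih
      _ ≤ lM hx hy (n + k + 1) := h
      _ = lM hx hy (n + (k + 1)) := by ring_nf

end St

section Rho

noncomputable def rterm (M : ℕ → ℕ) (σ : ℕ → Bool) (k : ℕ) : ℝ :=
  (if σ k then 2 else 1) / (M k : ℝ)

noncomputable def rho (M : ℕ → ℕ) (σ : ℕ → Bool) : ℝ := ∑' k, rterm M σ k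

variable {M : ℕ → ℕ} (h2 : ∀ n, 2 ≤ M n) (hd : ∀ n, 2 * M n ≤ M (n+1))
  (hdvd : ∀ k n, k ≤ n → M k ∣ M n) (hbig : ∀ n, (M n) ^ (n+4) ≤ M (n+1))

include h2 hd

lemma growthM (n k : ℕ) : M n * 2 ^ k ≤ M (n + k) := by
  induction k with
  | zero => simp
  | succ k ih =>
    calc M n * 2 ^ (k+1) = 2 * (M n * 2 ^ k) := by ring
      _ ≤ 2 * M (n + k) := Nat.mul_le_mul_left _ ih
      _ ≤ M (n + k + 1) := hd _

lemma Mpos (n : ℕ) : (0:ℝ) < (M n : ℝ) := by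
  have := h2 n; positivity

omit hd in
lemma rterm_pos (σ : ℕ → Bool) (k : ℕ) : 0 < rterm M σ k := by
  unfold rterm
  have h := h2 k
  have : (0:ℝ) < (M k : ℝ) := by positivity
  split <;> positivity

omit hd in
lemma rterm_le (σ : ℕ → Bool) (k : ℕ) : rterm M σ k ≤ 2 / (M k : ℝ) := by
  unfold rterm
  have : (0:ℝ) < (M k : ℝ) := by have := h2 k; positivity
  split
  · exact le_rfl
  · gcongr
    norm_num

lemma rterm_le_geom (σ : ℕ → Bool) (k : ℕ) : rterm M σ k ≤ (1/2 : ℝ) ^ k := by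
  have hg : M 0 * 2 ^ k ≤ M (0 + k) := growthM h2 hd 0 k
  rw [Nat.zero_add] at hg
  have hMk : (2:ℝ) * 2 ^ k ≤ (M k : ℝ) := by
    have h0 := h2 0
    have : 2 * 2 ^ k ≤ M k := le_trans (Nat.mul_le_mul_right _ h0) hg
    exact_mod_cast this
  calc rterm M σ k ≤ 2 / (M k : ℝ) := rterm_le h2 σ k
    _ ≤ 2 / (2 * 2 ^ k) := by
        apply div_le_div_of_nonneg_left (by norm_num) (by positivity) hMk
    _ = (1/2 : ℝ) ^ k := by
        rw [div_pow]
        field_simp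
        simp

lemma rsummable (σ : ℕ → Bool) : Summable (rterm M σ) :=
  Summable.of_nonneg_of_le (fun k => (rterm_pos h2 σ k).le) (rterm_le_geom h2 hd σ)
    summable_geometric_two

noncomputable def rpartial (M : ℕ → ℕ) (σ : ℕ → Bool) (n : ℕ) : ℝ :=
  ∑ k ∈ Finset.range (n+1), rterm M σ k

noncomputable def rtail (M : ℕ → ℕ) (σ : ℕ → Bool) (n : ℕ) : ℝ :=
  ∑' k, rterm M σ (k + (n+1))

lemma rho_split (σ : ℕ → Bool) (n : ℕ) :
    rho M σ = rpartial M σ n + rtail M σ n :=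
  ((rsummable h2 hd σ).sum_add_tsum_nat_add (n+1)).symm

lemma rtail_summable (σ : ℕ → Bool) (n : ℕ) :
    Summable (fun k => rterm M σ (k + (n+1))) :=
  (summable_nat_add_iff (n+1)).mpr (rsummable h2 hd σ)

lemma rtail_pos (σ : ℕ → Bool) (n : ℕ) : 0 < rtail M σ n := by
  apply Summable.tsum_pos (rtail_summable h2 hd σ n) (fun k => (rterm_pos h2 σ _).le) 0
  exact rterm_pos h2 σ _

lemma rtail_le (σ : ℕ → Bool) (n : ℕ) : rtail M σ n ≤ 4 / (M (n+1) : ℝ) := by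
  have hMpos : (0:ℝ) < (M (n+1) : ℝ) := Mpos h2 hd (n+1)
  have hbound : ∀ k : ℕ, rterm M σ (k + (n+1)) ≤ 2 / (M (n+1) : ℝ) * (1/2 : ℝ) ^ k := by
    intro k
    have hg : M (n+1) * 2 ^ k ≤ M ((n+1) + k) := growthM h2 hd (n+1) k
    have hg' : (M (n+1) : ℝ) * 2 ^ k ≤ (M (k + (n+1)) : ℝ) := by
      rw [Nat.add_comm k (n+1)]
      exact_mod_cast hg
    calc rterm M σ (k + (n+1)) ≤ 2 / (M (k + (n+1)) : ℝ) := rterm_le h2 σ _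
      _ ≤ 2 / ((M (n+1) : ℝ) * 2 ^ k) := by
          apply div_le_div_of_nonneg_left (by norm_num) (by positivity) hg'
      _ = 2 / (M (n+1) : ℝ) * (1/2 : ℝ) ^ k := by
          rw [div_pow]
          field_simp
          simp
  calc rtail M σ n ≤ ∑' k, 2 / (M (n+1) : ℝ) * (1/2 : ℝ) ^ k := by
        apply Summable.tsum_le_tsum hbound (rtail_summable h2 hd σ n)
        exact summable_geometric_two.mul_left _
    _ = 2 / (M (n+1) : ℝ) * 2 := by rw [tsum_mul_left, tsum_geometric_two]
    _ = 4 / (M (n+1) : ℝ) := by ring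

include hdvd in
lemma rpartial_int (σ : ℕ → Bool) (n : ℕ) :
    ∃ P : ℤ, (P : ℝ) = (M n : ℝ) * rpartial M σ n := by
  refine ⟨∑ k ∈ Finset.range (n+1), (if σ k then 2 else 1 : ℤ) * (M n / M k : ℕ), ?_⟩
  rw [rpartial, Finset.mul_sum, Int.cast_sum]
  apply Finset.sum_congr rfl
  intro k hk
  have hkn : k ≤ n := by
    have := Finset.mem_range.mp hk; omega
  have hMk0 : (M k : ℝ) ≠ 0 := ne_of_gt (Mpos h2 hd k)
  have hcast : ((M n / M k : ℕ) : ℝ) = (M n : ℝ) / (M k : ℝ) :=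
    Nat.cast_div (hdvd k n hkn) hMk0
  have hdvdZ : ((M k : ℤ)) ∣ ((M n : ℤ)) := Int.natCast_dvd_natCast.mpr (hdvd k n hkn)
  have hcast2 : (((M n : ℤ) / (M k : ℤ) : ℤ) : ℝ) = (M n : ℝ) / (M k : ℝ) := by
    rw [Int.cast_div hdvdZ (by exact_mod_cast hMk0)]
    norm_num
  push_cast [hcast, hcast2, rterm]
  split <;> field_simp <;> ring

include hbig in
lemma M_pow_le (n : ℕ) : 4 * (M n : ℝ) ^ n < (M (n+1) : ℝ) := by
  have h := hbig n
  have h2n := h2 n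
  have hle : (M n : ℝ) ^ (n + 4) ≤ (M (n+1) : ℝ) := by exact_mod_cast h
  have h2' : (2:ℝ) ≤ (M n : ℝ) := by exact_mod_cast h2n
  have hpow : (0:ℝ) < (M n : ℝ) ^ n := by positivity
  calc 4 * (M n : ℝ) ^ n < 16 * (M n : ℝ) ^ n := by linarith
    _ ≤ (M n : ℝ) ^ 4 * (M n : ℝ) ^ n := by
        have h16 : (2:ℝ)^4 ≤ (M n : ℝ)^4 := pow_le_pow_left₀ (by norm_num) h2' 4
        nlinarith
    _ = (M n : ℝ) ^ (n + 4) := by ring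
    _ ≤ (M (n+1) : ℝ) := hle

include hdvd hbig in
lemma rho_liouville (σ : ℕ → Bool) : Liouville (rho M σ) := by
  intro n
  obtain ⟨P, hP⟩ := rpartial_int h2 hd hdvd σ n
  have hMn : (0:ℝ) < (M n : ℝ) := Mpos h2 hd n
  have hMn1 : (0:ℝ) < (M (n+1) : ℝ) := Mpos h2 hd (n+1)
  refine ⟨P, (M n : ℤ), by exact_mod_cast h2 n, ?_, ?_⟩
  · have hsplit := rho_split h2 hd σ n
    have htpos := rtail_pos h2 hd σ n
    have : (P : ℝ) / (M n : ℤ) = rpartial M σ n := by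
      push_cast
      rw [hP]; field_simp
    rw [this, hsplit]
    intro hcon
    nlinarith [hcon]
  · have hsplit := rho_split h2 hd σ n
    have htpos := rtail_pos h2 hd σ n
    have htle := rtail_le h2 hd σ n
    have hPd : (P : ℝ) / ((M n : ℤ) : ℝ) = rpartial M σ n := by
      push_cast
      rw [hP]; field_simp
    rw [hPd, hsplit]
    have : rpartial M σ n + rtail M σ n - rpartial M σ n = rtail M σ n := by ring
    rw [this, abs_of_pos htpos]
    have hkey := M_pow_le h2 hd hbig n
    have hcast : (((M n : ℤ) : ℝ)) ^ n = (M n : ℝ) ^ n := by norm_num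
    rw [hcast]
    calc rtail M σ n ≤ 4 / (M (n+1) : ℝ) := htle
      _ < 1 / (M n : ℝ) ^ n := by
          rw [div_lt_div_iff₀ hMn1 (by positivity)]
          linarith

include hdvd in
lemma rho_dist (σ : ℕ → Bool) (n : ℕ) :
    distNearestInt ((M n : ℝ) * rho M σ) ≤ 4 * (M n : ℝ) / (M (n+1) : ℝ) := by
  obtain ⟨P, hP⟩ := rpartial_int h2 hd hdvd σ n
  have hMn : (0:ℝ) < (M n : ℝ) := Mpos h2 hd n
  have hMn1 : (0:ℝ) < (M (n+1) : ℝ) := Mpos h2 hd (n+1)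
  have hsplit := rho_split h2 hd σ n
  have htpos := rtail_pos h2 hd σ n
  have htle := rtail_le h2 hd σ n
  calc distNearestInt ((M n : ℝ) * rho M σ) ≤ |(M n : ℝ) * rho M σ - P| :=
        distNearestInt_le _ P
    _ = (M n : ℝ) * rtail M σ n := by
        rw [hsplit, hP]
        rw [abs_of_nonneg]
        · ring
        · have : (M n:ℝ) * (rpartial M σ n + rtail M σ n) - (M n:ℝ) * rpartial M σ n
              = (M n:ℝ) * rtail M σ n := by ring
          nlinarith
    _ ≤ (M n : ℝ) * (4 / (M (n+1) : ℝ)) := by nlinarith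
    _ = 4 * (M n : ℝ) / (M (n+1) : ℝ) := by ring

include hbig in
lemma rho_injective : Function.Injective (rho M) := by
  intro σ σ' heq
  by_contra hne
  have hex : ∃ n, σ n ≠ σ' n := by
    by_contra hc
    push_neg at hc
    exact hne (funext hc)
  classical
  set n := Nat.find hex with hn
  have hfind : σ n ≠ σ' n := Nat.find_spec hex
  have hmin : ∀ k < n, σ k = σ' k := fun k hk => by
    have := Nat.find_min hex hk
    tauto
  have hMn : (0:ℝ) < (M n : ℝ) := Mpos h2 hd n
  have hMn1 : (0:ℝ) < (M (n+1) : ℝ) := Mpos h2 hd (n+1)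
  -- partial sums
  have hpart : |rpartial M σ n - rpartial M σ' n| = 1 / (M n : ℝ) := by
    have hsum : ∀ τ : ℕ → Bool, rpartial M τ n
        = (∑ k ∈ Finset.range n, rterm M τ k) + rterm M τ n := by
      intro τ
      rw [rpartial, Finset.sum_range_succ]
    rw [hsum σ, hsum σ']
    have heqsum : (∑ k ∈ Finset.range n, rterm M σ k)
        = ∑ k ∈ Finset.range n, rterm M σ' k := by
      apply Finset.sum_congr rfl
      intro k hk
      rw [rterm, rterm, hmin k (Finset.mem_range.mp hk)]
    rw [heqsum]
    have : ∑ k ∈ Finset.range n, rterm M σ' k + rterm M σ n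
        - (∑ k ∈ Finset.range n, rterm M σ' k + rterm M σ' n)
        = rterm M σ n - rterm M σ' n := by ring
    rw [this, rterm, rterm]
    cases hs1 : σ n <;> cases hs2 : σ' n
    · simp [hs1, hs2] at hfind
    · rw [if_neg (by simp [hs1]), if_pos (by simp [hs2])]
      have he : (1:ℝ) / (M n : ℝ) - 2 / (M n : ℝ) = -(1 / (M n : ℝ)) := by ring
      rw [he, abs_neg, abs_of_pos (by positivity)]
    · rw [if_pos (by simp [hs1]), if_neg (by simp [hs2])]
      have he : (2:ℝ) / (M n : ℝ) - 1 / (M n : ℝ) = 1 / (M n : ℝ) := by ring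
      rw [he, abs_of_pos (by positivity)]
    · simp [hs1, hs2] at hfind
  have ht1 := rtail_pos h2 hd σ n
  have ht2 := rtail_pos h2 hd σ' n
  have ht3 := rtail_le h2 hd σ n
  have ht4 := rtail_le h2 hd σ' n
  have hsp1 := rho_split h2 hd σ n
  have hsp2 := rho_split h2 hd σ' n
  have hdiff : rpartial M σ n - rpartial M σ' n = rtail M σ' n - rtail M σ n := by
    have : rpartial M σ n + rtail M σ n = rpartial M σ' n + rtail M σ' n := by
      rw [← hsp1, ← hsp2, heq]
    linarith
  have habs : |rpartial M σ n - rpartial M σ' n| ≤ 4 / (M (n+1) : ℝ) := by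
    rw [hdiff, abs_le]
    constructor <;> linarith
  rw [hpart] at habs
  have hle : (M n : ℝ) ^ (n+4) ≤ (M (n+1) : ℝ) := by exact_mod_cast hbig n
  have h2' : (2:ℝ) ≤ (M n:ℝ) := by exact_mod_cast h2 n
  have hp4 : (M n:ℝ)^4 ≤ (M n:ℝ)^(n+4) := pow_le_pow_right₀ (by linarith) (by omega)
  have h3 : (2:ℝ)^3 ≤ (M n:ℝ)^3 := pow_le_pow_left₀ (by norm_num) h2' 3
  have h8 : 8 * (M n:ℝ) ≤ (M n:ℝ)^4 := by nlinarith
  rw [div_le_div_iff₀ hMn hMn1] at habs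
  nlinarith

end Rho

def IsLiouvilleSet (S : Set ℝ) : Prop :=
  (∀ ξ ∈ S, Liouville ξ) ∧
  ∃ q : ℕ → ℕ, StrictMono q ∧ (∀ n, 0 < q n) ∧
    ∀ ξ ∈ S, ∃ κ₁ κ₂ : ℝ, 0 < κ₁ ∧ 0 < κ₂ ∧ ∃ b : ℕ → ℕ,
      ∀ᶠ n in Filter.atTop, 1 ≤ b n ∧ (b n : ℝ) ≤ (q n : ℝ) ^ κ₁ ∧
        distNearestInt ((b n : ℝ) * ξ) ≤ (q n : ℝ) ^ (-(κ₂ * n))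

lemma rpow_neg_one_nat (q : ℕ) (hq : 1 ≤ q) (n : ℕ) :
    (q : ℝ) ^ (-((1:ℝ) * (n:ℝ))) = 1 / (q : ℝ) ^ n := by
  have hq0 : (0:ℝ) ≤ (q:ℝ) := by positivity
  rw [one_mul, Real.rpow_neg hq0, Real.rpow_natCast, one_div]

lemma pair_liouville_set {x ρ : ℝ} (hx : Liouville x) (hρ : Liouville ρ)
    (q b : ℕ → ℕ) (hmono : StrictMono q) (hq2 : ∀ n, 2 ≤ q n)
    (hxq : ∀ n, distNearestInt ((q n : ℝ) * x) < 1 / (q n : ℝ) ^ n)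
    (hb1 : ∀ n, 1 ≤ b n) (hbq : ∀ n, b n ≤ q n)
    (hρq : ∀ n, distNearestInt ((b n : ℝ) * ρ) ≤ 1 / (q n : ℝ) ^ n) :
    IsLiouvilleSet {x, ρ} := by
  constructor
  · intro z hz
    rcases hz with rfl | hz
    · exact hx
    · rw [Set.mem_singleton_iff] at hz; rw [hz]; exact hρ
  refine ⟨q, hmono, fun n => by have := hq2 n; omega, ?_⟩
  have key : ∀ w : ℝ, ∀ c : ℕ → ℕ, (∀ n, 1 ≤ c n) → (∀ n, c n ≤ q n) →
      (∀ n, distNearestInt ((c n : ℝ) * w) ≤ 1 / (q n : ℝ) ^ n) →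
      ∃ κ₁ κ₂ : ℝ, 0 < κ₁ ∧ 0 < κ₂ ∧ ∃ b : ℕ → ℕ,
        ∀ᶠ n in Filter.atTop, 1 ≤ b n ∧ (b n : ℝ) ≤ (q n : ℝ) ^ κ₁ ∧
          distNearestInt ((b n : ℝ) * w) ≤ (q n : ℝ) ^ (-(κ₂ * n)) := by
    intro w c hc1 hcq hcd
    refine ⟨1, 1, one_pos, one_pos, c, Filter.Eventually.of_forall fun n => ⟨hc1 n, ?_, ?_⟩⟩
    · rw [Real.rpow_one]; exact_mod_cast hcq n
    · rw [rpow_neg_one_nat (q n) (by have := hq2 n; omega) n]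
      exact hcd n
  intro z hz
  rcases hz with rfl | hz
  · exact key _ q (fun n => by have := hq2 n; omega) (fun n => le_rfl) (fun n => (hxq n).le)
  · rw [Set.mem_singleton_iff] at hz
    subst hz
    exact key _ b hb1 hbq hρq

lemma aux_bound (m q r n : ℕ) (hm : 2 ≤ m) (hq : 2 ≤ q) (hr : 2 ≤ r) :
    4 * (m : ℝ) / ((m * (m * q * r) ^ (n + 4) : ℕ) : ℝ) ≤ 1 / (q : ℝ) ^ n := by
  have hm' : (2:ℝ) ≤ (m:ℝ) := by exact_mod_cast hm
  have hq' : (2:ℝ) ≤ (q:ℝ) := by exact_mod_cast hq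
  have hr' : (2:ℝ) ≤ (r:ℝ) := by exact_mod_cast hr
  have hmr : (1:ℝ) ≤ (m:ℝ) * (r:ℝ) := by nlinarith
  have hA : (q:ℝ) ≤ (m:ℝ) * (q:ℝ) * (r:ℝ) := by
    nlinarith [mul_le_mul_of_nonneg_left hmr (show (0:ℝ) ≤ (q:ℝ) by positivity)]
  have hApos : (0:ℝ) < (m:ℝ) * (q:ℝ) * (r:ℝ) := by nlinarith
  have h1 : ((m * (m * q * r) ^ (n + 4) : ℕ) : ℝ)
      = (m:ℝ) * ((m:ℝ) * (q:ℝ) * (r:ℝ)) ^ (n+4) := by push_cast; ring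
  rw [h1]
  have h2 : 4 * (m:ℝ) / ((m:ℝ) * ((m:ℝ)*(q:ℝ)*(r:ℝ))^(n+4))
      = 4 / ((m:ℝ)*(q:ℝ)*(r:ℝ))^(n+4) := by
    have hm0 : (m:ℝ) ≠ 0 := by positivity
    have hA0 : ((m:ℝ)*(q:ℝ)*(r:ℝ))^(n+4) ≠ 0 := by positivity
    field_simp
  rw [h2]
  have h3 : (q:ℝ)^(n+4) ≤ ((m:ℝ)*(q:ℝ)*(r:ℝ))^(n+4) :=
    pow_le_pow_left₀ (by positivity) hA _
  have h4 : 4 * (q:ℝ)^n ≤ (q:ℝ)^(n+4) := by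
    have : (q:ℝ)^(n+4) = (q:ℝ)^n * (q:ℝ)^4 := by ring
    rw [this]
    have h16 : (2:ℝ)^4 ≤ (q:ℝ)^4 := pow_le_pow_left₀ (by norm_num) hq' 4
    have hqn : (0:ℝ) < (q:ℝ)^n := by positivity
    nlinarith
  rw [div_le_div_iff₀ (by positivity) (by positivity)]
  have hqn : (0:ℝ) < (q:ℝ)^n := by positivity
  nlinarith

lemma mk_bool_arrow : Cardinal.mk (ℕ → Bool) = Cardinal.continuum := by
  rw [← Cardinal.two_power_aleph0]
  simp [Cardinal.mk_arrow]

/-- Any two Liouville numbers admit continuum many common companions. -/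
theorem liouville_common_companions (ξ η : ℝ) (hξ : Liouville ξ) (hη : Liouville η) :
    (∃ ρ : ℝ, Liouville ρ ∧ IsLiouvilleSet {ξ, ρ} ∧ IsLiouvilleSet {η, ρ}) ∧
      Cardinal.mk {ρ : ℝ | Liouville ρ ∧ IsLiouvilleSet {ξ, ρ} ∧ IsLiouvilleSet {η, ρ}} =
        Cardinal.continuum := by
  have h2 : ∀ n, 2 ≤ lM hξ hη n := lM_two hξ hη
  have hd : ∀ n, 2 * lM hξ hη n ≤ lM hξ hη (n+1) := lM_double hξ hη
  have hdvd : ∀ k n, k ≤ n → lM hξ hη k ∣ lM hξ hη n := fun k n h => lM_dvd_of_le hξ hη h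
  have hbig : ∀ n, lM hξ hη n ^ (n+4) ≤ lM hξ hη (n+1) := lM_big hξ hη
  have hdistQ : ∀ σ : ℕ → Bool, ∀ n,
      distNearestInt ((lM hξ hη n : ℝ) * rho (lM hξ hη) σ) ≤ 1 / (lQ hξ hη n : ℝ) ^ n := by
    intro σ n
    refine (rho_dist h2 hd hdvd σ n).trans ?_
    rw [lM_succ hξ hη n]
    exact aux_bound _ _ _ n (h2 n) (lQ_two hξ hη n) (lR_two hξ hη n)
  have hdistR : ∀ σ : ℕ → Bool, ∀ n,
      distNearestInt ((lM hξ hη n : ℝ) * rho (lM hξ hη) σ) ≤ 1 / (lR hξ hη n : ℝ) ^ n := by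
    intro σ n
    refine (rho_dist h2 hd hdvd σ n).trans ?_
    rw [lM_succ hξ hη n]
    have := aux_bound (lM hξ hη n) (lR hξ hη n) (lQ hξ hη n) n (h2 n)
      (lR_two hξ hη n) (lQ_two hξ hη n)
    calc 4 * (lM hξ hη n : ℝ) /
          ((lM hξ hη n * (lM hξ hη n * lQ hξ hη n * lR hξ hη n) ^ (n + 4) : ℕ) : ℝ)
        = 4 * (lM hξ hη n : ℝ) /
          ((lM hξ hη n * (lM hξ hη n * lR hξ hη n * lQ hξ hη n) ^ (n + 4) : ℕ) : ℝ) := by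
          congr 3
          ring
      _ ≤ 1 / (lR hξ hη n : ℝ) ^ n := this
  have hmem : ∀ σ : ℕ → Bool, Liouville (rho (lM hξ hη) σ) ∧
      IsLiouvilleSet {ξ, rho (lM hξ hη) σ} ∧ IsLiouvilleSet {η, rho (lM hξ hη) σ} := by
    intro σ
    have hL : Liouville (rho (lM hξ hη) σ) := rho_liouville h2 hd hdvd hbig σ
    refine ⟨hL, ?_, ?_⟩
    · exact pair_liouville_set hξ hL (lQ hξ hη) (lM hξ hη) (lQ_mono hξ hη) (lQ_two hξ hη)
        (lQ_approx hξ hη) (fun n => by have := h2 n; omega) (lM_le_lQ hξ hη) (hdistQ σ)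
    · exact pair_liouville_set hη hL (lR hξ hη) (lM hξ hη) (lR_mono hξ hη) (lR_two hξ hη)
        (lR_approx hξ hη) (fun n => by have := h2 n; omega) (lM_le_lR hξ hη) (hdistR σ)
  constructor
  · exact ⟨rho (lM hξ hη) (fun _ => false), hmem _⟩
  · apply le_antisymm
    · exact (Cardinal.mk_subtype_le _).trans_eq Cardinal.mk_real
    · rw [← mk_bool_arrow]
      have hinj : Function.Injective (fun σ : ℕ → Bool =>
          (⟨rho (lM hξ hη) σ, hmem σ⟩ :
            {ρ : ℝ | Liouville ρ ∧ IsLiouvilleSet {ξ, ρ} ∧ IsLiouvilleSet {η, ρ}})) := by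
        intro σ σ' h
        exact rho_injective h2 hd hbig (congrArg Subtype.val h)
      exact Cardinal.mk_le_of_injective hinj
end

section
/- For 0 < τ < 1 let q^{(τ)}_n = 2^{n!·⌊n^τ⌋}. Then for any 0 < τ₁ < τ₂ < 1, the sets S_{q^{(τ₁)}} and S_{q^{(τ₂)}} are disjoint, and each is nonempty. -/
open Filter

namespace LTD

/-- The candidate Liouville-type number attached to an exponent sequence `e`. -/
noncomputable def xval (e : ℕ → ℕ) : ℝ := ∑' k, ((2:ℝ) ^ e k)⁻¹

variable {e : ℕ → ℕ}

lemma e_add_le (h1 : ∀ n, 1 ≤ e n) (hg : ∀ n, (n+2) * e n ≤ e (n+1)) (n k : ℕ) :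
    e n + k ≤ e (n + k) := by
  induction k with
  | zero => simp
  | succ k ih =>
    have h := hg (n + k)
    have h' := h1 (n + k)
    have h2 : e (n+k) + 1 ≤ e (n+k+1) := by nlinarith
    show e n + (k+1) ≤ e (n+k+1)
    omega

lemma e_le_e (h1 : ∀ n, 1 ≤ e n) (hg : ∀ n, (n+2) * e n ≤ e (n+1)) {k n : ℕ} (h : k ≤ n) :
    e k ≤ e n := by
  have := e_add_le h1 hg k (n - k)
  have hkn : k + (n - k) = n := by omega
  rw [hkn] at this; omega

lemma summable_f (h1 : ∀ n, 1 ≤ e n) (hg : ∀ n, (n+2) * e n ≤ e (n+1)) :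
    Summable (fun k => ((2:ℝ) ^ e k)⁻¹) := by
  refine Summable.of_nonneg_of_le (fun k => by positivity) (fun k => ?_)
    summable_geometric_two
  have hk : k ≤ e k := by
    have ha := e_add_le h1 hg 0 k; have := h1 0; simp only [zero_add] at ha; omega
  rw [one_div, inv_pow]
  exact inv_anti₀ (by positivity) (pow_le_pow_right₀ one_le_two hk)

lemma key (h1 : ∀ n, 1 ≤ e n) (hg : ∀ n, (n+2) * e n ≤ e (n+1)) (n : ℕ) :
    ∃ A : ℕ, 0 < (2:ℝ)^(e n) * xval e - A ∧
      (2:ℝ)^(e n) * xval e - A ≤ 2 * (2:ℝ)^(e n) * ((2:ℝ)^(e (n+1)))⁻¹ := by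
  have hs := summable_f h1 hg
  have hs' : Summable (fun k => (2:ℝ)^(e n) * ((2:ℝ) ^ e k)⁻¹) := hs.mul_left _
  have hsum : (2:ℝ)^(e n) * xval e
      = (∑ k ∈ Finset.range (n+1), (2:ℝ)^(e n) * ((2:ℝ) ^ e k)⁻¹)
        + ∑' k, (2:ℝ)^(e n) * ((2:ℝ) ^ e (k + (n+1)))⁻¹ := by
    rw [xval, ← tsum_mul_left]
    exact (Summable.sum_add_tsum_nat_add (n+1) hs').symm
  refine ⟨∑ k ∈ Finset.range (n+1), 2 ^ (e n - e k), ?_, ?_⟩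
  · have hA : ((∑ k ∈ Finset.range (n+1), 2 ^ (e n - e k) : ℕ) : ℝ)
        = ∑ k ∈ Finset.range (n+1), (2:ℝ)^(e n) * ((2:ℝ) ^ e k)⁻¹ := by
      push_cast
      refine Finset.sum_congr rfl fun k hk => ?_
      have hk' : e k ≤ e n := e_le_e h1 hg (Nat.lt_succ_iff.mp (Finset.mem_range.mp hk))
      rw [pow_sub₀ (2:ℝ) two_ne_zero hk']
    rw [hsum, hA]
    have : 0 < ∑' k, (2:ℝ)^(e n) * ((2:ℝ) ^ e (k + (n+1)))⁻¹ := by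
      refine Summable.tsum_pos ((summable_nat_add_iff (n+1)).mpr hs |>.mul_left _) (fun i => by positivity) 0 (by positivity)
    linarith
  · have hA : ((∑ k ∈ Finset.range (n+1), 2 ^ (e n - e k) : ℕ) : ℝ)
        = ∑ k ∈ Finset.range (n+1), (2:ℝ)^(e n) * ((2:ℝ) ^ e k)⁻¹ := by
      push_cast
      refine Finset.sum_congr rfl fun k hk => ?_
      have hk' : e k ≤ e n := e_le_e h1 hg (Nat.lt_succ_iff.mp (Finset.mem_range.mp hk))
      rw [pow_sub₀ (2:ℝ) two_ne_zero hk']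
    rw [hsum, hA]
    have hle : ∑' k, (2:ℝ)^(e n) * ((2:ℝ) ^ e (k + (n+1)))⁻¹
        ≤ ∑' k : ℕ, ((2:ℝ)^(e n) * ((2:ℝ) ^ e (n+1))⁻¹) * (1/2)^k := by
      refine Summable.tsum_le_tsum (fun k => ?_) ((summable_nat_add_iff (n+1)).mpr hs |>.mul_left _)
        ((summable_geometric_two).mul_left _)
      have hkk : e (n+1) + k ≤ e (k + (n+1)) := by
        have := e_add_le h1 hg (n+1) k; rwa [add_comm (n+1) k] at this
      have : (2:ℝ) ^ (e (n+1) + k) ≤ (2:ℝ) ^ e (k + (n+1)) :=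
        pow_le_pow_right₀ one_le_two hkk
      have h2 : ((2:ℝ) ^ e (k+(n+1)))⁻¹ ≤ ((2:ℝ) ^ (e (n+1) + k))⁻¹ :=
        inv_anti₀ (by positivity) this
      calc (2:ℝ)^(e n) * ((2:ℝ) ^ e (k + (n+1)))⁻¹
          ≤ (2:ℝ)^(e n) * ((2:ℝ) ^ (e (n+1) + k))⁻¹ := by
            exact mul_le_mul_of_nonneg_left h2 (by positivity)
        _ = ((2:ℝ)^(e n) * ((2:ℝ) ^ e (n+1))⁻¹) * (1/2)^k := by
            rw [pow_add]
            rw [one_div, inv_pow]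
            rw [mul_inv]
            ring
    have : ∑' k : ℕ, ((2:ℝ)^(e n) * ((2:ℝ) ^ e (n+1))⁻¹) * (1/2)^k
        = ((2:ℝ)^(e n) * ((2:ℝ) ^ e (n+1))⁻¹) * 2 := by
      rw [tsum_mul_left, tsum_geometric_two]
    linarith [hle, this.le]


lemma liouville (h1 : ∀ n, 1 ≤ e n) (hg : ∀ n, (n+2) * e n ≤ e (n+1)) :
    Liouville (xval e) := by
  intro n
  obtain ⟨A, h0, hle⟩ := key h1 hg (n+1)
  set m := n + 1 with hm
  have hB : (0:ℝ) < (2:ℝ) ^ e m := by positivity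
  refine ⟨(A:ℤ), (2:ℤ) ^ e m, ?_, ?_, ?_⟩
  · have := h1 m
    exact one_lt_pow₀ one_lt_two (by omega)
  · have hcast : (((2:ℤ) ^ e m : ℤ) : ℝ) = (2:ℝ) ^ e m := by push_cast; ring
    rw [hcast]
    intro hxe
    have hx : xval e - (A:ℝ)/(2:ℝ)^(e m)
        = ((2:ℝ)^(e m) * xval e - A)/(2:ℝ)^(e m) := by field_simp
    have : xval e - (A:ℝ)/(2:ℝ)^(e m) = 0 := by
      rw [hxe]; push_cast; ring
    rw [hx, div_eq_zero_iff] at this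
    rcases this with h | h
    · linarith
    · linarith
  · have hcast : (((2:ℤ) ^ e m : ℤ) : ℝ) = (2:ℝ) ^ e m := by push_cast; ring
    rw [hcast]
    have hx : xval e - (A:ℝ)/(2:ℝ)^(e m)
        = ((2:ℝ)^(e m) * xval e - A)/(2:ℝ)^(e m) := by field_simp
    have habs : |xval e - (A:ℝ)/(2:ℝ)^(e m)|
        = ((2:ℝ)^(e m) * xval e - A)/(2:ℝ)^(e m) := by
      rw [hx, abs_div, abs_of_pos h0, abs_of_pos hB]
    have hgm := hg m
    have h1m := h1 m
    have hexp : e m * n + 2 ≤ e (m+1) := by nlinarith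
    have hpl : (2:ℝ)^(e m * n) * 4 ≤ (2:ℝ)^(e (m+1)) := by
      have h4 : (2:ℝ) ^ (e m * n + 2) = (2:ℝ)^(e m * n) * 4 := by rw [pow_add]; norm_num
      rw [← h4]; exact pow_le_pow_right₀ one_le_two hexp
    have hKpos : (0:ℝ) < (2:ℝ)^(e m * n) := by positivity
    have hlt : 2 * ((2:ℝ) ^ e (m+1))⁻¹ < ((2:ℝ) ^ (e m * n))⁻¹ := by
      have hle2 : ((2:ℝ)^(e (m+1)))⁻¹ ≤ ((2:ℝ)^(e m * n) * 4)⁻¹ :=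
        inv_anti₀ (by positivity) hpl
      have heq : 2 * ((2:ℝ)^(e m * n) * 4)⁻¹ = ((2:ℝ)^(e m * n))⁻¹ / 2 := by
        rw [mul_inv]; ring
      have : 2 * ((2:ℝ) ^ e (m+1))⁻¹ ≤ ((2:ℝ)^(e m * n))⁻¹ / 2 := by
        rw [← heq]; linarith
      have hhalf : ((2:ℝ)^(e m * n))⁻¹ / 2 < ((2:ℝ)^(e m * n))⁻¹ := by
        have : (0:ℝ) < ((2:ℝ)^(e m * n))⁻¹ := by positivity
        linarith
      linarith
    have hfin : ((2:ℝ)^(e m) * xval e - A)/(2:ℝ)^(e m) ≤ 2 * ((2:ℝ)^(e (m+1)))⁻¹ := by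
      rw [div_le_iff₀ hB]
      calc (2:ℝ)^(e m) * xval e - A ≤ 2 * (2:ℝ)^(e m) * ((2:ℝ)^(e (m+1)))⁻¹ := hle
        _ = 2 * ((2:ℝ)^(e (m+1)))⁻¹ * (2:ℝ)^(e m) := by ring
    push_cast
    rw [habs]
    have hpow : ((2:ℝ) ^ e m) ^ n = (2:ℝ) ^ (e m * n) := (pow_mul 2 (e m) n).symm
    rw [hpow, one_div]
    linarith

lemma mem_LSet (h1 : ∀ n, 1 ≤ e n) (hg : ∀ n, (n+2) * e n ≤ e (n+1)) :
    xval e ∈ LSet (fun n => 2 ^ e n) (fun n => (n:ℝ)+1) := by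
  refine ⟨(liouville h1 hg).irrational, 1, 1/2, one_pos, by norm_num, fun n => 2 ^ e n, ?_⟩
  filter_upwards [eventually_ge_atTop 1] with n hn
  have hqcast : (((2:ℕ) ^ e n : ℕ) : ℝ) = (2:ℝ) ^ e n := by push_cast; ring
  refine ⟨Nat.one_le_two_pow, ?_, ?_⟩
  · rw [Real.rpow_one]
  · obtain ⟨A, h0, hle⟩ := key h1 hg n
    have hround : distNearestInt ((((2:ℕ) ^ e n : ℕ):ℝ) * xval e)
        ≤ |(2:ℝ)^(e n) * xval e - (A:ℝ)| := by
      have := round_le ((((2:ℕ) ^ e n : ℕ):ℝ) * xval e) (A:ℤ)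
      rw [distNearestInt]
      rw [hqcast] at this ⊢
      simpa using this
    have habs : |(2:ℝ)^(e n) * xval e - (A:ℝ)| ≤ 2 * (2:ℝ)^(e n) * ((2:ℝ)^(e (n+1)))⁻¹ := by
      rw [abs_of_pos h0]; exact hle
    have hlhs : 2 * (2:ℝ)^(e n) * ((2:ℝ)^(e (n+1)))⁻¹
        = (2:ℝ) ^ ((1:ℝ) + (e n:ℝ) - (e (n+1):ℝ)) := by
      rw [show ((1:ℝ) + (e n:ℝ) - (e (n+1):ℝ)) = 1 + ((e n:ℝ) + (-(e (n+1):ℝ))) by ring,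
        Real.rpow_add two_pos, Real.rpow_add two_pos, Real.rpow_one,
        Real.rpow_neg two_pos.le, Real.rpow_natCast, Real.rpow_natCast]
      ring
    have hrw : (((2:ℕ) ^ e n : ℕ) : ℝ) ^ (-(1/2 * ((n:ℝ)+1)))
        = (2:ℝ) ^ (((e n : ℝ)) * (-(1/2 * ((n:ℝ)+1)))) := by
      rw [hqcast, ← Real.rpow_natCast 2 (e n), ← Real.rpow_mul (by norm_num)]
    have hexp : (1:ℝ) + (e n:ℝ) - (e (n+1):ℝ) ≤ (e n:ℝ) * (-(1/2 * ((n:ℝ)+1))) := by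
      have hgR : ((n:ℝ)+2) * (e n:ℝ) ≤ (e (n+1):ℝ) := by exact_mod_cast hg n
      have h1R : (1:ℝ) ≤ (e n:ℝ) := by exact_mod_cast h1 n
      have hnR : (1:ℝ) ≤ (n:ℝ) := by exact_mod_cast hn
      nlinarith
    calc distNearestInt ((((2:ℕ) ^ e n : ℕ):ℝ) * xval e)
        ≤ |(2:ℝ)^(e n) * xval e - (A:ℝ)| := hround
      _ ≤ 2 * (2:ℝ)^(e n) * ((2:ℝ)^(e (n+1)))⁻¹ := habs
      _ = (2:ℝ) ^ ((1:ℝ) + (e n:ℝ) - (e (n+1):ℝ)) := hlhs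
      _ ≤ (2:ℝ) ^ (((e n : ℝ)) * (-(1/2 * ((n:ℝ)+1)))) :=
          (Real.rpow_le_rpow_left_iff one_lt_two).mpr hexp
      _ = (((2:ℕ) ^ e n : ℕ) : ℝ) ^ (-(1/2 * ((n:ℝ)+1))) := hrw.symm


lemma one_le_rpow_nat (τ : ℝ) (hτ : 0 ≤ τ) (n : ℕ) : (1:ℝ) ≤ ((n:ℝ)+1) ^ τ :=
  Real.one_le_rpow (by exact_mod_cast Nat.le_add_left 1 n) hτ

lemma Eτ_one_le (τ : ℝ) (hτ : 0 < τ) : ∀ n : ℕ,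
    1 ≤ (n+1).factorial * ⌊((n:ℝ)+1) ^ τ⌋₊ := by
  intro n
  have h : (1:ℝ) ≤ ((n:ℝ)+1) ^ τ := one_le_rpow_nat τ hτ.le n
  have hfl : 1 ≤ ⌊((n:ℝ)+1) ^ τ⌋₊ := Nat.le_floor (by exact_mod_cast h)
  calc 1 = 1 * 1 := by ring
    _ ≤ (n+1).factorial * ⌊((n:ℝ)+1) ^ τ⌋₊ :=
        Nat.mul_le_mul (n+1).factorial_pos hfl

lemma Eτ_growth (τ : ℝ) (hτ : 0 < τ) : ∀ n : ℕ,
    (n+2) * ((n+1).factorial * ⌊((n:ℝ)+1) ^ τ⌋₊)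
      ≤ ((n+1)+1).factorial * ⌊(((n+1:ℕ):ℝ)+1) ^ τ⌋₊ := by
  intro n
  have hcast : ((n+1:ℕ):ℝ) + 1 = ((n:ℝ)+1) + 1 := by push_cast; ring
  have hmono : ⌊((n:ℝ)+1) ^ τ⌋₊ ≤ ⌊(((n+1:ℕ):ℝ)+1) ^ τ⌋₊ := by
    rw [hcast]
    exact Nat.floor_le_floor (Real.rpow_le_rpow (by positivity) (by linarith) hτ.le)
  calc (n+2) * ((n+1).factorial * ⌊((n:ℝ)+1) ^ τ⌋₊)
      = ((n+1)+1).factorial * ⌊((n:ℝ)+1) ^ τ⌋₊ := by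
        rw [Nat.factorial_succ (n+1)]; ring
    _ ≤ ((n+1)+1).factorial * ⌊(((n+1:ℕ):ℝ)+1) ^ τ⌋₊ := Nat.mul_le_mul_left _ hmono

lemma nonempty_S (τ : ℝ) (hτ : 0 < τ) :
    (LSet (fun n => 2 ^ ((n + 1).factorial * ⌊((n : ℝ) + 1) ^ τ⌋₊))
      (fun n => (n : ℝ) + 1)).Nonempty :=
  ⟨xval (fun n => (n + 1).factorial * ⌊((n : ℝ) + 1) ^ τ⌋₊),
    mem_LSet (Eτ_one_le τ hτ) (Eτ_growth τ hτ)⟩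


lemma ev_rpow_ge (s C : ℝ) (hs : 0 < s) : ∀ᶠ n : ℕ in atTop, C ≤ ((n:ℝ)+1) ^ s := by
  have h1 : Tendsto (fun n : ℕ => (n:ℝ)+1) atTop atTop :=
    tendsto_atTop_add_const_right _ 1 tendsto_natCast_atTop_atTop
  have h2 : Tendsto (fun n : ℕ => ((n:ℝ)+1) ^ s) atTop atTop :=
    (tendsto_rpow_atTop hs).comp h1
  exact h2.eventually_ge_atTop C

lemma ev_ge (C : ℝ) : ∀ᶠ n : ℕ in atTop, C ≤ (n:ℝ)+1 := by
  have h1 : Tendsto (fun n : ℕ => (n:ℝ)+1) atTop atTop :=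
    tendsto_atTop_add_const_right _ 1 tendsto_natCast_atTop_atTop
  exact h1.eventually_ge_atTop C

lemma q_rpow (E : ℕ) (y : ℝ) : (((2:ℕ) ^ E : ℕ) : ℝ) ^ y = (2:ℝ) ^ ((E:ℝ) * y) := by
  have h : (((2:ℕ) ^ E : ℕ) : ℝ) = (2:ℝ) ^ ((E:ℝ)) := by
    push_cast; rw [Real.rpow_natCast]
  rw [h, ← Real.rpow_mul (by norm_num)]

lemma prod_quarter {B x u v : ℝ} (hB : 0 ≤ B) (hBle : B ≤ (2:ℝ)^u)
    (hD : |x| ≤ (2:ℝ)^v) (huv : u + v ≤ -2) : B * |x| ≤ 1/4 := by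
  have h1 : B * |x| ≤ (2:ℝ)^u * (2:ℝ)^v :=
    mul_le_mul hBle hD (abs_nonneg x) (Real.rpow_nonneg (by norm_num) u)
  rw [← Real.rpow_add two_pos] at h1
  have h2 : (2:ℝ)^(u+v) ≤ (2:ℝ)^(-2:ℝ) := (Real.rpow_le_rpow_left_iff one_lt_two).mpr huv
  have h3 : (2:ℝ)^(-2:ℝ) = 1/4 := by
    rw [show (-2:ℝ) = ((-2:ℤ):ℝ) by norm_num, Real.rpow_intCast]; norm_num
  exact le_trans h1 (le_of_le_of_eq h2 h3)


set_option maxHeartbeats 1000000 in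
lemma Ffacts (τ₁ τ₂ κ₁ κ₂ κ₃ κ₄ : ℝ) (ht1 : 0 < τ₁) (h12 : τ₁ < τ₂) (ht2 : τ₂ < 1)
    (hκ₁ : 0 < κ₁) (hκ₂ : 0 < κ₂) (hκ₃ : 0 < κ₃) (hκ₄ : 0 < κ₄) :
    ∀ᶠ n : ℕ in atTop,
      ((((n + 1).factorial * ⌊((n : ℝ) + 1) ^ τ₁⌋₊ : ℕ) : ℝ) * κ₁
          + (((n + 1).factorial * ⌊((n : ℝ) + 1) ^ τ₂⌋₊ : ℕ) : ℝ) * (-(κ₄ * ((n:ℝ)+1))) ≤ -2)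
      ∧ ((((n + 1).factorial * ⌊((n : ℝ) + 1) ^ τ₂⌋₊ : ℕ) : ℝ) * κ₃
          + (((n + 1).factorial * ⌊((n : ℝ) + 1) ^ τ₁⌋₊ : ℕ) : ℝ) * (-(κ₂ * ((n:ℝ)+1))) ≤ -2)
      ∧ ((((n + 1 + 1).factorial * ⌊(((n+1:ℕ) : ℝ) + 1) ^ τ₁⌋₊ : ℕ) : ℝ) * κ₁
          + (((n + 1).factorial * ⌊((n : ℝ) + 1) ^ τ₂⌋₊ : ℕ) : ℝ) * (-(κ₄ * ((n:ℝ)+1))) ≤ -2)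
      ∧ ((((n + 1).factorial * ⌊((n : ℝ) + 1) ^ τ₂⌋₊ : ℕ) : ℝ) * κ₃
          + (((n + 1 + 1).factorial * ⌊(((n+1:ℕ) : ℝ) + 1) ^ τ₁⌋₊ : ℕ) : ℝ)
              * (-(κ₂ * (((n+1:ℕ):ℝ)+1))) ≤ -2) := by
  have hτ₁1 : τ₁ ≤ 1 := by linarith
  have hτ₂0 : 0 < τ₂ := lt_trans ht1 h12
  have hs0 : 0 < 1 + τ₁ - τ₂ := by linarith
  have hw0 : 0 < τ₂ - τ₁ := by linarith
  filter_upwards [ev_ge ((κ₁+2)/κ₄), ev_ge ((κ₃+2)/κ₂), ev_rpow_ge τ₁ 2 ht1,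
    ev_rpow_ge τ₂ 2 hτ₂0, ev_rpow_ge (1+τ₁-τ₂) (2*(κ₃+2)/κ₂) hs0,
    ev_rpow_ge (τ₂-τ₁) (2*(4*κ₁+2)/κ₄) hw0] with n hy1 hy2 hyt1 hyt2 hys hyw
  have hz : ((n+1:ℕ):ℝ) + 1 = ((n:ℝ)+1) + 1 := by push_cast; ring
  rw [hz]
  set y : ℝ := (n:ℝ)+1 with hydef
  have hypos : (0:ℝ) < y := by positivity
  have hyone : (1:ℝ) ≤ y := by
    have : (0:ℝ) ≤ (n:ℝ) := Nat.cast_nonneg n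
    simp only [hydef]; linarith
  clear_value y
  have hF' : (((n + 1 + 1).factorial : ℕ) : ℝ) = (y+1) * ((n+1).factorial : ℕ) := by
    rw [Nat.factorial_succ (n+1), hydef]; push_cast; ring
  push_cast
  have hF1 : (1:ℝ) ≤ ((n+1).factorial : ℕ) := by exact_mod_cast (n+1).factorial_pos
  set F : ℝ := (((n+1).factorial : ℕ) : ℝ) with hFdef
  set A1 : ℝ := (⌊y ^ τ₁⌋₊ : ℝ) with hA1def
  set A2 : ℝ := (⌊y ^ τ₂⌋₊ : ℝ) with hA2def
  set A1' : ℝ := (⌊(y+1) ^ τ₁⌋₊ : ℝ) with hA1'def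
  clear_value F A1 A2 A1'
  have hFpos : (0:ℝ) < F := by linarith
  have hA1le : A1 ≤ y^τ₁ := by
    rw [hA1def]; exact Nat.floor_le (Real.rpow_nonneg hypos.le _)
  have hA2le : A2 ≤ y^τ₂ := by
    rw [hA2def]; exact Nat.floor_le (Real.rpow_nonneg hypos.le _)
  have hA1ge : y^τ₁/2 ≤ A1 := by
    have := Nat.sub_one_lt_floor (y^τ₁); rw [← hA1def] at this; linarith
  have hA2ge : y^τ₂/2 ≤ A2 := by
    have := Nat.sub_one_lt_floor (y^τ₂); rw [← hA2def] at this; linarith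
  have hA1ge1 : (1:ℝ) ≤ A1 := by linarith
  have hA2ge1 : (1:ℝ) ≤ A2 := by linarith
  have hA1'nonneg : (0:ℝ) ≤ A1' := by rw [hA1'def]; positivity
  have hA1'le : A1' ≤ 2 * y^τ₁ := by
    have h1 : A1' ≤ (y+1)^τ₁ := by
      rw [hA1'def]; exact Nat.floor_le (Real.rpow_nonneg (by linarith) _)
    have h2 : (y+1)^τ₁ ≤ (2*y)^τ₁ := Real.rpow_le_rpow (by linarith) (by linarith) ht1.le
    have h3 : ((2:ℝ)*y)^τ₁ = 2^τ₁ * y^τ₁ := Real.mul_rpow (by norm_num) hypos.le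
    have h4 : (2:ℝ)^τ₁ ≤ 2 := by
      have := Real.rpow_le_rpow_of_exponent_le one_le_two hτ₁1
      rwa [Real.rpow_one] at this
    have h5 : (2:ℝ)^τ₁ * y^τ₁ ≤ 2 * y^τ₁ :=
      mul_le_mul_of_nonneg_right h4 (Real.rpow_nonneg hypos.le _)
    linarith
  have hA1'ge1 : (1:ℝ) ≤ A1' := by
    have h1 : (1:ℝ) ≤ (y+1)^τ₁ := Real.one_le_rpow (by linarith) ht1.le
    have h2 : 1 ≤ ⌊(y+1)^τ₁⌋₊ := Nat.le_floor (by exact_mod_cast h1)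
    simp only [hA1'def]; exact_mod_cast h2
  have hyτ1ge1 : (1:ℝ) ≤ y^τ₁ := Real.one_le_rpow hyone ht1.le
  have hyτ2ge1 : (1:ℝ) ≤ y^τ₂ := Real.one_le_rpow hyone hτ₂0.le
  have hyτ2ley : y^τ₂ ≤ y := by
    have := Real.rpow_le_rpow_of_exponent_le hyone ht2.le
    rwa [Real.rpow_one] at this
  have hA12 : A1 ≤ A2 := by
    have h1 : y^τ₁ ≤ y^τ₂ := Real.rpow_le_rpow_of_exponent_le hyone h12.le
    have : ⌊y ^ τ₁⌋₊ ≤ ⌊y ^ τ₂⌋₊ := Nat.floor_le_floor h1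
    simp only [hA1def, hA2def]; exact_mod_cast this
  have hid1 : y * y^τ₁ = y^τ₂ * y^(1+τ₁-τ₂) := by
    calc y * y^τ₁ = y^(1:ℝ) * y^τ₁ := by rw [Real.rpow_one]
      _ = y^((1:ℝ)+τ₁) := (Real.rpow_add hypos 1 τ₁).symm
      _ = y^(τ₂ + (1+τ₁-τ₂)) := by ring_nf
      _ = y^τ₂ * y^(1+τ₁-τ₂) := Real.rpow_add hypos _ _
  have hid2 : y^τ₂ = y^τ₁ * y^(τ₂-τ₁) := by
    rw [← Real.rpow_add hypos]; ring_nf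
  rw [hF']
  have hys' : 2*(κ₃+2) ≤ y^(1+τ₁-τ₂) * κ₂ := by rw [div_le_iff₀ hκ₂] at hys; linarith
  have hyw' : 2*(4*κ₁+2) ≤ y^(τ₂-τ₁) * κ₄ := by rw [div_le_iff₀ hκ₄] at hyw; linarith
  have hκ₄y : κ₁ + 2 ≤ κ₄ * y := by
    rw [div_le_iff₀ hκ₄] at hy1; linarith
  have hκ₂y : κ₃ + 2 ≤ κ₂ * y := by
    rw [div_le_iff₀ hκ₂] at hy2; linarith
  refine ⟨?_, ?_, ?_, ?_⟩
  · -- F1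
    have p1 : 0 ≤ (κ₄*y - (κ₁+2)) * (A1 - 1) := mul_nonneg (by linarith) (by linarith)
    have s1 : κ₁ * A1 + 2 ≤ κ₄ * y * A1 := by linarith [p1]
    have s2 : κ₄ * y * A1 ≤ κ₄ * y * A2 :=
      mul_le_mul_of_nonneg_left hA12 (by positivity)
    have s3 : κ₁ * A1 + 2 ≤ κ₄ * y * A2 := le_trans s1 s2
    have s4 := mul_le_mul_of_nonneg_left s3 hFpos.le
    linarith [s4, hF1]
  · -- F2
    have u1 : κ₂ * y * (y^τ₁/2) ≤ κ₂ * y * A1 :=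
      mul_le_mul_of_nonneg_left hA1ge (by positivity)
    have u2 : κ₂ * (y * y^τ₁) = κ₂ * (y^τ₂ * y^(1+τ₁-τ₂)) := by rw [hid1]
    have u3 : y^τ₂ * (2*(κ₃+2)) ≤ y^τ₂ * (y^(1+τ₁-τ₂) * κ₂) :=
      mul_le_mul_of_nonneg_left hys' (Real.rpow_nonneg hypos.le _)
    have p5 : 0 ≤ κ₃ * (y^τ₂ - A2) := mul_nonneg hκ₃.le (by linarith)
    have u5 : κ₃ * A2 + 2 ≤ (κ₃+2) * y^τ₂ := by linarith [p5]
    have unit : κ₃ * A2 + 2 ≤ κ₂ * y * A1 := by linarith [u1, u2, u3, u5]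
    have s4 := mul_le_mul_of_nonneg_left unit hFpos.le
    linarith [s4, hF1]
  · -- F3
    have t1 : (y+1) * A1' ≤ 4 * (y * y^τ₁) := by
      have p : (y+1) * A1' ≤ (2*y) * (2*y^τ₁) :=
        mul_le_mul (by linarith) hA1'le hA1'nonneg (by positivity)
      linarith [p]
    have t2 : κ₄ * y * (y^τ₂/2) ≤ κ₄ * y * A2 :=
      mul_le_mul_of_nonneg_left hA2ge (by positivity)
    have t3 : κ₄ * y * (y^τ₂/2) = κ₄/2 * ((y * y^τ₁) * y^(τ₂-τ₁)) := by
      rw [hid2]; ring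
    have t4 : (y * y^τ₁) * (2*(4*κ₁+2)) ≤ (y * y^τ₁) * (y^(τ₂-τ₁) * κ₄) :=
      mul_le_mul_of_nonneg_left hyw' (by positivity)
    have t6 : (1:ℝ) ≤ y * y^τ₁ := by
      have p : (1:ℝ) * 1 ≤ y * y^τ₁ := mul_le_mul hyone hyτ1ge1 zero_le_one (by positivity)
      linarith [p]
    have t7 := mul_le_mul_of_nonneg_left t1 hκ₁.le
    have unit : κ₁ * ((y+1) * A1') + 2 ≤ κ₄ * y * A2 := by linarith [t1, t2, t3, t4, t6, t7]
    have s4 := mul_le_mul_of_nonneg_left unit hFpos.le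
    linarith [s4, hF1]
  · -- F4
    have hA2ley : A2 ≤ y := le_trans hA2le hyτ2ley
    have v0 : (y+1) * 1 ≤ (y+1) * A1' := mul_le_mul_of_nonneg_left hA1'ge1 (by linarith)
    have v1 : κ₂ * (y+1) * ((y+1) * 1) ≤ κ₂ * (y+1) * ((y+1) * A1') :=
      mul_le_mul_of_nonneg_left v0 (by positivity)
    have v3 : (κ₃+2) * y ≤ κ₂ * y * y := by
      have p := mul_le_mul_of_nonneg_right hκ₂y hypos.le
      linarith [p]
    have v4 : κ₃ * A2 + 2 ≤ (κ₃+2) * y := by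
      have p : 0 ≤ κ₃ * (y - A2) := mul_nonneg hκ₃.le (by linarith)
      linarith [p, hyone]
    have v2 : κ₂ * y * y ≤ κ₂ * (y+1) * ((y+1) * 1) := by
      have p2 : (0:ℝ) ≤ κ₂ * (2*y+1) := by positivity
      linarith [p2]
    have unit : κ₃ * A2 + 2 ≤ κ₂ * (y+1) * ((y+1) * A1') := by linarith [v1, v2, v3, v4]
    have s4 := mul_le_mul_of_nonneg_left unit hFpos.le
    linarith [s4, hF1]


set_option maxHeartbeats 1000000 in
lemma disjoint_S (τ₁ τ₂ : ℝ) (ht1 : 0 < τ₁) (h12 : τ₁ < τ₂) (ht2 : τ₂ < 1) :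
    LSet (fun n => 2 ^ ((n + 1).factorial * ⌊((n : ℝ) + 1) ^ τ₁⌋₊)) (fun n => (n : ℝ) + 1) ∩
      LSet (fun n => 2 ^ ((n + 1).factorial * ⌊((n : ℝ) + 1) ^ τ₂⌋₊)) (fun n => (n : ℝ) + 1)
      = ∅ := by
  rw [Set.eq_empty_iff_forall_notMem]
  rintro ξ ⟨⟨hirr, κ₁, κ₂, hκ₁, hκ₂, b, hb⟩, ⟨-, κ₃, κ₄, hκ₃, hκ₄, c, hc⟩⟩
  have hQ : ∀ᶠ n in atTop,
      ((round ((b n : ℝ) * ξ) : ℝ) / (b n : ℝ)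
          = (round ((b (n+1) : ℝ) * ξ) : ℝ) / (b (n+1) : ℝ))
        ∧ |ξ - (round ((b n : ℝ) * ξ) : ℝ) / (b n : ℝ)| ≤ (2:ℝ) ^ (-(κ₂ * ((n:ℝ)+1))) := by
    filter_upwards [hb, (tendsto_add_atTop_nat 1).eventually hb, hc,
      Ffacts τ₁ τ₂ κ₁ κ₂ κ₃ κ₄ ht1 h12 ht2 hκ₁ hκ₂ hκ₃ hκ₄] with n hbn hbn1 hcn hFf
    obtain ⟨hb1, hbu, hbd⟩ := hbn
    obtain ⟨hb1', hbu', hbd'⟩ := hbn1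
    obtain ⟨hc1, hcu, hcd⟩ := hcn
    obtain ⟨hf1, hf2, hf3, hf4⟩ := hFf
    simp only [distNearestInt] at hbd hbd' hcd
    rw [q_rpow] at hbu hbd hbu' hbd' hcu hcd
    have hb1R : (1:ℝ) ≤ (b n:ℝ) := by exact_mod_cast hb1
    have hb1R' : (1:ℝ) ≤ (b (n+1):ℝ) := by exact_mod_cast hb1'
    have hc1R : (1:ℝ) ≤ (c n:ℝ) := by exact_mod_cast hc1
    have hbpos : (0:ℝ) < (b n:ℝ) := by linarith
    have hbpos' : (0:ℝ) < (b (n+1):ℝ) := by linarith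
    have hcpos : (0:ℝ) < (c n:ℝ) := by linarith
    have hP2 : (b n:ℝ) * |(c n:ℝ)*ξ - (round ((c n:ℝ)*ξ) : ℝ)| ≤ 1/4 :=
      prod_quarter hbpos.le hbu hcd hf1
    have hP1 : (c n:ℝ) * |(b n:ℝ)*ξ - (round ((b n:ℝ)*ξ) : ℝ)| ≤ 1/4 :=
      prod_quarter hcpos.le hcu hbd hf2
    have hP3 : (b (n+1):ℝ) * |(c n:ℝ)*ξ - (round ((c n:ℝ)*ξ) : ℝ)| ≤ 1/4 :=
      prod_quarter hbpos'.le hbu' hcd hf3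
    have hP4 : (c n:ℝ) * |(b (n+1):ℝ)*ξ - (round ((b (n+1):ℝ)*ξ) : ℝ)| ≤ 1/4 :=
      prod_quarter hcpos.le hcu hbd' hf4
    have hk1 : ((c n : ℤ) * round ((b n : ℝ) * ξ) - (b n : ℤ) * round ((c n : ℝ) * ξ)) = 0 := by
      have hcast : (((c n : ℤ) * round ((b n : ℝ) * ξ) - (b n : ℤ) * round ((c n : ℝ) * ξ) : ℤ) : ℝ)
          = (b n:ℝ) * ((c n:ℝ)*ξ - (round ((c n:ℝ)*ξ) : ℝ))
            - (c n:ℝ) * ((b n:ℝ)*ξ - (round ((b n:ℝ)*ξ) : ℝ)) := by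
        push_cast; ring
      have h1 : |(((c n : ℤ) * round ((b n : ℝ) * ξ)
          - (b n : ℤ) * round ((c n : ℝ) * ξ) : ℤ) : ℝ)| < 1 := by
        rw [hcast]
        calc |(b n:ℝ) * ((c n:ℝ)*ξ - (round ((c n:ℝ)*ξ) : ℝ))
              - (c n:ℝ) * ((b n:ℝ)*ξ - (round ((b n:ℝ)*ξ) : ℝ))|
            ≤ |(b n:ℝ) * ((c n:ℝ)*ξ - (round ((c n:ℝ)*ξ) : ℝ))|
              + |(c n:ℝ) * ((b n:ℝ)*ξ - (round ((b n:ℝ)*ξ) : ℝ))| := abs_sub _ _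
          _ = (b n:ℝ) * |(c n:ℝ)*ξ - (round ((c n:ℝ)*ξ) : ℝ)|
              + (c n:ℝ) * |(b n:ℝ)*ξ - (round ((b n:ℝ)*ξ) : ℝ)| := by
              rw [abs_mul, abs_mul, abs_of_pos hbpos, abs_of_pos hcpos]
          _ ≤ 1/4 + 1/4 := add_le_add hP2 hP1
          _ < 1 := by norm_num
      rw [← Int.abs_lt_one_iff]
      exact_mod_cast h1
    have hk2 : (round ((c n : ℝ) * ξ) * (b (n+1) : ℤ)
        - (c n : ℤ) * round ((b (n+1) : ℝ) * ξ)) = 0 := by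
      have hcast : ((round ((c n : ℝ) * ξ) * (b (n+1) : ℤ)
          - (c n : ℤ) * round ((b (n+1) : ℝ) * ξ) : ℤ) : ℝ)
          = (c n:ℝ) * ((b (n+1):ℝ)*ξ - (round ((b (n+1):ℝ)*ξ) : ℝ))
            - (b (n+1):ℝ) * ((c n:ℝ)*ξ - (round ((c n:ℝ)*ξ) : ℝ)) := by
        push_cast; ring
      have h1 : |((round ((c n : ℝ) * ξ) * (b (n+1) : ℤ)
          - (c n : ℤ) * round ((b (n+1) : ℝ) * ξ) : ℤ) : ℝ)| < 1 := by
        rw [hcast]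
        calc |(c n:ℝ) * ((b (n+1):ℝ)*ξ - (round ((b (n+1):ℝ)*ξ) : ℝ))
              - (b (n+1):ℝ) * ((c n:ℝ)*ξ - (round ((c n:ℝ)*ξ) : ℝ))|
            ≤ |(c n:ℝ) * ((b (n+1):ℝ)*ξ - (round ((b (n+1):ℝ)*ξ) : ℝ))|
              + |(b (n+1):ℝ) * ((c n:ℝ)*ξ - (round ((c n:ℝ)*ξ) : ℝ))| := abs_sub _ _
          _ = (c n:ℝ) * |(b (n+1):ℝ)*ξ - (round ((b (n+1):ℝ)*ξ) : ℝ)|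
              + (b (n+1):ℝ) * |(c n:ℝ)*ξ - (round ((c n:ℝ)*ξ) : ℝ)| := by
              rw [abs_mul, abs_mul, abs_of_pos hcpos, abs_of_pos hbpos']
          _ ≤ 1/4 + 1/4 := add_le_add hP4 hP3
          _ < 1 := by norm_num
      rw [← Int.abs_lt_one_iff]
      exact_mod_cast h1
    constructor
    · have e1 : (round ((b n:ℝ)*ξ):ℝ)/(b n:ℝ) = (round ((c n:ℝ)*ξ):ℝ)/(c n:ℝ) := by
        rw [div_eq_div_iff hbpos.ne' hcpos.ne']
        have h0 := sub_eq_zero.mp hk1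
        have hR : (c n:ℝ) * (round ((b n:ℝ)*ξ):ℝ)
            = (b n:ℝ) * (round ((c n:ℝ)*ξ):ℝ) := by exact_mod_cast h0
        linarith [hR]
      have e2 : (round ((c n:ℝ)*ξ):ℝ)/(c n:ℝ)
          = (round ((b (n+1):ℝ)*ξ):ℝ)/(b (n+1):ℝ) := by
        rw [div_eq_div_iff hcpos.ne' hbpos'.ne']
        have h0 := sub_eq_zero.mp hk2
        have hR : (round ((c n:ℝ)*ξ):ℝ) * (b (n+1):ℝ)
            = (c n:ℝ) * (round ((b (n+1):ℝ)*ξ):ℝ) := by exact_mod_cast h0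
        linarith [hR]
      exact e1.trans e2
    · have hfrac : ξ - (round ((b n:ℝ)*ξ):ℝ)/(b n:ℝ)
          = ((b n:ℝ)*ξ - (round ((b n:ℝ)*ξ):ℝ))/(b n:ℝ) := by
        field_simp
      rw [hfrac, abs_div, abs_of_pos hbpos]
      have hstep : |(b n:ℝ)*ξ - (round ((b n:ℝ)*ξ):ℝ)| / (b n:ℝ)
          ≤ |(b n:ℝ)*ξ - (round ((b n:ℝ)*ξ):ℝ)| :=
        div_le_self (abs_nonneg _) hb1R
      have hE1 : (1:ℝ) ≤ (((n + 1).factorial * ⌊((n : ℝ) + 1) ^ τ₁⌋₊ : ℕ):ℝ) := by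
        exact_mod_cast Eτ_one_le τ₁ ht1 n
      have hmono : (((n + 1).factorial * ⌊((n : ℝ) + 1) ^ τ₁⌋₊ : ℕ):ℝ) * (-(κ₂ * ((n:ℝ)+1)))
          ≤ -(κ₂ * ((n:ℝ)+1)) := by
        have ht0 : (0:ℝ) ≤ κ₂ * ((n:ℝ)+1) := by positivity
        have hp := mul_le_mul_of_nonneg_right hE1 ht0
        linarith [hp]
      have hmono2 := (Real.rpow_le_rpow_left_iff (x := 2) one_lt_two).mpr hmono
      calc |(b n:ℝ)*ξ - (round ((b n:ℝ)*ξ):ℝ)| / (b n:ℝ)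
          ≤ |(b n:ℝ)*ξ - (round ((b n:ℝ)*ξ):ℝ)| := hstep
        _ ≤ (2:ℝ) ^ ((((n + 1).factorial * ⌊((n : ℝ) + 1) ^ τ₁⌋₊ : ℕ):ℝ)
              * (-(κ₂ * ((n:ℝ)+1)))) := hbd
        _ ≤ (2:ℝ) ^ (-(κ₂ * ((n:ℝ)+1))) := hmono2
  obtain ⟨N, hN⟩ := eventually_atTop.mp hQ
  have hconst : ∀ n, N ≤ n → (round ((b n : ℝ) * ξ) : ℝ) / (b n : ℝ)
      = (round ((b N : ℝ) * ξ) : ℝ) / (b N : ℝ) := by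
    intro n hn
    induction n, hn using Nat.le_induction with
    | base => rfl
    | succ k hk ih => rw [← (hN k hk).1]; exact ih
  have habs : ∀ n, N ≤ n → |ξ - (round ((b N : ℝ) * ξ) : ℝ) / (b N : ℝ)|
      ≤ (2:ℝ) ^ (-(κ₂ * ((n:ℝ)+1))) := by
    intro n hn
    rw [← hconst n hn]
    exact (hN n hn).2
  have hg0 : Tendsto (fun n : ℕ => (2:ℝ) ^ (-(κ₂ * ((n:ℝ)+1)))) atTop (nhds 0) := by
    have hr1 : (2:ℝ)^(-κ₂) < 1 :=
      Real.rpow_lt_one_of_one_lt_of_neg one_lt_two (by linarith)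
    have hr0 : (0:ℝ) ≤ (2:ℝ)^(-κ₂) := (Real.rpow_pos_of_pos two_pos _).le
    have heq : (fun n : ℕ => (2:ℝ) ^ (-(κ₂ * ((n:ℝ)+1))))
        = fun n : ℕ => ((2:ℝ)^(-κ₂))^(n+1) := by
      funext n
      rw [← Real.rpow_natCast ((2:ℝ)^(-κ₂)) (n+1),
        ← Real.rpow_mul (by norm_num : (0:ℝ) ≤ 2)]
      congr 1
      push_cast
      ring
    rw [heq]
    exact (tendsto_pow_atTop_nhds_zero_of_lt_one hr0 hr1).comp (tendsto_add_atTop_nat 1)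
  have hle0 : |ξ - (round ((b N : ℝ) * ξ) : ℝ) / (b N : ℝ)| ≤ 0 := by
    apply ge_of_tendsto hg0
    filter_upwards [eventually_ge_atTop N] with n hn
    exact habs n hn
  have hxr : ξ = (round ((b N : ℝ) * ξ) : ℝ) / (b N : ℝ) := by
    have h0 := abs_nonneg (ξ - (round ((b N : ℝ) * ξ) : ℝ) / (b N : ℝ))
    have h1 : |ξ - (round ((b N : ℝ) * ξ) : ℝ) / (b N : ℝ)| = 0 := le_antisymm hle0 h0
    have h2 := abs_eq_zero.mp h1
    linarith [h2]
  exact hirr ⟨(round ((b N : ℝ) * ξ) : ℚ) / ((b N : ℕ) : ℚ), by push_cast; linarith [hxr]⟩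

end LTD

/-- The sets S_{q^{(τ)}} are nonempty and pairwise disjoint for 0 < τ < 1. -/
theorem LSet_tau_disjoint (τ₁ τ₂ : ℝ) (h1 : 0 < τ₁) (h12 : τ₁ < τ₂) (h2 : τ₂ < 1) :
    (LSet (fun n => 2 ^ ((n + 1).factorial * ⌊((n : ℝ) + 1) ^ τ₁⌋₊))
        (fun n => (n : ℝ) + 1)).Nonempty ∧
    (LSet (fun n => 2 ^ ((n + 1).factorial * ⌊((n : ℝ) + 1) ^ τ₂⌋₊))
        (fun n => (n : ℝ) + 1)).Nonempty ∧
    LSet (fun n => 2 ^ ((n + 1).factorial * ⌊((n : ℝ) + 1) ^ τ₁⌋₊))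
        (fun n => (n : ℝ) + 1) ∩
      LSet (fun n => 2 ^ ((n + 1).factorial * ⌊((n : ℝ) + 1) ^ τ₂⌋₊))
        (fun n => (n : ℝ) + 1) = ∅ :=
  ⟨LTD.nonempty_S τ₁ h1, LTD.nonempty_S τ₂ (lt_trans h1 h12),
    LTD.disjoint_S τ₁ τ₂ h1 h12 h2⟩
end
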